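/- arXiv:2602.18380 — 5 statements merged into one kernel-verified Lean document; each statement's English description precedes it below -/
import Mathlib

section
/- Let G be a restricted polymatrix game with n players per side, let K = 8 and N = 2n+2, let (A,B) be the bimatrix game constructed from G, and let (x,y) be an ε-WSNE of (A,B) with 0 ≤ ε < 1/(6·K·N). Then |x_i − x_j| ≤ ε/K and |y_i − y_j| ≤ ε/K for all primary indices i, j ∈ [n] (where x_i = x_{i0} + x_{i1} and y_i = y_{i0} + y_{i1}). -/
open Finset
open scoped Classical

/-- `(x, y)` is an `ε`-well-supported Nash equilibrium of the bimatrix game with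
`nr` rows, `nc` columns and payoff matrices `A` (row player) and `B` (column player). -/
def IsWSNE (nr nc : ℕ) (A B : ℕ → ℕ → ℝ) (x y : ℕ → ℝ) (ε : ℝ) : Prop :=
  (∀ i, 0 ≤ x i) ∧ (∀ i, nr ≤ i → x i = 0) ∧ (∑ i ∈ range nr, x i = 1) ∧
  (∀ j, 0 ≤ y j) ∧ (∀ j, nc ≤ j → y j = 0) ∧ (∑ j ∈ range nc, y j = 1) ∧
  (∀ i < nr, 0 < x i → ∀ i' < nr,
    ∑ j ∈ range nc, A i j * y j ≥ ∑ j ∈ range nc, A i' j * y j - ε) ∧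
  (∀ j < nc, 0 < y j → ∀ j' < nc,
    ∑ i ∈ range nr, x i * B i j ≥ ∑ i ∈ range nr, x i * B i j' - ε)

/-- A restricted polymatrix game with `n` players on each side of a bipartite graph.
`Ap i j s t` is the payoff of left player `i` and `Bp i j s t` the payoff of
right player `j` when left player `i` plays `s ∈ {0,1}` and right player `j`
plays `t ∈ {0,1}`. -/
structure RestrictedPolymatrix (n : ℕ) where
  Ap : ℕ → ℕ → ℕ → ℕ → ℝ
  Bp : ℕ → ℕ → ℕ → ℕ → ℝ
  vals_Ap : ∀ i < n, ∀ j < n, ∀ s < 2, ∀ t < 2, Ap i j s t ∈ ({0, 1, 2} : Set ℝ)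
  vals_Bp : ∀ i < n, ∀ j < n, ∀ s < 2, ∀ t < 2, Bp i j s t ∈ ({0, 1, 2} : Set ℝ)
  diag_Ap : ∀ i < n, ∀ j < n,
    (Ap i j 0 1 = 0 ∧ Ap i j 1 0 = 0) ∨ (Ap i j 0 0 = 0 ∧ Ap i j 1 1 = 0)
  diag_Bp : ∀ i < n, ∀ j < n,
    (Bp i j 0 1 = 0 ∧ Bp i j 1 0 = 0) ∨ (Bp i j 0 0 = 0 ∧ Bp i j 1 1 = 0)
  indeg_left : ∀ i < n,
    (((range n).filter fun j => ∃ s < 2, ∃ t < 2, Ap i j s t ≠ 0).card) ≤ 2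
  indeg_right : ∀ j < n,
    (((range n).filter fun i => ∃ s < 2, ∃ t < 2, Bp i j s t ≠ 0).card) ≤ 2
  outdeg_right : ∀ j < n,
    (((range n).filter fun i => ∃ s < 2, ∃ t < 2, Ap i j s t ≠ 0).card) ≤ 2
  outdeg_left : ∀ i < n,
    (((range n).filter fun j => ∃ s < 2, ∃ t < 2, Bp i j s t ≠ 0).card) ≤ 2

/-- The index (in `[2n+2]`) corresponding to a bimatrix action `a < 3n+2`:
primary actions `(i,t)` (for `i < n`, `t ∈ {0,1}`) are encoded as `a = 2i+t`, and
the secondary action of index `i ∈ {n,…,2n+1}` is encoded as `a = n+i`. -/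
def actionIndex (n a : ℕ) : ℕ := if a < 2*n then a / 2 else a - n

/-- Row player's payoff matrix of the bimatrix game constructed from a restricted
polymatrix game (here `K = 8`, `N = 2n+2`). -/
noncomputable def consA (n : ℕ) (G : RestrictedPolymatrix n) : ℕ → ℕ → ℝ := fun a b =>
  if a < 2*n ∧ b < 2*n then G.Ap (a/2) (b/2) (a % 2) (b % 2)
  else if ((actionIndex n b : ℤ) - (actionIndex n a : ℤ)) % (2*n+2) = ((n : ℤ)+1) then
    (if 2*n ≤ a ∧ b < 2*n then 8 else 1)
  else 0

/-- Column player's payoff matrix of the constructed bimatrix game. -/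
noncomputable def consB (n : ℕ) (G : RestrictedPolymatrix n) : ℕ → ℕ → ℝ := fun a b =>
  if a < 2*n ∧ b < 2*n then G.Bp (a/2) (b/2) (a % 2) (b % 2)
  else if ((actionIndex n b : ℤ) - (actionIndex n a : ℤ)) % (2*n+2) = ((n : ℤ)+2) then
    (if a < 2*n ∧ 2*n ≤ b then 8 else 1)
  else 0

/-- Aggregated probability of index `i ∈ [2n+2]`: for a primary index `i < n` it is
the total probability of the two primary actions of index `i`; for a secondary
index `n ≤ i < 2n+2` it is the probability of the corresponding secondary action. -/
def aggProb (n : ℕ) (x : ℕ → ℝ) (i : ℕ) : ℝ :=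
  if i < n then x (2*i) + x (2*i+1) else x (n + i)

section Aux
namespace WsneAux

lemma emod_eq_iff {M c m : ℤ} (hc1 : -M < c) (hc2 : c < M)
    (hm1 : 0 ≤ m) (hm2 : m < M) : c % M = m ↔ (c = m ∨ c = m - M) := by
  have hM : 0 < M := lt_of_le_of_lt hm1 hm2
  constructor
  · intro h
    rcases le_or_gt 0 c with hc | hc
    · left; rw [← h]; exact (Int.emod_eq_of_lt hc hc2).symm
    · right
      have h3 : (c + M) % M = c % M := by
        have := Int.add_mul_emod_self_left (a := c) (b := M) (c := 1)
        simpa using this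
      have h4 : (c + M) % M = c + M :=
        Int.emod_eq_of_lt (by omega) (by omega)
      omega
  · rintro (rfl | rfl)
    · exact Int.emod_eq_of_lt hm1 hm2
    · have h3 : (m - M) % M = m % M := by
        have := Int.add_mul_emod_self_left (a := m) (b := M) (c := -1)
        simpa [sub_eq_add_neg, mul_comm] using this
      rw [h3]
      exact Int.emod_eq_of_lt hm1 hm2

lemma actionIndex_lt {n a : ℕ} (ha : a < 3*n+2) : actionIndex n a < 2*n+2 := by
  unfold actionIndex; split <;> omega

lemma consA_eq (n : ℕ) (G : RestrictedPolymatrix n) {a b : ℕ}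
    (ha : a < 3*n+2) (hb : b < 3*n+2) :
    consA n G a b =
      if a < 2*n ∧ b < 2*n then G.Ap (a/2) (b/2) (a % 2) (b % 2)
      else if actionIndex n b = actionIndex n a + (n+1) ∨
              actionIndex n a = actionIndex n b + (n+1) then
        (if 2*n ≤ a ∧ b < 2*n then 8 else 1)
      else 0 := by
  have hia := actionIndex_lt ha
  have hib := actionIndex_lt hb
  unfold consA
  by_cases h1 : a < 2*n ∧ b < 2*n
  · simp [h1]
  · rw [if_neg h1, if_neg h1]
    have hiff : (((actionIndex n b : ℤ) - (actionIndex n a : ℤ)) % (2*n+2) = ((n : ℤ)+1)) ↔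
        (actionIndex n b = actionIndex n a + (n+1) ∨
         actionIndex n a = actionIndex n b + (n+1)) := by
      rw [emod_eq_iff (by push_cast; omega) (by push_cast; omega)
        (by push_cast; omega) (by push_cast; omega)]
      constructor
      · rintro (h | h) <;> [left; right] <;> omega
      · rintro (h | h) <;> [left; right] <;> omega
    by_cases h2 : actionIndex n b = actionIndex n a + (n+1) ∨
        actionIndex n a = actionIndex n b + (n+1)
    · rw [if_pos (hiff.mpr h2), if_pos h2]
    · rw [if_neg (fun hh => h2 (hiff.mp hh)), if_neg h2]

lemma consB_eq (n : ℕ) (G : RestrictedPolymatrix n) (hn : 1 ≤ n) {a b : ℕ}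
    (ha : a < 3*n+2) (hb : b < 3*n+2) :
    consB n G a b =
      if a < 2*n ∧ b < 2*n then G.Bp (a/2) (b/2) (a % 2) (b % 2)
      else if actionIndex n b = actionIndex n a + (n+2) ∨
              actionIndex n a = actionIndex n b + n then
        (if a < 2*n ∧ 2*n ≤ b then 8 else 1)
      else 0 := by
  have hia := actionIndex_lt ha
  have hib := actionIndex_lt hb
  unfold consB
  by_cases h1 : a < 2*n ∧ b < 2*n
  · simp [h1]
  · rw [if_neg h1, if_neg h1]
    have hiff : (((actionIndex n b : ℤ) - (actionIndex n a : ℤ)) % (2*n+2) = ((n : ℤ)+2)) ↔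
        (actionIndex n b = actionIndex n a + (n+2) ∨
         actionIndex n a = actionIndex n b + n) := by
      rw [emod_eq_iff (by push_cast; omega) (by push_cast; omega)
        (by push_cast; omega) (by push_cast; omega)]
      constructor
      · rintro (h | h) <;> [left; right] <;> omega
      · rintro (h | h) <;> [left; right] <;> omega
    by_cases h2 : actionIndex n b = actionIndex n a + (n+2) ∨
        actionIndex n a = actionIndex n b + n
    · rw [if_pos (hiff.mpr h2), if_pos h2]
    · rw [if_neg (fun hh => h2 (hiff.mp hh)), if_neg h2]

lemma sum_range_double {M : Type*} [AddCommMonoid M] (f : ℕ → M) (n : ℕ) :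
    ∑ b ∈ range (2*n), f b = ∑ j ∈ range n, (f (2*j) + f (2*j+1)) := by
  induction n with
  | zero => simp
  | succ n ih =>
    rw [show 2*(n+1) = (2*n+1)+1 by ring, Finset.sum_range_succ, Finset.sum_range_succ,
      Finset.sum_range_succ, ih, add_assoc]

end WsneAux
end Aux
namespace WsneAux

noncomputable def uu (n : ℕ) (G : RestrictedPolymatrix n) (y : ℕ → ℝ) (a : ℕ) : ℝ :=
  ∑ b ∈ range (3*n+2), consA n G a b * y b

noncomputable def ww (n : ℕ) (G : RestrictedPolymatrix n) (x : ℕ → ℝ) (b : ℕ) : ℝ :=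
  ∑ a ∈ range (3*n+2), x a * consB n G a b

lemma uu_sec_mid (n : ℕ) (G : RestrictedPolymatrix n) (y : ℕ → ℝ)
    {k : ℕ} (hk : k < n) :
    uu n G y (2*n+1+k) = 8 * (y (2*k) + y (2*k+1)) := by
  have hsub : ({2*k, 2*k+1} : Finset ℕ) ⊆ range (3*n+2) := by
    intro b hb
    simp only [Finset.mem_insert, Finset.mem_singleton] at hb
    rcases hb with rfl | rfl <;> (rw [Finset.mem_range]; omega)
  have hvan : ∀ b ∈ range (3*n+2), b ∉ ({2*k, 2*k+1} : Finset ℕ) →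
      consA n G (2*n+1+k) b * y b = 0 := by
    intro b hb hnb
    have hb' : b < 3*n+2 := mem_range.mp hb
    simp only [Finset.mem_insert, Finset.mem_singleton] at hnb
    push_neg at hnb
    have : consA n G (2*n+1+k) b = 0 := by
      rw [consA_eq n G (by omega) hb', if_neg (by omega), if_neg]
      unfold actionIndex; split_ifs <;> omega
    rw [this, zero_mul]
  unfold uu
  rw [← Finset.sum_subset hsub hvan, Finset.sum_pair (by omega)]
  have e0 : consA n G (2*n+1+k) (2*k) = 8 := by
    rw [consA_eq n G (by omega) (by omega), if_neg (by omega), if_pos, if_pos (by omega)]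
    unfold actionIndex; split_ifs <;> omega
  have e1 : consA n G (2*n+1+k) (2*k+1) = 8 := by
    rw [consA_eq n G (by omega) (by omega), if_neg (by omega), if_pos, if_pos (by omega)]
    unfold actionIndex; split_ifs <;> omega
  rw [e0, e1]; ring

lemma uu_sec_n (n : ℕ) (G : RestrictedPolymatrix n) (y : ℕ → ℝ) :
    uu n G y (2*n) = y (3*n+1) := by
  unfold uu
  rw [Finset.sum_eq_single_of_mem (3*n+1) (by rw [Finset.mem_range]; omega)]
  · have : consA n G (2*n) (3*n+1) = 1 := by
      rw [consA_eq n G (by omega) (by omega), if_neg (by omega), if_pos, if_neg (by omega)]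
      unfold actionIndex; split_ifs <;> omega
    rw [this, one_mul]
  · intro b hb hne
    have hb' : b < 3*n+2 := mem_range.mp hb
    have : consA n G (2*n) b = 0 := by
      rw [consA_eq n G (by omega) hb', if_neg (by omega), if_neg]
      unfold actionIndex; split_ifs <;> omega
    rw [this, zero_mul]

lemma uu_sec_top (n : ℕ) (G : RestrictedPolymatrix n) (y : ℕ → ℝ) (hn : 1 ≤ n) :
    uu n G y (3*n+1) = y (2*n) := by
  unfold uu
  rw [Finset.sum_eq_single_of_mem (2*n) (by rw [Finset.mem_range]; omega)]
  · have : consA n G (3*n+1) (2*n) = 1 := by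
      rw [consA_eq n G (by omega) (by omega), if_neg (by omega), if_pos, if_neg (by omega)]
      unfold actionIndex; split_ifs <;> omega
    rw [this, one_mul]
  · intro b hb hne
    have hb' : b < 3*n+2 := mem_range.mp hb
    have : consA n G (3*n+1) b = 0 := by
      rw [consA_eq n G (by omega) hb', if_neg (by omega), if_neg]
      unfold actionIndex; split_ifs <;> omega
    rw [this, zero_mul]

lemma uu_prim (n : ℕ) (G : RestrictedPolymatrix n) (y : ℕ → ℝ)
    {i s : ℕ} (hi : i < n) (hs : s < 2) :
    uu n G y (2*i+s) =
      (∑ j ∈ range n, (G.Ap i j s 0 * y (2*j) + G.Ap i j s 1 * y (2*j+1)))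
      + y (2*n+1+i) := by
  unfold uu
  rw [range_eq_Ico, ← Finset.sum_Ico_consecutive _ (Nat.zero_le (2*n)) (by omega : 2*n ≤ 3*n+2)]
  congr 1
  · rw [← range_eq_Ico, sum_range_double (fun b => consA n G (2*i+s) b * y b)]
    apply Finset.sum_congr rfl
    intro j hj
    have hj' := mem_range.mp hj
    have e0 : consA n G (2*i+s) (2*j) = G.Ap i j s 0 := by
      rw [consA_eq n G (by omega) (by omega), if_pos (by omega),
        show (2*i+s)/2 = i by omega, show (2*j)/2 = j by omega,
        show (2*i+s) % 2 = s by omega, show (2*j) % 2 = 0 by omega]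
    have e1 : consA n G (2*i+s) (2*j+1) = G.Ap i j s 1 := by
      rw [consA_eq n G (by omega) (by omega), if_pos (by omega),
        show (2*i+s)/2 = i by omega, show (2*j+1)/2 = j by omega,
        show (2*i+s) % 2 = s by omega, show (2*j+1) % 2 = 1 by omega]
    rw [e0, e1]
  · rw [Finset.sum_eq_single_of_mem (2*n+1+i) (by rw [Finset.mem_Ico]; omega)]
    · have : consA n G (2*i+s) (2*n+1+i) = 1 := by
        rw [consA_eq n G (by omega) (by omega), if_neg (by omega), if_pos, if_neg (by omega)]
        unfold actionIndex; split_ifs <;> omega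
      rw [this, one_mul]
    · intro b hb hne
      have hb' : 2*n ≤ b ∧ b < 3*n+2 := by
        rw [Finset.mem_Ico] at hb; exact hb
      have : consA n G (2*i+s) b = 0 := by
        rw [consA_eq n G (by omega) (by omega), if_neg (by omega), if_neg]
        unfold actionIndex; split_ifs <;> omega
      rw [this, zero_mul]

end WsneAux
namespace WsneAux

lemma ww_sec_mid (n : ℕ) (G : RestrictedPolymatrix n) (x : ℕ → ℝ) (hn : 1 ≤ n)
    {k : ℕ} (hk : k < n) :
    ww n G x (2*n+2+k) = 8 * (x (2*k) + x (2*k+1)) := by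
  have hsub : ({2*k, 2*k+1} : Finset ℕ) ⊆ range (3*n+2) := by
    intro a ha
    simp only [Finset.mem_insert, Finset.mem_singleton] at ha
    rcases ha with rfl | rfl <;> (rw [Finset.mem_range]; omega)
  have hvan : ∀ a ∈ range (3*n+2), a ∉ ({2*k, 2*k+1} : Finset ℕ) →
      x a * consB n G a (2*n+2+k) = 0 := by
    intro a ha hna
    have ha' : a < 3*n+2 := mem_range.mp ha
    simp only [Finset.mem_insert, Finset.mem_singleton] at hna
    push_neg at hna
    have : consB n G a (2*n+2+k) = 0 := by
      rw [consB_eq n G hn ha' (by omega), if_neg (by omega), if_neg]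
      unfold actionIndex; split_ifs <;> omega
    rw [this, mul_zero]
  unfold ww
  rw [← Finset.sum_subset hsub hvan, Finset.sum_pair (by omega)]
  have e0 : consB n G (2*k) (2*n+2+k) = 8 := by
    rw [consB_eq n G hn (by omega) (by omega), if_neg (by omega), if_pos, if_pos (by omega)]
    unfold actionIndex; split_ifs <;> omega
  have e1 : consB n G (2*k+1) (2*n+2+k) = 8 := by
    rw [consB_eq n G hn (by omega) (by omega), if_neg (by omega), if_pos, if_pos (by omega)]
    unfold actionIndex; split_ifs <;> omega
  rw [e0, e1]; ring

lemma ww_sec_n (n : ℕ) (G : RestrictedPolymatrix n) (x : ℕ → ℝ) (hn : 1 ≤ n) :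
    ww n G x (2*n) = x (3*n) := by
  unfold ww
  rw [Finset.sum_eq_single_of_mem (3*n) (by rw [Finset.mem_range]; omega)]
  · have : consB n G (3*n) (2*n) = 1 := by
      rw [consB_eq n G hn (by omega) (by omega), if_neg (by omega), if_pos, if_neg (by omega)]
      unfold actionIndex; split_ifs <;> omega
    rw [this, mul_one]
  · intro a ha hne
    have ha' : a < 3*n+2 := mem_range.mp ha
    have : consB n G a (2*n) = 0 := by
      rw [consB_eq n G hn ha' (by omega), if_neg (by omega), if_neg]
      unfold actionIndex; split_ifs <;> omega
    rw [this, mul_zero]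

lemma ww_sec_n1 (n : ℕ) (G : RestrictedPolymatrix n) (x : ℕ → ℝ) (hn : 1 ≤ n) :
    ww n G x (2*n+1) = x (3*n+1) := by
  unfold ww
  rw [Finset.sum_eq_single_of_mem (3*n+1) (by rw [Finset.mem_range]; omega)]
  · have : consB n G (3*n+1) (2*n+1) = 1 := by
      rw [consB_eq n G hn (by omega) (by omega), if_neg (by omega), if_pos, if_neg (by omega)]
      unfold actionIndex; split_ifs <;> omega
    rw [this, mul_one]
  · intro a ha hne
    have ha' : a < 3*n+2 := mem_range.mp ha
    have : consB n G a (2*n+1) = 0 := by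
      rw [consB_eq n G hn ha' (by omega), if_neg (by omega), if_neg]
      unfold actionIndex; split_ifs <;> omega
    rw [this, mul_zero]

lemma ww_prim (n : ℕ) (G : RestrictedPolymatrix n) (x : ℕ → ℝ) (hn : 1 ≤ n)
    {j t : ℕ} (hj : j < n) (ht : t < 2) :
    ww n G x (2*j+t) =
      (∑ i ∈ range n, (x (2*i) * G.Bp i j 0 t + x (2*i+1) * G.Bp i j 1 t))
      + x (2*n+j) := by
  unfold ww
  rw [range_eq_Ico, ← Finset.sum_Ico_consecutive _ (Nat.zero_le (2*n)) (by omega : 2*n ≤ 3*n+2)]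
  congr 1
  · rw [← range_eq_Ico, sum_range_double (fun a => x a * consB n G a (2*j+t))]
    apply Finset.sum_congr rfl
    intro i hi
    have hi' := mem_range.mp hi
    have e0 : consB n G (2*i) (2*j+t) = G.Bp i j 0 t := by
      rw [consB_eq n G hn (by omega) (by omega), if_pos (by omega),
        show (2*j+t)/2 = j by omega, show (2*i)/2 = i by omega,
        show (2*j+t) % 2 = t by omega, show (2*i) % 2 = 0 by omega]
    have e1 : consB n G (2*i+1) (2*j+t) = G.Bp i j 1 t := by
      rw [consB_eq n G hn (by omega) (by omega), if_pos (by omega),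
        show (2*j+t)/2 = j by omega, show (2*i+1)/2 = i by omega,
        show (2*j+t) % 2 = t by omega, show (2*i+1) % 2 = 1 by omega]
    rw [e0, e1]
  · rw [Finset.sum_eq_single_of_mem (2*n+j) (by rw [Finset.mem_Ico]; omega)]
    · have : consB n G (2*n+j) (2*j+t) = 1 := by
        rw [consB_eq n G hn (by omega) (by omega), if_neg (by omega), if_pos, if_neg (by omega)]
        unfold actionIndex; split_ifs <;> omega
      rw [this, mul_one]
    · intro a ha hne
      have ha' : 2*n ≤ a ∧ a < 3*n+2 := by
        rw [Finset.mem_Ico] at ha; exact ha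
      have : consB n G a (2*j+t) = 0 := by
        rw [consB_eq n G hn (by omega) (by omega), if_neg (by omega), if_neg]
        unfold actionIndex; split_ifs <;> omega
      rw [this, mul_zero]

end WsneAux
namespace WsneAux

lemma rowSplit (n : ℕ) (f : ℕ → ℝ) :
    ∑ j ∈ range (2*n+2), f j =
      (∑ j ∈ range n, f j) + f n + (∑ k ∈ range n, f (n+1+k)) + f (2*n+1) := by
  rw [range_eq_Ico,
    ← Finset.sum_Ico_consecutive f (by omega : 0 ≤ 2*n+1) (by omega : 2*n+1 ≤ 2*n+2),
    ← Finset.sum_Ico_consecutive f (by omega : (0:ℕ) ≤ n+1) (by omega : n+1 ≤ 2*n+1),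
    ← Finset.sum_Ico_consecutive f (by omega : (0:ℕ) ≤ n) (by omega : n ≤ n+1)]
  have e1 : ∑ j ∈ Finset.Ico n (n+1), f j = f n := by
    rw [Nat.Ico_succ_singleton, Finset.sum_singleton]
  have e2 : ∑ j ∈ Finset.Ico (n+1) (2*n+1), f j = ∑ k ∈ range n, f (n+1+k) := by
    rw [Finset.sum_Ico_eq_sum_range, show 2*n+1-(n+1) = n by omega]
  have e3 : ∑ j ∈ Finset.Ico (2*n+1) (2*n+2), f j = f (2*n+1) := by
    rw [show 2*n+2 = (2*n+1)+1 by ring, Nat.Ico_succ_singleton, Finset.sum_singleton]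
  rw [e1, e2, e3, ← range_eq_Ico]

lemma colSplitA (n : ℕ) (f : ℕ → ℝ) :
    ∑ j ∈ range (2*n+2), f j =
      (∑ j ∈ range n, f j) + f n + f (n+1) + (∑ k ∈ range n, f (n+2+k)) := by
  rw [range_eq_Ico,
    ← Finset.sum_Ico_consecutive f (by omega : (0:ℕ) ≤ n+2) (by omega : n+2 ≤ 2*n+2),
    ← Finset.sum_Ico_consecutive f (by omega : (0:ℕ) ≤ n+1) (by omega : n+1 ≤ n+2),
    ← Finset.sum_Ico_consecutive f (by omega : (0:ℕ) ≤ n) (by omega : n ≤ n+1)]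
  have e1 : ∑ j ∈ Finset.Ico n (n+1), f j = f n := by
    rw [Nat.Ico_succ_singleton, Finset.sum_singleton]
  have e2 : ∑ j ∈ Finset.Ico (n+1) (n+2), f j = f (n+1) := by
    rw [show n+2 = (n+1)+1 by ring, Nat.Ico_succ_singleton, Finset.sum_singleton]
  have e3 : ∑ j ∈ Finset.Ico (n+2) (2*n+2), f j = ∑ k ∈ range n, f (n+2+k) := by
    rw [Finset.sum_Ico_eq_sum_range, show 2*n+2-(n+2) = n by omega]
  rw [e1, e2, e3, ← range_eq_Ico]

lemma colSplitB (n : ℕ) (f : ℕ → ℝ) :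
    ∑ j ∈ range (2*n+2), f j =
      (∑ j ∈ range n, f j) + (∑ k ∈ range n, f (n+k)) + f (2*n) + f (2*n+1) := by
  rw [range_eq_Ico,
    ← Finset.sum_Ico_consecutive f (by omega : 0 ≤ 2*n+1) (by omega : 2*n+1 ≤ 2*n+2),
    ← Finset.sum_Ico_consecutive f (by omega : 0 ≤ 2*n) (by omega : 2*n ≤ 2*n+1),
    ← Finset.sum_Ico_consecutive f (by omega : (0:ℕ) ≤ n) (by omega : n ≤ 2*n)]
  have e1 : ∑ j ∈ Finset.Ico n (2*n), f j = ∑ k ∈ range n, f (n+k) := by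
    rw [Finset.sum_Ico_eq_sum_range, show 2*n-n = n by omega]
  have e2 : ∑ j ∈ Finset.Ico (2*n) (2*n+1), f j = f (2*n) := by
    rw [Nat.Ico_succ_singleton, Finset.sum_singleton]
  have e3 : ∑ j ∈ Finset.Ico (2*n+1) (2*n+2), f j = f (2*n+1) := by
    rw [show 2*n+2 = (2*n+1)+1 by ring, Nat.Ico_succ_singleton, Finset.sum_singleton]
  rw [e1, e2, e3, ← range_eq_Ico]

lemma range_split (m k : ℕ) (h : m ≤ k) (f : ℕ → ℝ) :
    ∑ j ∈ range k, f j = ∑ j ∈ range m, f j + ∑ j ∈ Finset.Ico m k, f j := by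
  rw [range_eq_Ico, ← Finset.sum_Ico_consecutive f (Nat.zero_le m) h, ← range_eq_Ico]

lemma agg_sum (n : ℕ) (z : ℕ → ℝ) :
    ∑ j ∈ range (2*n+2), aggProb n z j = ∑ b ∈ range (3*n+2), z b := by
  rw [range_split n (2*n+2) (by omega) (aggProb n z),
    range_split (2*n) (3*n+2) (by omega) z]
  have h1 : ∑ j ∈ range n, aggProb n z j = ∑ j ∈ range n, (z (2*j) + z (2*j+1)) := by
    apply Finset.sum_congr rfl
    intro j hj
    unfold aggProb; rw [if_pos (mem_range.mp hj)]
  have h2 : ∑ j ∈ Finset.Ico n (2*n+2), aggProb n z j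
      = ∑ j ∈ Finset.Ico (2*n) (3*n+2), z j := by
    rw [Finset.sum_Ico_eq_sum_range, Finset.sum_Ico_eq_sum_range,
      show 2*n+2-n = n+2 by omega, show 3*n+2-2*n = n+2 by omega]
    apply Finset.sum_congr rfl
    intro k hk
    unfold aggProb
    rw [if_neg (by omega), show n+(n+k) = 2*n+k by ring]
  rw [h1, h2, sum_range_double z n]

lemma val_bounds {v : ℝ} (h : v ∈ ({0, 1, 2} : Set ℝ)) : 0 ≤ v ∧ v ≤ 2 := by
  simp only [Set.mem_insert_iff, Set.mem_singleton_iff] at h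
  rcases h with rfl | rfl | rfl <;> norm_num

lemma poly_bound_row (n : ℕ) (G : RestrictedPolymatrix n) (y : ℕ → ℝ)
    (hy0 : ∀ b, 0 ≤ y b) (U : ℝ) (hU : 0 ≤ U)
    (hU8 : ∀ j < n, 8 * (y (2*j) + y (2*j+1)) ≤ U) {i s : ℕ} (hi : i < n) (hs : s < 2) :
    ∑ j ∈ range n, (G.Ap i j s 0 * y (2*j) + G.Ap i j s 1 * y (2*j+1)) ≤ U/2 := by
  obtain ⟨S, hScard, hSmem⟩ : ∃ S : Finset ℕ, S.card ≤ 2 ∧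
      ∀ j, j ∈ S ↔ (j ∈ range n ∧ ∃ s < 2, ∃ t < 2, G.Ap i j s t ≠ 0) := by
    refine ⟨@Finset.filter ℕ (fun j => ∃ s < 2, ∃ t < 2, G.Ap i j s t ≠ 0)
        (fun j => Classical.propDecidable _) (range n), ?_, ?_⟩
    · exact G.indeg_left i hi
    · intro j
      exact @Finset.mem_filter ℕ _ (fun j => Classical.propDecidable _) _ _
  have hsub : S ⊆ range n := fun j hj => ((hSmem j).mp hj).1
  have hvan : ∀ j ∈ range n, j ∉ S →
      G.Ap i j s 0 * y (2*j) + G.Ap i j s 1 * y (2*j+1) = 0 := by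
    intro j hj hjS
    have h0 : G.Ap i j s 0 = 0 := by
      by_contra h; exact hjS ((hSmem j).mpr ⟨hj, ⟨s, hs, 0, by omega, h⟩⟩)
    have h1 : G.Ap i j s 1 = 0 := by
      by_contra h; exact hjS ((hSmem j).mpr ⟨hj, ⟨s, hs, 1, by omega, h⟩⟩)
    rw [h0, h1]; ring
  rw [← Finset.sum_subset hsub hvan]
  have hterm : ∀ j ∈ S, G.Ap i j s 0 * y (2*j) + G.Ap i j s 1 * y (2*j+1) ≤ U/4 := by
    intro j hjS
    have hj : j < n := mem_range.mp (hsub hjS)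
    have hb0 := val_bounds (G.vals_Ap i hi j hj s hs 0 (by omega))
    have hb1 := val_bounds (G.vals_Ap i hi j hj s hs 1 (by omega))
    have t0 : G.Ap i j s 0 * y (2*j) ≤ 2 * y (2*j) :=
      mul_le_mul_of_nonneg_right hb0.2 (hy0 _)
    have t1 : G.Ap i j s 1 * y (2*j+1) ≤ 2 * y (2*j+1) :=
      mul_le_mul_of_nonneg_right hb1.2 (hy0 _)
    have := hU8 j hj
    linarith
  calc ∑ j ∈ S, (G.Ap i j s 0 * y (2*j) + G.Ap i j s 1 * y (2*j+1))
      ≤ ∑ _j ∈ S, U/4 := Finset.sum_le_sum hterm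
    _ = (S.card : ℝ) * (U/4) := by rw [Finset.sum_const, nsmul_eq_mul]
    _ ≤ 2 * (U/4) := by
        have : (S.card : ℝ) ≤ 2 := by exact_mod_cast hScard
        have h4 : 0 ≤ U/4 := by linarith
        exact mul_le_mul_of_nonneg_right this h4
    _ = U/2 := by ring

lemma poly_bound_col (n : ℕ) (G : RestrictedPolymatrix n) (x : ℕ → ℝ)
    (hx0 : ∀ a, 0 ≤ x a) (W : ℝ) (hW : 0 ≤ W)
    (hW8 : ∀ i < n, 8 * (x (2*i) + x (2*i+1)) ≤ W) {j t : ℕ} (hj : j < n) (ht : t < 2) :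
    ∑ i ∈ range n, (x (2*i) * G.Bp i j 0 t + x (2*i+1) * G.Bp i j 1 t) ≤ W/2 := by
  obtain ⟨S, hScard, hSmem⟩ : ∃ S : Finset ℕ, S.card ≤ 2 ∧
      ∀ i, i ∈ S ↔ (i ∈ range n ∧ ∃ s < 2, ∃ t < 2, G.Bp i j s t ≠ 0) := by
    refine ⟨@Finset.filter ℕ (fun i => ∃ s < 2, ∃ t < 2, G.Bp i j s t ≠ 0)
        (fun i => Classical.propDecidable _) (range n), ?_, ?_⟩
    · exact G.indeg_right j hj
    · intro i
      exact @Finset.mem_filter ℕ _ (fun i => Classical.propDecidable _) _ _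
  have hsub : S ⊆ range n := fun i hi => ((hSmem i).mp hi).1
  have hvan : ∀ i ∈ range n, i ∉ S →
      x (2*i) * G.Bp i j 0 t + x (2*i+1) * G.Bp i j 1 t = 0 := by
    intro i hi hiS
    have h0 : G.Bp i j 0 t = 0 := by
      by_contra h; exact hiS ((hSmem i).mpr ⟨hi, ⟨0, by omega, t, ht, h⟩⟩)
    have h1 : G.Bp i j 1 t = 0 := by
      by_contra h; exact hiS ((hSmem i).mpr ⟨hi, ⟨1, by omega, t, ht, h⟩⟩)
    rw [h0, h1]; ring
  rw [← Finset.sum_subset hsub hvan]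
  have hterm : ∀ i ∈ S, x (2*i) * G.Bp i j 0 t + x (2*i+1) * G.Bp i j 1 t ≤ W/4 := by
    intro i hiS
    have hi : i < n := mem_range.mp (hsub hiS)
    have hb0 := val_bounds (G.vals_Bp i hi j hj 0 (by omega) t ht)
    have hb1 := val_bounds (G.vals_Bp i hi j hj 1 (by omega) t ht)
    have t0 : x (2*i) * G.Bp i j 0 t ≤ x (2*i) * 2 :=
      mul_le_mul_of_nonneg_left hb0.2 (hx0 _)
    have t1 : x (2*i+1) * G.Bp i j 1 t ≤ x (2*i+1) * 2 :=
      mul_le_mul_of_nonneg_left hb1.2 (hx0 _)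
    have := hW8 i hi
    linarith
  calc ∑ i ∈ S, (x (2*i) * G.Bp i j 0 t + x (2*i+1) * G.Bp i j 1 t)
      ≤ ∑ _i ∈ S, W/4 := Finset.sum_le_sum hterm
    _ = (S.card : ℝ) * (W/4) := by rw [Finset.sum_const, nsmul_eq_mul]
    _ ≤ 2 * (W/4) := by
        have : (S.card : ℝ) ≤ 2 := by exact_mod_cast hScard
        have h4 : 0 ≤ W/4 := by linarith
        exact mul_le_mul_of_nonneg_right this h4
    _ = W/2 := by ring

lemma poly_nonneg_row (n : ℕ) (G : RestrictedPolymatrix n) (y : ℕ → ℝ)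
    (hy0 : ∀ b, 0 ≤ y b) {i s : ℕ} (hi : i < n) (hs : s < 2) :
    0 ≤ ∑ j ∈ range n, (G.Ap i j s 0 * y (2*j) + G.Ap i j s 1 * y (2*j+1)) := by
  apply Finset.sum_nonneg
  intro j hj
  have hj' : j < n := mem_range.mp hj
  have hb0 := val_bounds (G.vals_Ap i hi j hj' s hs 0 (by omega))
  have hb1 := val_bounds (G.vals_Ap i hi j hj' s hs 1 (by omega))
  have := mul_nonneg hb0.1 (hy0 (2*j))
  have := mul_nonneg hb1.1 (hy0 (2*j+1))
  linarith

lemma poly_nonneg_col (n : ℕ) (G : RestrictedPolymatrix n) (x : ℕ → ℝ)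
    (hx0 : ∀ a, 0 ≤ x a) {j t : ℕ} (hj : j < n) (ht : t < 2) :
    0 ≤ ∑ i ∈ range n, (x (2*i) * G.Bp i j 0 t + x (2*i+1) * G.Bp i j 1 t) := by
  apply Finset.sum_nonneg
  intro i hi
  have hi' : i < n := mem_range.mp hi
  have hb0 := val_bounds (G.vals_Bp i hi' j hj 0 (by omega) t ht)
  have hb1 := val_bounds (G.vals_Bp i hi' j hj 1 (by omega) t ht)
  have := mul_nonneg (hx0 (2*i)) hb0.1
  have := mul_nonneg (hx0 (2*i+1)) hb1.1
  linarith

end WsneAux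
set_option maxHeartbeats 3000000 in
open WsneAux in
/-- The two players of the constructed bimatrix game randomize almost uniformly
over their primary indices: the aggregated probabilities of any two primary
indices differ by at most `ε/K` with `K = 8`. -/
theorem stmt1 (n : ℕ) (G : RestrictedPolymatrix n) (ε : ℝ) (x y : ℕ → ℝ)
    (hε0 : 0 ≤ ε) (hε : ε < 1 / (6 * 8 * (2 * (n:ℝ) + 2)))
    (hwsne : IsWSNE (3*n+2) (3*n+2) (consA n G) (consB n G) x y ε) :
    ∀ i < n, ∀ j < n,
      |aggProb n x i - aggProb n x j| ≤ ε / 8 ∧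
      |aggProb n y i - aggProb n y j| ≤ ε / 8 := by
  intro i0 hi0 j0 hj0
  have hn : 1 ≤ n := by omega
  obtain ⟨hx0, hxz, hxs, hy0, hyz, hys, hrow, hcol⟩ := hwsne
  have hrow' : ∀ a < 3*n+2, 0 < x a → ∀ a' < 3*n+2,
      uu n G y a ≥ uu n G y a' - ε := hrow
  have hcol' : ∀ b < 3*n+2, 0 < y b → ∀ b' < 3*n+2,
      ww n G x b ≥ ww n G x b' - ε := hcol
  have hNpos : (0:ℝ) < 2*(n:ℝ)+2 := by positivity
  -- aggProb unfolding facts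
  have hAy : ∀ j < n, aggProb n y j = y (2*j) + y (2*j+1) := by
    intro j hj; unfold aggProb; rw [if_pos hj]
  have hAyn : aggProb n y n = y (2*n) := by
    unfold aggProb; rw [if_neg (by omega), show n+n = 2*n by ring]
  have hAymid : ∀ k, aggProb n y (n+1+k) = y (2*n+1+k) := by
    intro k; unfold aggProb; rw [if_neg (by omega), show n+(n+1+k) = 2*n+1+k by ring]
  have hAytop : aggProb n y (2*n+1) = y (3*n+1) := by
    unfold aggProb; rw [if_neg (by omega), show n+(2*n+1) = 3*n+1 by ring]
  have hAx : ∀ j < n, aggProb n x j = x (2*j) + x (2*j+1) := by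
    intro j hj; unfold aggProb; rw [if_pos hj]
  have hAxmid : ∀ k, aggProb n x (n+k) = x (2*n+k) := by
    intro k; unfold aggProb; rw [if_neg (by omega), show n+(n+k) = 2*n+k by ring]
  have hAx2n : aggProb n x (2*n) = x (3*n) := by
    unfold aggProb; rw [if_neg (by omega), show n+2*n = 3*n by ring]
  have hAx2n1 : aggProb n x (2*n+1) = x (3*n+1) := by
    unfold aggProb; rw [if_neg (by omega), show n+(2*n+1) = 3*n+1 by ring]
  -- the maximal row payoff U
  obtain ⟨astar, hastar, hmaxr⟩ := Finset.exists_max_image (range (3*n+2))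
    (uu n G y) ⟨0, by rw [mem_range]; omega⟩
  set U := uu n G y astar with hUdef
  have hUmax : ∀ a < 3*n+2, uu n G y a ≤ U := fun a ha =>
    hmaxr a (mem_range.mpr ha)
  have hU8 : ∀ b < n, 8 * (y (2*b) + y (2*b+1)) ≤ U := by
    intro b hb
    rw [← uu_sec_mid n G y hb]
    exact hUmax _ (by omega)
  -- U is at least 1/(2n+2)
  have hsplitY : (1:ℝ) = (∑ j ∈ range n, (y (2*j) + y (2*j+1))) + y (2*n)
      + (∑ k ∈ range n, y (2*n+1+k)) + y (3*n+1) := by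
    have h0 : ∑ j ∈ range (2*n+2), aggProb n y j = 1 := by
      rw [agg_sum n y]; exact hys
    rw [← h0, rowSplit n (aggProb n y),
      Finset.sum_congr rfl (fun j hj => hAy j (mem_range.mp hj)), hAyn,
      Finset.sum_congr rfl (fun k _ => hAymid k), hAytop]
  have hTrow : (1:ℝ) ≤ (∑ j ∈ range n, uu n G y (2*j)) + uu n G y (2*n)
      + (∑ k ∈ range n, uu n G y (2*n+1+k)) + uu n G y (3*n+1) := by
    have p1 : ∑ j ∈ range n, (y (2*j) + y (2*j+1)) ≤ ∑ k ∈ range n, uu n G y (2*n+1+k) := by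
      apply Finset.sum_le_sum
      intro k hk
      rw [uu_sec_mid n G y (mem_range.mp hk)]
      have := hy0 (2*k); have := hy0 (2*k+1); linarith
    have p2 : y (2*n) = uu n G y (3*n+1) := (uu_sec_top n G y hn).symm
    have p3 : ∑ k ∈ range n, y (2*n+1+k) ≤ ∑ j ∈ range n, uu n G y (2*j) := by
      apply Finset.sum_le_sum
      intro j hj
      have hj' := mem_range.mp hj
      have hp := uu_prim n G y hj' (by omega : (0:ℕ) < 2)
      norm_num at hp
      rw [hp]
      have := poly_nonneg_row n G y hy0 hj' (by omega : (0:ℕ) < 2)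
      linarith
    have p4 : y (3*n+1) = uu n G y (2*n) := (uu_sec_n n G y).symm
    rw [hsplitY]
    linarith
  have hTle : (∑ j ∈ range n, uu n G y (2*j)) + uu n G y (2*n)
      + (∑ k ∈ range n, uu n G y (2*n+1+k)) + uu n G y (3*n+1)
      ≤ (2*(n:ℝ)+2) * U := by
    have e1 : ∑ j ∈ range n, uu n G y (2*j) ≤ (n:ℝ) * U := by
      calc ∑ j ∈ range n, uu n G y (2*j) ≤ ∑ _j ∈ range n, U :=
            Finset.sum_le_sum (fun j hj => hUmax (2*j) (by have := mem_range.mp hj; omega))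
        _ = (n:ℝ) * U := by rw [Finset.sum_const, Finset.card_range, nsmul_eq_mul]
    have e2 : ∑ k ∈ range n, uu n G y (2*n+1+k) ≤ (n:ℝ) * U := by
      calc ∑ k ∈ range n, uu n G y (2*n+1+k) ≤ ∑ _k ∈ range n, U :=
            Finset.sum_le_sum (fun k hk => hUmax (2*n+1+k) (by have := mem_range.mp hk; omega))
        _ = (n:ℝ) * U := by rw [Finset.sum_const, Finset.card_range, nsmul_eq_mul]
    have e3 : uu n G y (2*n) ≤ U := hUmax (2*n) (by omega)
    have e4 : uu n G y (3*n+1) ≤ U := hUmax (3*n+1) (by omega)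
    have : (n:ℝ)*U + U + (n:ℝ)*U + U = (2*(n:ℝ)+2)*U := by ring
    linarith
  have hUge : 1/(2*(n:ℝ)+2) ≤ U := by
    rw [div_le_iff₀ hNpos]
    nlinarith [le_trans hTrow hTle]
  have hUpos : (0:ℝ) < U := lt_of_lt_of_le (by positivity) hUge
  have hεhalfU : ε < U/2 := by
    have h1 : 1/(6*8*(2*(n:ℝ)+2)) ≤ 1/((2*(n:ℝ)+2)*2) := by
      apply one_div_le_one_div_of_le (by positivity)
      nlinarith [Nat.cast_nonneg (α := ℝ) n]
    have h2 : 1/((2*(n:ℝ)+2)*2) = (1/(2*(n:ℝ)+2))/2 := by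
      rw [div_div]
    linarith
  have hnotsupp : ∀ a < 3*n+2, uu n G y a < U - ε → x a = 0 := by
    intro a ha hlt
    by_contra h
    have hxa : 0 < x a := lt_of_le_of_ne (hx0 a) (Ne.symm h)
    have := hrow' a ha hxa astar (mem_range.mp hastar)
    rw [← hUdef] at this
    linarith
  -- the maximal column payoff W
  obtain ⟨bstar, hbstar, hmaxc⟩ := Finset.exists_max_image (range (3*n+2))
    (ww n G x) ⟨0, by rw [mem_range]; omega⟩
  set W := ww n G x bstar with hWdef
  have hWmax : ∀ b < 3*n+2, ww n G x b ≤ W := fun b hb =>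
    hmaxc b (mem_range.mpr hb)
  have hW8 : ∀ a < n, 8 * (x (2*a) + x (2*a+1)) ≤ W := by
    intro a ha
    rw [← ww_sec_mid n G x hn ha]
    exact hWmax _ (by omega)
  have hsplitX : (1:ℝ) = (∑ j ∈ range n, (x (2*j) + x (2*j+1)))
      + (∑ k ∈ range n, x (2*n+k)) + x (3*n) + x (3*n+1) := by
    have h0 : ∑ j ∈ range (2*n+2), aggProb n x j = 1 := by
      rw [agg_sum n x]; exact hxs
    rw [← h0, colSplitB n (aggProb n x),
      Finset.sum_congr rfl (fun j hj => hAx j (mem_range.mp hj)),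
      Finset.sum_congr rfl (fun k _ => hAxmid k), hAx2n, hAx2n1]
  have hTcol : (1:ℝ) ≤ (∑ j ∈ range n, ww n G x (2*j)) + ww n G x (2*n)
      + ww n G x (2*n+1) + (∑ k ∈ range n, ww n G x (2*n+2+k)) := by
    have p1 : ∑ j ∈ range n, (x (2*j) + x (2*j+1))
        ≤ ∑ k ∈ range n, ww n G x (2*n+2+k) := by
      apply Finset.sum_le_sum
      intro k hk
      rw [ww_sec_mid n G x hn (mem_range.mp hk)]
      have := hx0 (2*k); have := hx0 (2*k+1); linarith
    have p3 : ∑ k ∈ range n, x (2*n+k) ≤ ∑ j ∈ range n, ww n G x (2*j) := by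
      apply Finset.sum_le_sum
      intro j hj
      have hj' := mem_range.mp hj
      have hp := ww_prim n G x hn hj' (by omega : (0:ℕ) < 2)
      norm_num at hp
      rw [hp]
      have := poly_nonneg_col n G x hx0 hj' (by omega : (0:ℕ) < 2)
      linarith
    have p2 : x (3*n) = ww n G x (2*n) := (ww_sec_n n G x hn).symm
    have p4 : x (3*n+1) = ww n G x (2*n+1) := (ww_sec_n1 n G x hn).symm
    rw [hsplitX]
    linarith
  have hTcle : (∑ j ∈ range n, ww n G x (2*j)) + ww n G x (2*n)
      + ww n G x (2*n+1) + (∑ k ∈ range n, ww n G x (2*n+2+k))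
      ≤ (2*(n:ℝ)+2) * W := by
    have e1 : ∑ j ∈ range n, ww n G x (2*j) ≤ (n:ℝ) * W := by
      calc ∑ j ∈ range n, ww n G x (2*j) ≤ ∑ _j ∈ range n, W :=
            Finset.sum_le_sum (fun j hj => hWmax (2*j) (by have := mem_range.mp hj; omega))
        _ = (n:ℝ) * W := by rw [Finset.sum_const, Finset.card_range, nsmul_eq_mul]
    have e2 : ∑ k ∈ range n, ww n G x (2*n+2+k) ≤ (n:ℝ) * W := by
      calc ∑ k ∈ range n, ww n G x (2*n+2+k) ≤ ∑ _k ∈ range n, W :=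
            Finset.sum_le_sum (fun k hk => hWmax (2*n+2+k) (by have := mem_range.mp hk; omega))
        _ = (n:ℝ) * W := by rw [Finset.sum_const, Finset.card_range, nsmul_eq_mul]
    have e3 : ww n G x (2*n) ≤ W := hWmax (2*n) (by omega)
    have e4 : ww n G x (2*n+1) ≤ W := hWmax (2*n+1) (by omega)
    have : (n:ℝ)*W + W + (n:ℝ)*W + W = (2*(n:ℝ)+2)*W := by ring
    linarith
  have hWge : 1/(2*(n:ℝ)+2) ≤ W := by
    rw [div_le_iff₀ hNpos]
    nlinarith [le_trans hTcol hTcle]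
  have hWpos : (0:ℝ) < W := lt_of_lt_of_le (by positivity) hWge
  have hεhalfW : ε < W/2 := by
    have h1 : 1/(6*8*(2*(n:ℝ)+2)) ≤ 1/((2*(n:ℝ)+2)*2) := by
      apply one_div_le_one_div_of_le (by positivity)
      nlinarith [Nat.cast_nonneg (α := ℝ) n]
    have h2 : 1/((2*(n:ℝ)+2)*2) = (1/(2*(n:ℝ)+2))/2 := by
      rw [div_div]
    linarith
  have hnotsuppY : ∀ b < 3*n+2, ww n G x b < W - ε → y b = 0 := by
    intro b hb hlt
    by_contra h
    have hyb : 0 < y b := lt_of_le_of_ne (hy0 b) (Ne.symm h)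
    have := hcol' b hb hyb bstar (mem_range.mp hbstar)
    rw [← hWdef] at this
    linarith
  -- zero-propagation micro-steps
  have ha1 : ∀ k < n, y (2*k) + y (2*k+1) = 0 → x (2*n+1+k) = 0 := by
    intro k hk h0
    apply hnotsupp _ (by omega)
    rw [uu_sec_mid n G y hk, h0]
    linarith
  have ha2 : y (2*n) = 0 → x (3*n+1) = 0 := by
    intro h0
    apply hnotsupp _ (by omega)
    rw [uu_sec_top n G y hn, h0]
    linarith
  have ha4 : y (3*n+1) = 0 → x (2*n) = 0 := by
    intro h0
    apply hnotsupp _ (by omega)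
    rw [uu_sec_n n G y, h0]
    linarith
  have ha3 : ∀ i < n, y (2*n+1+i) = 0 → (x (2*i) = 0 ∧ x (2*i+1) = 0) := by
    intro i hi h0
    constructor
    · apply hnotsupp (2*i) (by omega)
      have hp := uu_prim n G y hi (by omega : (0:ℕ) < 2)
      norm_num at hp
      rw [hp, h0]
      have hpb := poly_bound_row n G y hy0 U (le_of_lt hUpos) hU8 hi (by omega : (0:ℕ) < 2)
      linarith
    · apply hnotsupp (2*i+1) (by omega)
      have hp := uu_prim n G y hi (by omega : (1:ℕ) < 2)
      rw [hp, h0]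
      have hpb := poly_bound_row n G y hy0 U (le_of_lt hUpos) hU8 hi (by omega : (1:ℕ) < 2)
      linarith
  have hb1 : ∀ i < n, x (2*i) = 0 → x (2*i+1) = 0 → y (2*n+2+i) = 0 := by
    intro i hi hz0 hz1
    apply hnotsuppY _ (by omega)
    rw [ww_sec_mid n G x hn hi, hz0, hz1]
    linarith
  have hb2 : x (3*n) = 0 → y (2*n) = 0 := by
    intro h0
    apply hnotsuppY _ (by omega)
    rw [ww_sec_n n G x hn, h0]
    linarith
  have hb3 : x (3*n+1) = 0 → y (2*n+1) = 0 := by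
    intro h0
    apply hnotsuppY _ (by omega)
    rw [ww_sec_n1 n G x hn, h0]
    linarith
  have hb4 : ∀ j < n, x (2*n+j) = 0 → (y (2*j) = 0 ∧ y (2*j+1) = 0) := by
    intro j hj h0
    constructor
    · apply hnotsuppY (2*j) (by omega)
      have hp := ww_prim n G x hn hj (by omega : (0:ℕ) < 2)
      norm_num at hp
      rw [hp, h0]
      have hpb := poly_bound_col n G x hx0 W (le_of_lt hWpos) hW8 hj (by omega : (0:ℕ) < 2)
      linarith
    · apply hnotsuppY (2*j+1) (by omega)
      have hp := ww_prim n G x hn hj (by omega : (1:ℕ) < 2)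
      rw [hp, h0]
      have hpb := poly_bound_col n G x hx0 W (le_of_lt hWpos) hW8 hj (by omega : (1:ℕ) < 2)
      linarith
  -- one step of zero propagation around the cycle
  have hstep : ∀ j < 2*n+2, aggProb n y j = 0 → aggProb n y ((j+1) % (2*n+2)) = 0 := by
    intro j hj h0
    by_cases c1 : j+1 < n
    · have hyk : y (2*j) + y (2*j+1) = 0 := by rw [← hAy j (by omega)]; exact h0
      have hx1 := ha1 j (by omega) hyk
      have hzz := hb4 (j+1) c1 (by rw [show 2*n+(j+1) = 2*n+1+j by ring]; exact hx1)
      rw [Nat.mod_eq_of_lt (by omega), hAy (j+1) c1, hzz.1, hzz.2, add_zero]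
    · by_cases c2 : j+1 = n
      · have hyk : y (2*j) + y (2*j+1) = 0 := by rw [← hAy j (by omega)]; exact h0
        have hx1 := ha1 j (by omega) hyk
        have hx3n : x (3*n) = 0 := by rw [show 3*n = 2*n+1+j by omega]; exact hx1
        have hy2n := hb2 hx3n
        rw [Nat.mod_eq_of_lt (by omega), show j+1 = n from c2, hAyn]
        exact hy2n
      · by_cases c3 : j = n
        · rw [c3] at h0 ⊢
          have hy2n : y (2*n) = 0 := by rw [← hAyn]; exact h0
          have hx1 := ha2 hy2n
          have hy1 := hb3 hx1
          rw [Nat.mod_eq_of_lt (by omega), show n+1 = n+1+0 by ring, hAymid 0,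
            show 2*n+1+0 = 2*n+1 by ring]
          exact hy1
        · by_cases c4 : j = 2*n+1
          · rw [c4] at h0 ⊢
            have hytop : y (3*n+1) = 0 := by rw [← hAytop]; exact h0
            have hx1 := ha4 hytop
            have hzz := hb4 0 hn (by rw [show 2*n+0 = 2*n by ring]; exact hx1)
            rw [show 2*n+1+1 = 2*n+2 by ring, Nat.mod_self, hAy 0 hn]
            rw [hzz.1, hzz.2, add_zero]
          · -- n+1 ≤ j ≤ 2n
            obtain ⟨i, hilt, rfl⟩ : ∃ i, i < n ∧ j = n+1+i :=
              ⟨j-(n+1), by omega, by omega⟩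
            have hy1 : y (2*n+1+i) = 0 := by rw [← hAymid i]; exact h0
            have hzz := ha3 i hilt hy1
            have hy2 := hb1 i hilt hzz.1 hzz.2
            rw [Nat.mod_eq_of_lt (by omega), show n+1+i+1 = n+1+(i+1) by ring,
              hAymid (i+1), show 2*n+1+(i+1) = 2*n+2+i by ring]
            exact hy2
  -- aggProb of y is everywhere positive
  have hYnn : ∀ j, 0 ≤ aggProb n y j := by
    intro j
    unfold aggProb
    split
    · exact add_nonneg (hy0 _) (hy0 _)
    · exact hy0 _
  have hYpos : ∀ j < 2*n+2, 0 < aggProb n y j := by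
    intro j hj
    rcases eq_or_lt_of_le (hYnn j) with h | h
    · exfalso
      have hallzero : ∀ j' < 2*n+2, aggProb n y j' = 0 := by
        have hchain : ∀ k, aggProb n y ((j + k) % (2*n+2)) = 0 := by
          intro k
          induction k with
          | zero => rw [Nat.add_zero, Nat.mod_eq_of_lt hj]; exact h.symm
          | succ k ih =>
            have hlt : (j + k) % (2*n+2) < 2*n+2 := Nat.mod_lt _ (by omega)
            have hh := hstep _ hlt ih
            rwa [Nat.mod_add_mod, show j + k + 1 = j + (k+1) by ring] at hh
        intro j' hj'
        have hh := hchain (2*n+2 - j + j')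
        rwa [show j + (2*n+2 - j + j') = (2*n+2) + j' by omega, Nat.add_mod_left,
          Nat.mod_eq_of_lt hj'] at hh
      have hzero : ∑ j' ∈ range (2*n+2), aggProb n y j' = 0 :=
        Finset.sum_eq_zero (fun j' hj' => hallzero j' (mem_range.mp hj'))
      rw [agg_sum n y, hys] at hzero
      norm_num at hzero
    · exact h
  -- positivity of relevant secondary probabilities
  have hXsec : ∀ k < n, 0 < x (2*n+1+k) := by
    intro k hk
    rcases eq_or_lt_of_le (hx0 (2*n+1+k)) with h | h
    · exfalso
      by_cases c : k+1 < n
      · have hzz := hb4 (k+1) c (by rw [show 2*n+(k+1) = 2*n+1+k by ring]; exact h.symm)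
        have hz : aggProb n y (k+1) = 0 := by
          rw [hAy (k+1) c, hzz.1, hzz.2, add_zero]
        exact absurd hz (ne_of_gt (hYpos (k+1) (by omega)))
      · have hx3n : x (3*n) = 0 := by rw [show 3*n = 2*n+1+k by omega]; exact h.symm
        have hz : aggProb n y n = 0 := by rw [hAyn]; exact hb2 hx3n
        exact absurd hz (ne_of_gt (hYpos n (by omega)))
    · exact h
  have hYsec : ∀ k < n, 0 < y (2*n+2+k) := by
    intro k hk
    have := hYpos (n+2+k) (by omega)
    rw [show n+2+k = n+1+(k+1) by ring, hAymid (k+1),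
      show 2*n+1+(k+1) = 2*n+2+k by ring] at this
    exact this
  -- near-uniformity of y
  have hYunif : ∀ a < n, ∀ b < n, aggProb n y a - aggProb n y b ≤ ε/8 := by
    intro a ha b hb
    have hxb := hXsec b hb
    have hcmp := hrow' (2*n+1+b) (by omega) hxb (2*n+1+a) (by omega)
    rw [uu_sec_mid n G y hb, uu_sec_mid n G y ha] at hcmp
    rw [hAy a ha, hAy b hb]
    linarith
  have hXunif : ∀ a < n, ∀ b < n, aggProb n x a - aggProb n x b ≤ ε/8 := by
    intro a ha b hb
    have hyb := hYsec b hb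
    have hcmp := hcol' (2*n+2+b) (by omega) hyb (2*n+2+a) (by omega)
    rw [ww_sec_mid n G x hn hb, ww_sec_mid n G x hn ha] at hcmp
    rw [hAx a ha, hAx b hb]
    linarith
  constructor
  · exact abs_sub_le_iff.mpr ⟨hXunif i0 hi0 j0 hj0, hXunif j0 hj0 i0 hi0⟩
  · exact abs_sub_le_iff.mpr ⟨hYunif i0 hi0 j0 hj0, hYunif j0 hj0 i0 hi0⟩
end

section
/- Let G be a restricted polymatrix game with n players per side, let K = 8 and N = 2n+2, let (A,B) be the bimatrix game constructed from G, and let (x,y) be an ε-WSNE of (A,B) with 0 ≤ ε < 1/(6·K·N). For i, j ∈ [n] define p_i = x_{i1}/(x_{i0} + x_{i1}) and q_j = y_{j1}/(y_{j0} + y_{j1}) (these denominators are positive). Then the profile in which left player i of G plays action 1 with probability p_i and right player j of G plays action 1 with probability q_j is a (3·K·N·ε)-WSNE of G. -/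
open Finset
open scoped Classical

/-- Expected payoff of left player `i` of the polymatrix game for playing action
`s ∈ {0,1}`, when each right player `j` plays action `1` with probability `q j`. -/
noncomputable def leftPayoff (n : ℕ) (G : RestrictedPolymatrix n) (q : ℕ → ℝ) (i s : ℕ) : ℝ :=
  ∑ j ∈ range n, ((1 - q j) * G.Ap i j s 0 + q j * G.Ap i j s 1)

/-- Expected payoff of right player `j` of the polymatrix game for playing action
`t ∈ {0,1}`, when each left player `i` plays action `1` with probability `p i`. -/
noncomputable def rightPayoff (n : ℕ) (G : RestrictedPolymatrix n) (p : ℕ → ℝ) (j t : ℕ) : ℝ :=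
  ∑ i ∈ range n, ((1 - p i) * G.Bp i j 0 t + p i * G.Bp i j 1 t)

/-- The profile in which left player `i` plays action `1` with probability `p i` and
right player `j` plays action `1` with probability `q j` is a `δ`-WSNE of the
restricted polymatrix game `G`. -/
def PolyIsWSNE (n : ℕ) (G : RestrictedPolymatrix n) (p q : ℕ → ℝ) (δ : ℝ) : Prop :=
  (∀ i < n, 0 ≤ p i ∧ p i ≤ 1) ∧ (∀ j < n, 0 ≤ q j ∧ q j ≤ 1) ∧
  (∀ i < n, (0 < p i → leftPayoff n G q i 1 ≥ leftPayoff n G q i 0 - δ) ∧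
            (p i < 1 → leftPayoff n G q i 0 ≥ leftPayoff n G q i 1 - δ)) ∧
  (∀ j < n, (0 < q j → rightPayoff n G p j 1 ≥ rightPayoff n G p j 0 - δ) ∧
            (q j < 1 → rightPayoff n G p j 0 ≥ rightPayoff n G p j 1 - δ))

section AuxLemmas

lemma sum_pair (n : ℕ) (f : ℕ → ℝ) :
    ∑ b ∈ range (2*n), f b = ∑ j ∈ range n, (f (2*j) + f (2*j+1)) := by
  induction n with
  | zero => simp
  | succ m ih =>
      rw [show 2*(m+1) = (2*m+1)+1 by ring, sum_range_succ, sum_range_succ, ih, sum_range_succ,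
        add_assoc]

lemma sum_split3 (n : ℕ) (f : ℕ → ℝ) :
    ∑ b ∈ range (3*n+2), f b = (∑ b ∈ range (2*n), f b) + ∑ k ∈ range (n+2), f (2*n+k) := by
  rw [← Finset.sum_range_add_sum_Ico f (show 2*n ≤ 3*n+2 by omega)]
  congr 1
  rw [Finset.sum_Ico_eq_sum_range, show 3*n+2-2*n = n+2 from by omega]

lemma agg_sum (n : ℕ) (x : ℕ → ℝ) :
    ∑ i ∈ range (2*n+2), aggProb n x i = ∑ a ∈ range (3*n+2), x a := by
  rw [sum_split3, ← Finset.sum_range_add_sum_Ico (aggProb n x) (show n ≤ 2*n+2 by omega)]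
  congr 1
  · rw [sum_pair]
    refine Finset.sum_congr rfl fun j hj => ?_
    simp only [mem_range] at hj
    simp [aggProb, hj]
  · rw [Finset.sum_Ico_eq_sum_range, show 2*n+2-n = n+2 from by omega]
    refine Finset.sum_congr rfl fun k hk => ?_
    simp only [aggProb, if_neg (by omega : ¬ n + k < n)]
    congr 1
    omega

lemma int_emod_shift (a M : ℤ) : (a + M) % M = a % M := by
  simpa using Int.add_mul_emod_self_left (a := a) (b := M) (c := 1)

lemma cond_eval_gen {n : ℕ} (u v r : ℕ) (hu : u < 2*n+2) (hv : v < 2*n+2) (hr : r < 2*n+2) :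
    ((u : ℤ) - (v : ℤ)) % (2*(n:ℤ)+2) = (r:ℤ) ↔ (u = v + r ∨ v + r = u + (2*n+2)) := by
  constructor
  · intro h
    rcases le_or_gt (v:ℤ) (u:ℤ) with hle | hlt
    · rw [Int.emod_eq_of_lt (by omega) (by omega)] at h
      omega
    · rw [← int_emod_shift, Int.emod_eq_of_lt (by omega) (by omega)] at h
      omega
  · intro h
    rcases h with h | h
    · rw [show ((u:ℤ) - (v:ℤ)) = (r:ℤ) by omega, Int.emod_eq_of_lt (by omega) (by omega)]
    · rw [show ((u:ℤ) - (v:ℤ)) = (r:ℤ) - (2*(n:ℤ)+2) by omega, ← int_emod_shift,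
        show ((r:ℤ) - (2*(n:ℤ)+2) + (2*(n:ℤ)+2)) = (r:ℤ) by ring,
        Int.emod_eq_of_lt (by omega) (by omega)]

lemma cond_evalA {n : ℕ} (u v : ℕ) (hu : u < 2*n+2) (hv : v < 2*n+2) :
    (((u : ℤ) - (v : ℤ)) % (2*(n:ℤ)+2) = (n:ℤ)+1) ↔ (u = v + (n+1) ∨ v + (n+1) = u + (2*n+2)) := by
  rw [show (n:ℤ)+1 = ((n+1 : ℕ) : ℤ) by push_cast; ring]
  exact cond_eval_gen u v (n+1) hu hv (by omega)

lemma cond_evalB {n : ℕ} (u v : ℕ) (hn : 1 ≤ n) (hu : u < 2*n+2) (hv : v < 2*n+2) :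
    (((u : ℤ) - (v : ℤ)) % (2*(n:ℤ)+2) = (n:ℤ)+2) ↔ (u = v + (n+2) ∨ v + (n+2) = u + (2*n+2)) := by
  rw [show (n:ℤ)+2 = ((n+2 : ℕ) : ℤ) by push_cast; ring]
  exact cond_eval_gen u v (n+2) hu hv (by omega)

noncomputable def RPay (n : ℕ) (G : RestrictedPolymatrix n) (y : ℕ → ℝ) (a : ℕ) : ℝ :=
  ∑ b ∈ range (3*n+2), consA n G a b * y b

noncomputable def CPay (n : ℕ) (G : RestrictedPolymatrix n) (x : ℕ → ℝ) (b : ℕ) : ℝ :=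
  ∑ a ∈ range (3*n+2), x a * consB n G a b

noncomputable def gA (n : ℕ) (G : RestrictedPolymatrix n) (y : ℕ → ℝ) (i s : ℕ) : ℝ :=
  ∑ j ∈ range n, (G.Ap i j s 0 * y (2*j) + G.Ap i j s 1 * y (2*j+1))

noncomputable def gB (n : ℕ) (G : RestrictedPolymatrix n) (x : ℕ → ℝ) (j t : ℕ) : ℝ :=
  ∑ i ∈ range n, (x (2*i) * G.Bp i j 0 t + x (2*i+1) * G.Bp i j 1 t)

lemma ai_prim {n a : ℕ} (h : a < 2*n) : actionIndex n a = a / 2 := if_pos h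
lemma ai_sec {n a : ℕ} (h : ¬ a < 2*n) : actionIndex n a = a - n := if_neg h

end AuxLemmas
section PayoffLemmas

lemma rp_primary (n : ℕ) (G : RestrictedPolymatrix n) (y : ℕ → ℝ) (i s : ℕ)
    (hi : i < n) (hs : s < 2) :
    RPay n G y (2*i+s) = gA n G y i s + aggProb n y (n+1+i) := by
  unfold RPay
  rw [sum_split3]
  congr 1
  · rw [sum_pair, gA]
    refine Finset.sum_congr rfl fun j hj => ?_
    simp only [mem_range] at hj
    have e1 : consA n G (2*i+s) (2*j) = G.Ap i j s 0 := by
      simp only [consA]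
      rw [if_pos (⟨by omega, by omega⟩ : 2*i+s < 2*n ∧ 2*j < 2*n),
        show (2*i+s)/2 = i from by omega, show (2*j)/2 = j from by omega,
        show (2*i+s)%2 = s from by omega, show (2*j)%2 = 0 from by omega]
    have e2 : consA n G (2*i+s) (2*j+1) = G.Ap i j s 1 := by
      simp only [consA]
      rw [if_pos (⟨by omega, by omega⟩ : 2*i+s < 2*n ∧ 2*j+1 < 2*n),
        show (2*i+s)/2 = i from by omega, show (2*j+1)/2 = j from by omega,
        show (2*i+s)%2 = s from by omega, show (2*j+1)%2 = 1 from by omega]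
    rw [e1, e2]
  · have key : ∀ k ∈ range (n+2), consA n G (2*i+s) (2*n+k) * y (2*n+k)
        = if k = i+1 then y (2*n+k) else 0 := by
      intro k hk
      simp only [mem_range] at hk
      simp only [consA]
      rw [if_neg (by omega : ¬ (2*i+s < 2*n ∧ 2*n+k < 2*n)),
        ai_sec (by omega : ¬ 2*n+k < 2*n), ai_prim (by omega : 2*i+s < 2*n),
        show 2*n+k-n = n+k from by omega, show (2*i+s)/2 = i from by omega]
      by_cases hk' : k = i+1
      · rw [if_pos ((cond_evalA (n+k) i (by omega) (by omega)).mpr (by left; omega)),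
          if_neg (by omega : ¬ (2*n ≤ 2*i+s ∧ 2*n+k < 2*n)), hk', if_pos rfl, one_mul]
      · rw [if_neg (fun hc => by
          have := (cond_evalA (n+k) i (by omega) (by omega)).mp hc; omega),
          if_neg hk', zero_mul]
    rw [Finset.sum_congr rfl key, Finset.sum_ite_eq' (range (n+2)) (i+1) (fun k => y (2*n+k)),
      if_pos (by simp only [mem_range]; omega : i+1 ∈ range (n+2))]
    simp only [aggProb, if_neg (by omega : ¬ n+1+i < n)]
    congr 1
    omega

end PayoffLemmas
section PayoffLemmas2

lemma rp_sec_mid (n : ℕ) (G : RestrictedPolymatrix n) (y : ℕ → ℝ) (j : ℕ) (hj : j < n) :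
    RPay n G y (2*n+(j+1)) = 8 * aggProb n y j := by
  unfold RPay
  rw [sum_split3]
  have h2 : ∀ k ∈ range (n+2), consA n G (2*n+(j+1)) (2*n+k) * y (2*n+k) = 0 := by
    intro k hk
    simp only [mem_range] at hk
    simp only [consA]
    rw [if_neg (by omega : ¬ (2*n+(j+1) < 2*n ∧ 2*n+k < 2*n)),
      ai_sec (by omega : ¬ 2*n+k < 2*n), ai_sec (by omega : ¬ 2*n+(j+1) < 2*n),
      show 2*n+k-n = n+k from by omega, show 2*n+(j+1)-n = n+(j+1) from by omega,
      if_neg (fun hc => by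
        have := (cond_evalA (n+k) (n+(j+1)) (by omega) (by omega)).mp hc; omega), zero_mul]
  rw [Finset.sum_eq_zero h2, add_zero, sum_pair]
  have key : ∀ j' ∈ range n, (consA n G (2*n+(j+1)) (2*j') * y (2*j')
      + consA n G (2*n+(j+1)) (2*j'+1) * y (2*j'+1))
      = if j' = j then 8 * y (2*j') + 8 * y (2*j'+1) else 0 := by
    intro j' hj'
    simp only [mem_range] at hj'
    have e1 : consA n G (2*n+(j+1)) (2*j') = if j' = j then 8 else 0 := by
      simp only [consA]
      rw [if_neg (by omega : ¬ (2*n+(j+1) < 2*n ∧ 2*j' < 2*n)),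
        ai_prim (by omega : 2*j' < 2*n), ai_sec (by omega : ¬ 2*n+(j+1) < 2*n),
        show (2*j')/2 = j' from by omega, show 2*n+(j+1)-n = n+(j+1) from by omega]
      by_cases hjj : j' = j
      · rw [if_pos ((cond_evalA j' (n+(j+1)) (by omega) (by omega)).mpr (by right; omega)),
          if_pos (by omega : 2*n ≤ 2*n+(j+1) ∧ 2*j' < 2*n), if_pos hjj]
      · rw [if_neg (fun hc => by
          have := (cond_evalA j' (n+(j+1)) (by omega) (by omega)).mp hc; omega), if_neg hjj]
    have e2 : consA n G (2*n+(j+1)) (2*j'+1) = if j' = j then 8 else 0 := by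
      simp only [consA]
      rw [if_neg (by omega : ¬ (2*n+(j+1) < 2*n ∧ 2*j'+1 < 2*n)),
        ai_prim (by omega : 2*j'+1 < 2*n), ai_sec (by omega : ¬ 2*n+(j+1) < 2*n),
        show (2*j'+1)/2 = j' from by omega, show 2*n+(j+1)-n = n+(j+1) from by omega]
      by_cases hjj : j' = j
      · rw [if_pos ((cond_evalA j' (n+(j+1)) (by omega) (by omega)).mpr (by right; omega)),
          if_pos (by omega : 2*n ≤ 2*n+(j+1) ∧ 2*j'+1 < 2*n), if_pos hjj]
      · rw [if_neg (fun hc => by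
          have := (cond_evalA j' (n+(j+1)) (by omega) (by omega)).mp hc; omega), if_neg hjj]
    rw [e1, e2]
    by_cases hjj : j' = j <;> simp [hjj]
  rw [Finset.sum_congr rfl key, Finset.sum_ite_eq' (range n) j
      (fun j' => 8 * y (2*j') + 8 * y (2*j'+1)),
    if_pos (by simp only [mem_range]; omega : j ∈ range n)]
  simp only [aggProb, if_pos hj]
  ring

lemma rp_sec_zero (n : ℕ) (G : RestrictedPolymatrix n) (y : ℕ → ℝ) :
    RPay n G y (2*n) = aggProb n y (2*n+1) := by
  unfold RPay
  rw [sum_split3]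
  have h1 : ∀ b ∈ range (2*n), consA n G (2*n) b * y b = 0 := by
    intro b hb
    simp only [mem_range] at hb
    simp only [consA]
    rw [if_neg (by omega : ¬ (2*n < 2*n ∧ b < 2*n)),
      ai_prim (by omega : b < 2*n), ai_sec (by omega : ¬ 2*n < 2*n),
      show 2*n-n = n from by omega,
      if_neg (fun hc => by
        have := (cond_evalA (b/2) n (by omega) (by omega)).mp hc; omega), zero_mul]
  rw [Finset.sum_eq_zero h1, zero_add]
  have key : ∀ k ∈ range (n+2), consA n G (2*n) (2*n+k) * y (2*n+k)
      = if k = n+1 then y (2*n+k) else 0 := by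
    intro k hk
    simp only [mem_range] at hk
    simp only [consA]
    rw [if_neg (by omega : ¬ (2*n < 2*n ∧ 2*n+k < 2*n)),
      ai_sec (by omega : ¬ 2*n+k < 2*n), ai_sec (by omega : ¬ 2*n < 2*n),
      show 2*n+k-n = n+k from by omega, show 2*n-n = n from by omega]
    by_cases hk' : k = n+1
    · rw [if_pos ((cond_evalA (n+k) n (by omega) (by omega)).mpr (by left; omega)),
        if_neg (by omega : ¬ (2*n ≤ 2*n ∧ 2*n+k < 2*n)), hk', if_pos rfl, one_mul]
    · rw [if_neg (fun hc => by
        have := (cond_evalA (n+k) n (by omega) (by omega)).mp hc; omega), if_neg hk', zero_mul]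
  rw [Finset.sum_congr rfl key, Finset.sum_ite_eq' (range (n+2)) (n+1) (fun k => y (2*n+k)),
    if_pos (by simp only [mem_range]; omega : n+1 ∈ range (n+2))]
  simp only [aggProb, if_neg (by omega : ¬ 2*n+1 < n)]
  congr 1
  omega

lemma rp_sec_top (n : ℕ) (G : RestrictedPolymatrix n) (y : ℕ → ℝ) :
    RPay n G y (2*n+(n+1)) = aggProb n y n := by
  unfold RPay
  rw [sum_split3]
  have h1 : ∀ b ∈ range (2*n), consA n G (2*n+(n+1)) b * y b = 0 := by
    intro b hb
    simp only [mem_range] at hb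
    simp only [consA]
    rw [if_neg (by omega : ¬ (2*n+(n+1) < 2*n ∧ b < 2*n)),
      ai_prim (by omega : b < 2*n), ai_sec (by omega : ¬ 2*n+(n+1) < 2*n),
      show 2*n+(n+1)-n = n+(n+1) from by omega,
      if_neg (fun hc => by
        have := (cond_evalA (b/2) (n+(n+1)) (by omega) (by omega)).mp hc; omega), zero_mul]
  rw [Finset.sum_eq_zero h1, zero_add]
  have key : ∀ k ∈ range (n+2), consA n G (2*n+(n+1)) (2*n+k) * y (2*n+k)
      = if k = 0 then y (2*n+k) else 0 := by
    intro k hk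
    simp only [mem_range] at hk
    simp only [consA]
    rw [if_neg (by omega : ¬ (2*n+(n+1) < 2*n ∧ 2*n+k < 2*n)),
      ai_sec (by omega : ¬ 2*n+k < 2*n), ai_sec (by omega : ¬ 2*n+(n+1) < 2*n),
      show 2*n+k-n = n+k from by omega, show 2*n+(n+1)-n = n+(n+1) from by omega]
    by_cases hk' : k = 0
    · rw [if_pos ((cond_evalA (n+k) (n+(n+1)) (by omega) (by omega)).mpr (by right; omega)),
        if_neg (by omega : ¬ (2*n ≤ 2*n+(n+1) ∧ 2*n+k < 2*n)), hk', if_pos rfl, one_mul]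
    · rw [if_neg (fun hc => by
        have := (cond_evalA (n+k) (n+(n+1)) (by omega) (by omega)).mp hc; omega),
        if_neg hk', zero_mul]
  rw [Finset.sum_congr rfl key, Finset.sum_ite_eq' (range (n+2)) 0 (fun k => y (2*n+k)),
    if_pos (by simp only [mem_range]; omega : 0 ∈ range (n+2))]
  simp only [aggProb, if_neg (by omega : ¬ n < n)]
  congr 1
  omega

end PayoffLemmas2
section PayoffLemmas3

lemma cp_primary (n : ℕ) (G : RestrictedPolymatrix n) (x : ℕ → ℝ) (j t : ℕ)
    (hn : 1 ≤ n) (hj : j < n) (ht : t < 2) :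
    CPay n G x (2*j+t) = gB n G x j t + aggProb n x (j+n) := by
  unfold CPay
  rw [sum_split3]
  congr 1
  · rw [sum_pair, gB]
    refine Finset.sum_congr rfl fun i hi => ?_
    simp only [mem_range] at hi
    have e1 : consB n G (2*i) (2*j+t) = G.Bp i j 0 t := by
      simp only [consB]
      rw [if_pos (⟨by omega, by omega⟩ : 2*i < 2*n ∧ 2*j+t < 2*n),
        show (2*i)/2 = i from by omega, show (2*j+t)/2 = j from by omega,
        show (2*i)%2 = 0 from by omega, show (2*j+t)%2 = t from by omega]
    have e2 : consB n G (2*i+1) (2*j+t) = G.Bp i j 1 t := by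
      simp only [consB]
      rw [if_pos (⟨by omega, by omega⟩ : 2*i+1 < 2*n ∧ 2*j+t < 2*n),
        show (2*i+1)/2 = i from by omega, show (2*j+t)/2 = j from by omega,
        show (2*i+1)%2 = 1 from by omega, show (2*j+t)%2 = t from by omega]
    rw [e1, e2]
  · have key : ∀ k ∈ range (n+2), x (2*n+k) * consB n G (2*n+k) (2*j+t)
        = if k = j then x (2*n+k) else 0 := by
      intro k hk
      simp only [mem_range] at hk
      simp only [consB]
      rw [if_neg (by omega : ¬ (2*n+k < 2*n ∧ 2*j+t < 2*n)),
        ai_sec (by omega : ¬ 2*n+k < 2*n), ai_prim (by omega : 2*j+t < 2*n),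
        show 2*n+k-n = n+k from by omega, show (2*j+t)/2 = j from by omega]
      by_cases hk' : k = j
      · rw [if_pos ((cond_evalB j (n+k) hn (by omega) (by omega)).mpr (by right; omega)),
          if_neg (by omega : ¬ (2*n+k < 2*n ∧ 2*n ≤ 2*j+t)), hk', if_pos rfl, mul_one]
      · rw [if_neg (fun hc => by
          have := (cond_evalB j (n+k) hn (by omega) (by omega)).mp hc; omega),
          if_neg hk', mul_zero]
    rw [Finset.sum_congr rfl key, Finset.sum_ite_eq' (range (n+2)) j (fun k => x (2*n+k)),
      if_pos (by simp only [mem_range]; omega : j ∈ range (n+2))]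
    simp only [aggProb, if_neg (by omega : ¬ j+n < n)]
    congr 1
    omega

lemma cp_sec_zero (n : ℕ) (G : RestrictedPolymatrix n) (x : ℕ → ℝ) (hn : 1 ≤ n) :
    CPay n G x (2*n) = aggProb n x (2*n) := by
  unfold CPay
  rw [sum_split3]
  have h1 : ∀ a ∈ range (2*n), x a * consB n G a (2*n) = 0 := by
    intro a ha
    simp only [mem_range] at ha
    simp only [consB]
    rw [if_neg (by omega : ¬ (a < 2*n ∧ 2*n < 2*n)),
      ai_prim (by omega : a < 2*n), ai_sec (by omega : ¬ 2*n < 2*n),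
      show 2*n-n = n from by omega,
      if_neg (fun hc => by
        have := (cond_evalB n (a/2) hn (by omega) (by omega)).mp hc; omega), mul_zero]
  rw [Finset.sum_eq_zero h1, zero_add]
  have key : ∀ k ∈ range (n+2), x (2*n+k) * consB n G (2*n+k) (2*n)
      = if k = n then x (2*n+k) else 0 := by
    intro k hk
    simp only [mem_range] at hk
    simp only [consB]
    rw [if_neg (by omega : ¬ (2*n+k < 2*n ∧ 2*n < 2*n)),
      ai_sec (by omega : ¬ 2*n+k < 2*n), ai_sec (by omega : ¬ 2*n < 2*n),
      show 2*n+k-n = n+k from by omega, show 2*n-n = n from by omega]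
    by_cases hk' : k = n
    · rw [if_pos ((cond_evalB n (n+k) hn (by omega) (by omega)).mpr (by right; omega)),
        if_neg (by omega : ¬ (2*n+k < 2*n ∧ 2*n ≤ 2*n)), hk', if_pos rfl, mul_one]
    · rw [if_neg (fun hc => by
        have := (cond_evalB n (n+k) hn (by omega) (by omega)).mp hc; omega),
        if_neg hk', mul_zero]
  rw [Finset.sum_congr rfl key, Finset.sum_ite_eq' (range (n+2)) n (fun k => x (2*n+k)),
    if_pos (by simp only [mem_range]; omega : n ∈ range (n+2))]
  simp only [aggProb, if_neg (by omega : ¬ 2*n < n)]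
  congr 1
  omega

lemma cp_sec_one (n : ℕ) (G : RestrictedPolymatrix n) (x : ℕ → ℝ) (hn : 1 ≤ n) :
    CPay n G x (2*n+1) = aggProb n x (2*n+1) := by
  unfold CPay
  rw [sum_split3]
  have h1 : ∀ a ∈ range (2*n), x a * consB n G a (2*n+1) = 0 := by
    intro a ha
    simp only [mem_range] at ha
    simp only [consB]
    rw [if_neg (by omega : ¬ (a < 2*n ∧ 2*n+1 < 2*n)),
      ai_prim (by omega : a < 2*n), ai_sec (by omega : ¬ 2*n+1 < 2*n),
      show 2*n+1-n = n+1 from by omega,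
      if_neg (fun hc => by
        have := (cond_evalB (n+1) (a/2) hn (by omega) (by omega)).mp hc; omega), mul_zero]
  rw [Finset.sum_eq_zero h1, zero_add]
  have key : ∀ k ∈ range (n+2), x (2*n+k) * consB n G (2*n+k) (2*n+1)
      = if k = n+1 then x (2*n+k) else 0 := by
    intro k hk
    simp only [mem_range] at hk
    simp only [consB]
    rw [if_neg (by omega : ¬ (2*n+k < 2*n ∧ 2*n+1 < 2*n)),
      ai_sec (by omega : ¬ 2*n+k < 2*n), ai_sec (by omega : ¬ 2*n+1 < 2*n),
      show 2*n+k-n = n+k from by omega, show 2*n+1-n = n+1 from by omega]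
    by_cases hk' : k = n+1
    · rw [if_pos ((cond_evalB (n+1) (n+k) hn (by omega) (by omega)).mpr (by right; omega)),
        if_neg (by omega : ¬ (2*n+k < 2*n ∧ 2*n ≤ 2*n+1)), hk', if_pos rfl, mul_one]
    · rw [if_neg (fun hc => by
        have := (cond_evalB (n+1) (n+k) hn (by omega) (by omega)).mp hc; omega),
        if_neg hk', mul_zero]
  rw [Finset.sum_congr rfl key, Finset.sum_ite_eq' (range (n+2)) (n+1) (fun k => x (2*n+k)),
    if_pos (by simp only [mem_range]; omega : n+1 ∈ range (n+2))]
  simp only [aggProb, if_neg (by omega : ¬ 2*n+1 < n)]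
  congr 1
  omega

lemma cp_sec_mid (n : ℕ) (G : RestrictedPolymatrix n) (x : ℕ → ℝ) (i : ℕ)
    (hn : 1 ≤ n) (hi : i < n) :
    CPay n G x (2*n+(i+2)) = 8 * aggProb n x i := by
  unfold CPay
  rw [sum_split3]
  have h2 : ∀ k ∈ range (n+2), x (2*n+k) * consB n G (2*n+k) (2*n+(i+2)) = 0 := by
    intro k hk
    simp only [mem_range] at hk
    simp only [consB]
    rw [if_neg (by omega : ¬ (2*n+k < 2*n ∧ 2*n+(i+2) < 2*n)),
      ai_sec (by omega : ¬ 2*n+(i+2) < 2*n), ai_sec (by omega : ¬ 2*n+k < 2*n),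
      show 2*n+(i+2)-n = n+(i+2) from by omega, show 2*n+k-n = n+k from by omega,
      if_neg (fun hc => by
        have := (cond_evalB (n+(i+2)) (n+k) hn (by omega) (by omega)).mp hc; omega), mul_zero]
  rw [Finset.sum_eq_zero h2, add_zero, sum_pair]
  have key : ∀ i' ∈ range n, (x (2*i') * consB n G (2*i') (2*n+(i+2))
      + x (2*i'+1) * consB n G (2*i'+1) (2*n+(i+2)))
      = if i' = i then x (2*i') * 8 + x (2*i'+1) * 8 else 0 := by
    intro i' hi'
    simp only [mem_range] at hi'
    have e1 : consB n G (2*i') (2*n+(i+2)) = if i' = i then 8 else 0 := by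
      simp only [consB]
      rw [if_neg (by omega : ¬ (2*i' < 2*n ∧ 2*n+(i+2) < 2*n)),
        ai_sec (by omega : ¬ 2*n+(i+2) < 2*n), ai_prim (by omega : 2*i' < 2*n),
        show 2*n+(i+2)-n = n+(i+2) from by omega, show (2*i')/2 = i' from by omega]
      by_cases hii : i' = i
      · rw [if_pos ((cond_evalB (n+(i+2)) i' hn (by omega) (by omega)).mpr (by left; omega)),
          if_pos (by omega : 2*i' < 2*n ∧ 2*n ≤ 2*n+(i+2)), if_pos hii]
      · rw [if_neg (fun hc => by
          have := (cond_evalB (n+(i+2)) i' hn (by omega) (by omega)).mp hc; omega), if_neg hii]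
    have e2 : consB n G (2*i'+1) (2*n+(i+2)) = if i' = i then 8 else 0 := by
      simp only [consB]
      rw [if_neg (by omega : ¬ (2*i'+1 < 2*n ∧ 2*n+(i+2) < 2*n)),
        ai_sec (by omega : ¬ 2*n+(i+2) < 2*n), ai_prim (by omega : 2*i'+1 < 2*n),
        show 2*n+(i+2)-n = n+(i+2) from by omega, show (2*i'+1)/2 = i' from by omega]
      by_cases hii : i' = i
      · rw [if_pos ((cond_evalB (n+(i+2)) i' hn (by omega) (by omega)).mpr (by left; omega)),
          if_pos (by omega : 2*i'+1 < 2*n ∧ 2*n ≤ 2*n+(i+2)), if_pos hii]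
      · rw [if_neg (fun hc => by
          have := (cond_evalB (n+(i+2)) i' hn (by omega) (by omega)).mp hc; omega), if_neg hii]
    rw [e1, e2]
    by_cases hii : i' = i <;> simp [hii]
  rw [Finset.sum_congr rfl key, Finset.sum_ite_eq' (range n) i
      (fun i' => x (2*i') * 8 + x (2*i'+1) * 8),
    if_pos (by simp only [mem_range]; omega : i ∈ range n)]
  simp only [aggProb, if_pos hi]
  ring

end PayoffLemmas3
section BoundLemmas

lemma mem012 {a : ℝ} (h : a ∈ ({0, 1, 2} : Set ℝ)) : 0 ≤ a ∧ a ≤ 2 := by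
  simp only [Set.mem_insert_iff, Set.mem_singleton_iff] at h
  rcases h with h | h | h <;> rw [h] <;> norm_num

lemma two_support {n : ℕ} {p : ℕ → Prop} {inst : DecidablePred p}
    (h : (@Finset.filter ℕ p inst (range n)).card ≤ 2) :
    ∃ a b, ∀ j, j < n → p j → (j = a ∨ j = b) := by
  set F := @Finset.filter ℕ p inst (range n) with hF
  have hmem : ∀ j, j < n → p j → j ∈ F := fun j hj hp =>
    (@Finset.mem_filter ℕ p inst _ j).mpr ⟨Finset.mem_range.mpr hj, hp⟩
  have h3 : F.card = 0 ∨ F.card = 1 ∨ F.card = 2 := by omega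
  rcases h3 with h3 | h3 | h3
  · refine ⟨0, 0, fun j hj hp => absurd (hmem j hj hp) ?_⟩
    rw [Finset.card_eq_zero] at h3
    simp [h3]
  · obtain ⟨a, ha⟩ := Finset.card_eq_one.mp h3
    exact ⟨a, a, fun j hj hp => by
      have hm := hmem j hj hp
      rw [ha, Finset.mem_singleton] at hm
      exact Or.inl hm⟩
  · obtain ⟨a, b, _, hab⟩ := Finset.card_eq_two.mp h3
    exact ⟨a, b, fun j hj hp => by
      have hm := hmem j hj hp
      rw [hab] at hm
      simpa using hm⟩

lemma sum_ite_pair_le (n : ℕ) (a b : ℕ) (c : ℝ) (hc : 0 ≤ c) :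
    ∑ j ∈ range n, (if j = a ∨ j = b then c else 0) ≤ 2 * c := by
  have hpt : ∀ j ∈ range n, (if j = a ∨ j = b then c else 0)
      ≤ (if j = a then c else 0) + (if j = b then c else 0) := by
    intro j _
    by_cases h1 : j = a
    · have h3 : (0:ℝ) ≤ if j = b then c else 0 := by
        by_cases h2 : j = b <;> simp [h2, hc]
      rw [if_pos (Or.inl h1), if_pos h1]
      linarith
    · by_cases h2 : j = b
      · rw [if_pos (Or.inr h2), if_neg h1, if_pos h2]
        linarith
      · rw [if_neg (by tauto), if_neg h1, if_neg h2]
        linarith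
  calc ∑ j ∈ range n, (if j = a ∨ j = b then c else 0)
      ≤ ∑ j ∈ range n, ((if j = a then c else 0) + (if j = b then c else 0)) :=
        Finset.sum_le_sum hpt
    _ = (∑ j ∈ range n, if j = a then c else 0) + (∑ j ∈ range n, if j = b then c else 0) :=
        Finset.sum_add_distrib
    _ ≤ 2 * c := by
        rw [Finset.sum_ite_eq' (range n) a (fun _ => c), Finset.sum_ite_eq' (range n) b (fun _ => c)]
        by_cases h1 : a ∈ range n <;> by_cases h2 : b ∈ range n <;>
          simp [h1, h2] <;> linarith

lemma gA_nonneg (n : ℕ) (G : RestrictedPolymatrix n) (y : ℕ → ℝ) (i s : ℕ)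
    (hi : i < n) (hs : s < 2) (hy : ∀ b, 0 ≤ y b) : 0 ≤ gA n G y i s :=
  Finset.sum_nonneg fun j hj => by
    simp only [mem_range] at hj
    exact add_nonneg
      (mul_nonneg (mem012 (G.vals_Ap i hi j hj s hs 0 (by omega))).1 (hy _))
      (mul_nonneg (mem012 (G.vals_Ap i hi j hj s hs 1 (by omega))).1 (hy _))

lemma gB_nonneg (n : ℕ) (G : RestrictedPolymatrix n) (x : ℕ → ℝ) (j t : ℕ)
    (hj : j < n) (ht : t < 2) (hx : ∀ b, 0 ≤ x b) : 0 ≤ gB n G x j t :=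
  Finset.sum_nonneg fun i hi => by
    simp only [mem_range] at hi
    exact add_nonneg
      (mul_nonneg (hx _) (mem012 (G.vals_Bp i hi j hj 0 (by omega) t ht)).1)
      (mul_nonneg (hx _) (mem012 (G.vals_Bp i hi j hj 1 (by omega) t ht)).1)

lemma gA_le (n : ℕ) (G : RestrictedPolymatrix n) (y : ℕ → ℝ) (i s : ℕ)
    (hi : i < n) (hs : s < 2) (hy : ∀ b, 0 ≤ y b) (V : ℝ) (a b : ℕ)
    (hab : ∀ j, j < n → (∃ s < 2, ∃ t < 2, G.Ap i j s t ≠ 0) → (j = a ∨ j = b))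
    (hbV : ∀ j, j < n → 8 * aggProb n y j ≤ V) (hV : 0 ≤ V) :
    gA n G y i s ≤ V/2 := by
  have hpt : ∀ j ∈ range n, G.Ap i j s 0 * y (2*j) + G.Ap i j s 1 * y (2*j+1)
      ≤ if j = a ∨ j = b then V/4 else 0 := by
    intro j hj
    simp only [mem_range] at hj
    by_cases hjab : j = a ∨ j = b
    · rw [if_pos hjab]
      have h0 := mem012 (G.vals_Ap i hi j hj s hs 0 (by omega))
      have h1 := mem012 (G.vals_Ap i hi j hj s hs 1 (by omega))
      have e1 : G.Ap i j s 0 * y (2*j) ≤ 2 * y (2*j) :=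
        mul_le_mul_of_nonneg_right h0.2 (hy _)
      have e2 : G.Ap i j s 1 * y (2*j+1) ≤ 2 * y (2*j+1) :=
        mul_le_mul_of_nonneg_right h1.2 (hy _)
      have e3 := hbV j hj
      simp only [aggProb, if_pos hj] at e3
      linarith
    · rw [if_neg hjab]
      have hnot : ¬ ∃ s < 2, ∃ t < 2, G.Ap i j s t ≠ 0 := fun hcon => hjab (hab j hj hcon)
      push_neg at hnot
      rw [hnot s hs 0 (by omega), hnot s hs 1 (by omega), zero_mul, zero_mul, add_zero]
  calc gA n G y i s ≤ ∑ j ∈ range n, (if j = a ∨ j = b then V/4 else 0) :=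
        Finset.sum_le_sum hpt
    _ ≤ 2 * (V/4) := sum_ite_pair_le n a b (V/4) (by linarith)
    _ = V/2 := by ring

lemma gB_le (n : ℕ) (G : RestrictedPolymatrix n) (x : ℕ → ℝ) (j t : ℕ)
    (hj : j < n) (ht : t < 2) (hx : ∀ b, 0 ≤ x b) (V : ℝ) (a b : ℕ)
    (hab : ∀ i, i < n → (∃ s < 2, ∃ t < 2, G.Bp i j s t ≠ 0) → (i = a ∨ i = b))
    (hbV : ∀ i, i < n → 8 * aggProb n x i ≤ V) (hV : 0 ≤ V) :
    gB n G x j t ≤ V/2 := by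
  have hpt : ∀ i ∈ range n, x (2*i) * G.Bp i j 0 t + x (2*i+1) * G.Bp i j 1 t
      ≤ if i = a ∨ i = b then V/4 else 0 := by
    intro i hi
    simp only [mem_range] at hi
    by_cases hiab : i = a ∨ i = b
    · rw [if_pos hiab]
      have h0 := mem012 (G.vals_Bp i hi j hj 0 (by omega) t ht)
      have h1 := mem012 (G.vals_Bp i hi j hj 1 (by omega) t ht)
      have e1 : x (2*i) * G.Bp i j 0 t ≤ x (2*i) * 2 :=
        mul_le_mul_of_nonneg_left h0.2 (hx _)
      have e2 : x (2*i+1) * G.Bp i j 1 t ≤ x (2*i+1) * 2 :=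
        mul_le_mul_of_nonneg_left h1.2 (hx _)
      have e3 := hbV i hi
      simp only [aggProb, if_pos hi] at e3
      linarith
    · rw [if_neg hiab]
      have hnot : ¬ ∃ s < 2, ∃ t < 2, G.Bp i j s t ≠ 0 := fun hcon => hiab (hab i hi hcon)
      push_neg at hnot
      rw [hnot 0 (by omega) t ht, hnot 1 (by omega) t ht, mul_zero, mul_zero, add_zero]
  calc gB n G x j t ≤ ∑ i ∈ range n, (if i = a ∨ i = b then V/4 else 0) :=
        Finset.sum_le_sum hpt
    _ ≤ 2 * (V/4) := sum_ite_pair_le n a b (V/4) (by linarith)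
    _ = V/2 := by ring

lemma key_sum (n : ℕ) (d Yv : ℕ → ℝ) (a b : ℕ) (c ε : ℝ)
    (hc : 0 < c) (hε0 : 0 ≤ ε)
    (hY1 : ∀ j, j < n → c ≤ Yv j) (hY2 : ∀ j, j < n → Yv j ≤ c + ε/8)
    (hd2 : ∀ j, j < n → d j ≤ 2 * Yv j)
    (hd0 : ∀ j, j < n → ¬ (j = a ∨ j = b) → d j = 0)
    (hsum : -ε ≤ ∑ j ∈ range n, d j) :
    -(3/2 * (ε/c)) ≤ ∑ j ∈ range n, d j / Yv j := by
  have hpt : ∀ j ∈ range n, d j / c - (if j = a ∨ j = b then ε/(4*c) else 0) ≤ d j / Yv j := by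
    intro j hj
    simp only [mem_range] at hj
    have hYc : c ≤ Yv j := hY1 j hj
    have hYpos : 0 < Yv j := lt_of_lt_of_le hc hYc
    by_cases hjD : j = a ∨ j = b
    · rw [if_pos hjD]
      rcases le_or_gt (d j) 0 with hdj | hdj
      · have h1 : d j / c ≤ d j / Yv j := by
          rw [div_le_div_iff₀ hc hYpos]
          nlinarith
        have h2 : 0 ≤ ε/(4*c) := by positivity
        linarith
      · have key : (d j - ε/4)/c ≤ d j / Yv j := by
          rw [div_le_div_iff₀ hc hYpos]
          have e1 : d j * (Yv j - c) ≤ d j * (ε/8) :=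
            mul_le_mul_of_nonneg_left (by linarith [hY2 j hj]) hdj.le
          have e2 : d j * (ε/8) ≤ 2 * Yv j * (ε/8) :=
            mul_le_mul_of_nonneg_right (hd2 j hj) (by positivity)
          nlinarith
        rw [sub_div, div_div] at key
        exact key
    · rw [if_neg hjD, hd0 j hj hjD]
      simp
  have hs1 : ∑ j ∈ range n, (d j / c - (if j = a ∨ j = b then ε/(4*c) else 0))
      ≤ ∑ j ∈ range n, d j / Yv j := Finset.sum_le_sum hpt
  rw [Finset.sum_sub_distrib, ← Finset.sum_div] at hs1
  have hs3 : (∑ j ∈ range n, if j = a ∨ j = b then ε/(4*c) else 0) ≤ 2 * (ε/(4*c)) :=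
    sum_ite_pair_le n a b _ (by positivity)
  have hs4 : -ε/c ≤ (∑ j ∈ range n, d j)/c := (div_le_div_iff_of_pos_right hc).mpr hsum
  have hid : -(3/2 * (ε/c)) = -ε/c - 2*(ε/(4*c)) := by
    field_simp
    ring
  linarith

end BoundLemmas

set_option maxHeartbeats 1000000 in
/-- From an `ε`-WSNE of the constructed bimatrix game (with `K = 8`, `N = 2n+2` and
`0 ≤ ε < 1/(6·K·N)`) the renormalized primary-action probabilities form a
`(3·K·N·ε)`-WSNE of the restricted polymatrix game `G` (and the denominators
`x_{i0} + x_{i1}` and `y_{j0} + y_{j1}` are positive). -/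
theorem stmt2 (n : ℕ) (G : RestrictedPolymatrix n) (ε : ℝ) (x y : ℕ → ℝ)
    (hε0 : 0 ≤ ε) (hε : ε < 1 / (6 * 8 * (2 * (n:ℝ) + 2)))
    (hwsne : IsWSNE (3*n+2) (3*n+2) (consA n G) (consB n G) x y ε) :
    (∀ i < n, 0 < x (2*i) + x (2*i+1)) ∧
    (∀ j < n, 0 < y (2*j) + y (2*j+1)) ∧
    PolyIsWSNE n G
      (fun i => x (2*i+1) / (x (2*i) + x (2*i+1)))
      (fun j => y (2*j+1) / (y (2*j) + y (2*j+1)))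
      (3 * 8 * (2 * (n:ℝ) + 2) * ε) := by
  obtain ⟨hx0, hxz, hxs, hy0, hyz, hys, hrow, hcol⟩ := hwsne
  rcases Nat.eq_zero_or_pos n with hn0 | hn
  · subst hn0
    exact ⟨fun i hi => absurd hi (Nat.not_lt_zero i),
      fun j hj => absurd hj (Nat.not_lt_zero j),
      fun i hi => absurd hi (Nat.not_lt_zero i),
      fun j hj => absurd hj (Nat.not_lt_zero j),
      fun i hi => absurd hi (Nat.not_lt_zero i),
      fun j hj => absurd hj (Nat.not_lt_zero j)⟩
  -- basic facts
  have hrow' : ∀ a, a < 3*n+2 → 0 < x a → ∀ a', a' < 3*n+2 →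
      RPay n G y a ≥ RPay n G y a' - ε := fun a ha hp a' ha' =>
    hrow a ha hp a' ha'
  have hcol' : ∀ b, b < 3*n+2 → 0 < y b → ∀ b', b' < 3*n+2 →
      CPay n G x b ≥ CPay n G x b' - ε := fun b hb hp b' hb' =>
    hcol b hb hp b' hb'
  have hXsum : ∑ i ∈ range (2*n+2), aggProb n x i = 1 := by rw [agg_sum]; exact hxs
  have hYsum : ∑ i ∈ range (2*n+2), aggProb n y i = 1 := by rw [agg_sum]; exact hys
  have hX0 : ∀ i, 0 ≤ aggProb n x i := by
    intro i
    unfold aggProb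
    by_cases h : i < n
    · rw [if_pos h]; exact add_nonneg (hx0 _) (hx0 _)
    · rw [if_neg h]; exact hx0 _
  have hY0 : ∀ i, 0 ≤ aggProb n y i := by
    intro i
    unfold aggProb
    by_cases h : i < n
    · rw [if_pos h]; exact add_nonneg (hy0 _) (hy0 _)
    · rw [if_neg h]; exact hy0 _
  have hnn : (0:ℝ) ≤ (n:ℝ) := Nat.cast_nonneg n
  have hεb : ε < 1/(96*((n:ℝ)+1)) := by
    have he : 6*8*(2*(n:ℝ)+2) = 96*((n:ℝ)+1) := by ring
    rwa [he] at hε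
  -- row max
  obtain ⟨bR, hbRm, hbRmax⟩ := Finset.exists_max_image (range (3*n+2)) (RPay n G y)
    ⟨0, by simp only [mem_range]; omega⟩
  simp only [mem_range] at hbRm
  have hbRmax' : ∀ a, a < 3*n+2 → RPay n G y a ≤ RPay n G y bR := fun a ha =>
    hbRmax a (mem_range.mpr ha)
  set VR := RPay n G y bR with hVRdef
  -- col max
  obtain ⟨bC, hbCm, hbCmax⟩ := Finset.exists_max_image (range (3*n+2)) (CPay n G x)
    ⟨0, by simp only [mem_range]; omega⟩
  simp only [mem_range] at hbCm
  have hbCmax' : ∀ b, b < 3*n+2 → CPay n G x b ≤ CPay n G x bC := fun b hb =>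
    hbCmax b (mem_range.mpr hb)
  set VC := CPay n G x bC with hVCdef
  -- upper bounds, Y side
  have hYprimUB : ∀ j, j < n → 8 * aggProb n y j ≤ VR := by
    intro j hj
    rw [← rp_sec_mid n G y j hj]
    exact hbRmax' _ (by omega)
  have hYUB : ∀ i, i < 2*n+2 → aggProb n y i ≤ VR := by
    intro i hi
    rcases lt_or_ge i n with h | h
    · have h8 := hYprimUB i h
      have h0 := hY0 i
      linarith
    · by_cases hin : i = n
      · rw [hin, ← rp_sec_top n G y]; exact hbRmax' _ (by omega)
      by_cases hit : i = 2*n+1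
      · rw [hit, ← rp_sec_zero n G y]; exact hbRmax' _ (by omega)
      · have h1 : 1 ≤ i - n := by omega
        have h2 : i - n ≤ n := by omega
        have e0 := rp_primary n G y (i-n-1) 0 (by omega) (by omega)
        simp only [add_zero] at e0
        have hle := hbRmax' (2*(i-n-1)) (by omega)
        rw [e0] at hle
        have hg := gA_nonneg n G y (i-n-1) 0 (by omega) (by omega) hy0
        have : aggProb n y (n+1+(i-n-1)) ≤ VR := by linarith
        rwa [show n+1+(i-n-1) = i from by omega] at this
  -- upper bounds, X side
  have hXprimUB : ∀ i, i < n → 8 * aggProb n x i ≤ VC := by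
    intro i hi
    rw [← cp_sec_mid n G x i hn hi]
    exact hbCmax' _ (by omega)
  have hXUB : ∀ i, i < 2*n+2 → aggProb n x i ≤ VC := by
    intro i hi
    rcases lt_or_ge i n with h | h
    · have h8 := hXprimUB i h
      have h0 := hX0 i
      linarith
    · by_cases hin : i = 2*n
      · rw [hin, ← cp_sec_zero n G x hn]; exact hbCmax' _ (by omega)
      by_cases hit : i = 2*n+1
      · rw [hit, ← cp_sec_one n G x hn]; exact hbCmax' _ (by omega)
      · have e0 := cp_primary n G x (i-n) 0 hn (by omega) (by omega)
        simp only [add_zero] at e0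
        have hle := hbCmax' (2*(i-n)) (by omega)
        rw [e0] at hle
        have hg := gB_nonneg n G x (i-n) 0 (by omega) (by omega) hx0
        have : aggProb n x ((i-n)+n) ≤ VC := by linarith
        rwa [show (i-n)+n = i from by omega] at this
  -- lower bounds on VR, VC
  have hVRlb : 8/(9*(n:ℝ)+16) ≤ VR := by
    have hsplit : ∑ i ∈ range n, aggProb n y i + ∑ i ∈ Ico n (2*n+2), aggProb n y i = 1 := by
      rw [Finset.sum_range_add_sum_Ico _ (show n ≤ 2*n+2 by omega)]
      exact hYsum
    have h1 : ∑ i ∈ range n, aggProb n y i ≤ (n:ℝ) * (VR/8) := by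
      calc ∑ i ∈ range n, aggProb n y i ≤ ∑ _i ∈ range n, (VR/8) :=
            Finset.sum_le_sum (fun i hi => by
              have := hYprimUB i (mem_range.mp hi); linarith)
        _ = (n:ℝ) * (VR/8) := by rw [Finset.sum_const, card_range, nsmul_eq_mul]
    have h2 : ∑ i ∈ Ico n (2*n+2), aggProb n y i ≤ ((n:ℝ)+2) * VR := by
      calc ∑ i ∈ Ico n (2*n+2), aggProb n y i ≤ ∑ _i ∈ Ico n (2*n+2), VR :=
            Finset.sum_le_sum (fun i hi => by
              have hm := Finset.mem_Ico.mp hi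
              exact hYUB i hm.2)
        _ = ((n:ℝ)+2) * VR := by
            rw [Finset.sum_const, Nat.card_Ico, nsmul_eq_mul]
            congr 1
            push_cast [show 2*n+2-n = n+2 from by omega]
            ring
    rw [div_le_iff₀ (by positivity)]
    nlinarith [h1, h2, hsplit]
  have hVClb : 8/(9*(n:ℝ)+16) ≤ VC := by
    have hsplit : ∑ i ∈ range n, aggProb n x i + ∑ i ∈ Ico n (2*n+2), aggProb n x i = 1 := by
      rw [Finset.sum_range_add_sum_Ico _ (show n ≤ 2*n+2 by omega)]
      exact hXsum
    have h1 : ∑ i ∈ range n, aggProb n x i ≤ (n:ℝ) * (VC/8) := by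
      calc ∑ i ∈ range n, aggProb n x i ≤ ∑ _i ∈ range n, (VC/8) :=
            Finset.sum_le_sum (fun i hi => by
              have := hXprimUB i (mem_range.mp hi); linarith)
        _ = (n:ℝ) * (VC/8) := by rw [Finset.sum_const, card_range, nsmul_eq_mul]
    have h2 : ∑ i ∈ Ico n (2*n+2), aggProb n x i ≤ ((n:ℝ)+2) * VC := by
      calc ∑ i ∈ Ico n (2*n+2), aggProb n x i ≤ ∑ _i ∈ Ico n (2*n+2), VC :=
            Finset.sum_le_sum (fun i hi => by
              have hm := Finset.mem_Ico.mp hi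
              exact hXUB i hm.2)
        _ = ((n:ℝ)+2) * VC := by
            rw [Finset.sum_const, Nat.card_Ico, nsmul_eq_mul]
            congr 1
            push_cast [show 2*n+2-n = n+2 from by omega]
            ring
    rw [div_le_iff₀ (by positivity)]
    nlinarith [h1, h2, hsplit]
  have hVR0 : 0 < VR := lt_of_lt_of_le (by positivity) hVRlb
  have hVC0 : 0 < VC := lt_of_lt_of_le (by positivity) hVClb
  have h48 : 1/(48*((n:ℝ)+1)) ≤ 8/(9*(n:ℝ)+16) := by
    rw [div_le_div_iff₀ (by positivity) (by positivity)]
    nlinarith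
  have h2e : 2*ε < 1/(48*((n:ℝ)+1)) := by
    have he : 1/(48*((n:ℝ)+1)) = 2*(1/(96*((n:ℝ)+1))) := by
      field_simp
      ring
    rw [he]
    linarith
  have hεVR : 2*ε < VR := by linarith
  have hεVC : 2*ε < VC := by linarith
  -- zero propagation steps
  have stepA1 : ∀ i, i < n → aggProb n x i = 0 → aggProb n y (i+n+2) = 0 := by
    intro i hi hXi
    have hcp : CPay n G x (2*n+(i+2)) = 0 := by
      rw [cp_sec_mid n G x i hn hi, hXi, mul_zero]
    have hidx : aggProb n y (i+n+2) = y (2*n+(i+2)) := by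
      simp only [aggProb, if_neg (by omega : ¬ i+n+2 < n)]
      congr 1
      omega
    rw [hidx]
    by_contra hne
    have hpos : 0 < y (2*n+(i+2)) := lt_of_le_of_ne (hy0 _) (Ne.symm hne)
    have hcomp := hcol' (2*n+(i+2)) (by omega) hpos bC (by omega)
    rw [hcp] at hcomp
    have : VC ≤ ε := by linarith [hcomp]
    linarith
  have stepA2 : ∀ i, n ≤ i → i < 2*n+2 → aggProb n x i = 0 → aggProb n y (i-n) = 0 := by
    intro i h1 h2 hXi
    rcases lt_or_ge (i-n) n with hj | hj
    · -- i-n primary column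
      have hXi' : aggProb n x ((i-n)+n) = 0 := by
        rw [show (i-n)+n = i from by omega]; exact hXi
      have hz : ∀ t, t < 2 → y (2*(i-n)+t) = 0 := by
        intro t ht
        by_contra hne
        have hpos : 0 < y (2*(i-n)+t) := lt_of_le_of_ne (hy0 _) (Ne.symm hne)
        have hcomp := hcol' (2*(i-n)+t) (by omega) hpos bC (by omega)
        rw [cp_primary n G x (i-n) t hn hj ht, hXi', add_zero] at hcomp
        obtain ⟨b1, b2, hsup⟩ := two_support (G.indeg_right (i-n) hj)
        have hgb := gB_le n G x (i-n) t hj ht hx0 VC b1 b2 hsup hXprimUB hVC0.le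
        linarith [hcomp]
      have hz0 := hz 0 (by omega)
      have hz1 := hz 1 (by omega)
      simp only [add_zero] at hz0
      simp only [aggProb, if_pos hj]
      rw [hz0, hz1, add_zero]
    · -- i-n ∈ {n, n+1}
      have hj2 : i = 2*n ∨ i = 2*n+1 := by omega
      rcases hj2 with hi' | hi'
      · -- CPay(2n) = X(2n) = 0, column action 2n has Y(n) weight... show Y n = 0
        have hcp : CPay n G x (2*n) = 0 := by
          rw [cp_sec_zero n G x hn, show 2*n = i from by omega]
          exact hXi
        have hidx : aggProb n y (i-n) = y (2*n) := by
          simp only [aggProb, if_neg (by omega : ¬ i-n < n)]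
          congr 1
          omega
        rw [hidx]
        by_contra hne
        have hpos : 0 < y (2*n) := lt_of_le_of_ne (hy0 _) (Ne.symm hne)
        have hcomp := hcol' (2*n) (by omega) hpos bC (by omega)
        rw [hcp] at hcomp
        linarith [hcomp]
      · have hcp : CPay n G x (2*n+1) = 0 := by
          rw [cp_sec_one n G x hn, show 2*n+1 = i from by omega]
          exact hXi
        have hidx : aggProb n y (i-n) = y (2*n+1) := by
          simp only [aggProb, if_neg (by omega : ¬ i-n < n)]
          congr 1
          omega
        rw [hidx]
        by_contra hne
        have hpos : 0 < y (2*n+1) := lt_of_le_of_ne (hy0 _) (Ne.symm hne)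
        have hcomp := hcol' (2*n+1) (by omega) hpos bC (by omega)
        rw [hcp] at hcomp
        linarith [hcomp]
  have stepB1 : ∀ j, j ≤ n → aggProb n y j = 0 → aggProb n x (j+n+1) = 0 := by
    intro j hjn hYj
    have hidx : aggProb n x (j+n+1) = x (2*n+(j+1)) := by
      simp only [aggProb, if_neg (by omega : ¬ j+n+1 < n)]
      congr 1
      omega
    have hrp : RPay n G y (2*n+(j+1)) = 0 := by
      rcases lt_or_ge j n with hj | hj
      · rw [rp_sec_mid n G y j hj, hYj, mul_zero]
      · have hj' : j = n := by omega
        rw [show 2*n+(j+1) = 2*n+(n+1) from by omega, rp_sec_top n G y]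
        rw [hj'] at hYj
        exact hYj
    rw [hidx]
    by_contra hne
    have hpos : 0 < x (2*n+(j+1)) := lt_of_le_of_ne (hx0 _) (Ne.symm hne)
    have hcomp := hrow' (2*n+(j+1)) (by omega) hpos bR (by omega)
    rw [hrp] at hcomp
    linarith [hcomp]
  have stepB2 : ∀ j, n+1 ≤ j → j < 2*n+2 → aggProb n y j = 0 → aggProb n x (j-n-1) = 0 := by
    intro j h1 h2 hYj
    rcases lt_or_ge (j-n-1) n with hi | hi
    · -- primary row
      have hYj' : aggProb n y (n+1+(j-n-1)) = 0 := by
        rw [show n+1+(j-n-1) = j from by omega]; exact hYj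
      have hz : ∀ s, s < 2 → x (2*(j-n-1)+s) = 0 := by
        intro s hs
        by_contra hne
        have hpos : 0 < x (2*(j-n-1)+s) := lt_of_le_of_ne (hx0 _) (Ne.symm hne)
        have hcomp := hrow' (2*(j-n-1)+s) (by omega) hpos bR (by omega)
        rw [rp_primary n G y (j-n-1) s hi hs, hYj', add_zero] at hcomp
        obtain ⟨a1, a2, hsup⟩ := two_support (G.indeg_left (j-n-1) hi)
        have hga := gA_le n G y (j-n-1) s hi hs hy0 VR a1 a2 hsup hYprimUB hVR0.le
        linarith [hcomp]
      have hz0 := hz 0 (by omega)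
      have hz1 := hz 1 (by omega)
      simp only [add_zero] at hz0
      simp only [aggProb, if_pos hi]
      rw [hz0, hz1, add_zero]
    · -- j = 2n+1, row index n, action 2n
      have hj' : j = 2*n+1 := by omega
      have hrp : RPay n G y (2*n) = 0 := by
        rw [rp_sec_zero n G y, show 2*n+1 = j from by omega]
        exact hYj
      have hidx : aggProb n x (j-n-1) = x (2*n) := by
        simp only [aggProb, if_neg (by omega : ¬ j-n-1 < n)]
        congr 1
        omega
      rw [hidx]
      by_contra hne
      have hpos : 0 < x (2*n) := lt_of_le_of_ne (hx0 _) (Ne.symm hne)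
      have hcomp := hrow' (2*n) (by omega) hpos bR (by omega)
      rw [hrp] at hcomp
      linarith [hcomp]
  -- positivity
  have hXpos : ∀ i, i < 2*n+2 → 0 < aggProb n x i := by
    intro i hi
    rcases (hX0 i).lt_or_eq with h | h
    · exact h
    exfalso
    have hXi0 : aggProb n x i = 0 := h.symm
    have hstep : ∀ m, m < 2*n+2 → aggProb n x m = 0 →
        aggProb n x ((m+1) % (2*n+2)) = 0 := by
      intro m hm hm0
      rcases lt_or_ge m n with h' | h'
      · have h1 := stepA1 m h' hm0
        have h2 := stepB2 (m+n+2) (by omega) (by omega) h1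
        rw [Nat.mod_eq_of_lt (by omega : m+1 < 2*n+2)]
        rwa [show m+n+2-n-1 = m+1 from by omega] at h2
      · have h1 := stepA2 m h' hm hm0
        rcases lt_or_ge (m-n) (n+1) with h'' | h''
        · have h2 := stepB1 (m-n) (by omega) h1
          rw [Nat.mod_eq_of_lt (by omega : m+1 < 2*n+2)]
          rwa [show m-n+n+1 = m+1 from by omega] at h2
        · have h2 := stepB2 (m-n) (by omega) (by omega) h1
          rw [show (m+1) % (2*n+2) = 0 from by
            rw [show m+1 = 2*n+2 from by omega]; exact Nat.mod_self _]
          rwa [show m-n-n-1 = 0 from by omega] at h2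
    have hall : ∀ k, aggProb n x ((i+k) % (2*n+2)) = 0 := by
      intro k
      induction k with
      | zero => rw [Nat.add_zero, Nat.mod_eq_of_lt hi]; exact hXi0
      | succ k ih =>
          have hm : (i+k) % (2*n+2) < 2*n+2 := Nat.mod_lt _ (by omega)
          have hh := hstep _ hm ih
          have e : ((i+k) % (2*n+2) + 1) % (2*n+2) = (i+(k+1)) % (2*n+2) := by
            rw [show i+(k+1) = (i+k)+1 from by omega]
            conv_rhs => rw [Nat.add_mod (i+k) 1]
            rw [Nat.mod_eq_of_lt (show (1:ℕ) < 2*n+2 from by omega)]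
          rwa [e] at hh
    have hzero : ∀ i', i' < 2*n+2 → aggProb n x i' = 0 := by
      intro i' hi'
      have hh := hall (2*n+2 - i + i')
      rwa [show (i + (2*n+2 - i + i')) = (2*n+2) + i' from by omega,
        Nat.add_mod_left, Nat.mod_eq_of_lt hi'] at hh
    have hone : (1:ℝ) = 0 := by
      rw [← hXsum]
      exact Finset.sum_eq_zero (fun i' hi' => hzero i' (mem_range.mp hi'))
    norm_num at hone
  have hYpos : ∀ j, j < 2*n+2 → 0 < aggProb n y j := by
    intro j hj
    rcases (hY0 j).lt_or_eq with h | h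
    · exact h
    exfalso
    have h0 : aggProb n y j = 0 := h.symm
    rcases le_or_gt j n with hjn | hjn
    · exact absurd (stepB1 j hjn h0) (ne_of_gt (hXpos (j+n+1) (by omega)))
    · exact absurd (stepB2 j (by omega) hj h0) (ne_of_gt (hXpos (j-n-1) (by omega)))
  -- primary lower bounds
  have hYlow : ∀ j, j < n → VR - ε ≤ 8 * aggProb n y j := by
    intro j hj
    have hxp : 0 < x (2*n+(j+1)) := by
      have hp := hXpos (n+(j+1)) (by omega)
      simp only [aggProb, if_neg (by omega : ¬ n+(j+1) < n)] at hp
      rwa [show n+(n+(j+1)) = 2*n+(j+1) from by omega] at hp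
    have hcomp := hrow' (2*n+(j+1)) (by omega) hxp bR (by omega)
    rw [rp_sec_mid n G y j hj] at hcomp
    linarith [hcomp]
  have hXlow : ∀ i, i < n → VC - ε ≤ 8 * aggProb n x i := by
    intro i hi
    have hyp : 0 < y (2*n+(i+2)) := by
      have hp := hYpos (n+(i+2)) (by omega)
      simp only [aggProb, if_neg (by omega : ¬ n+(i+2) < n)] at hp
      rwa [show n+(n+(i+2)) = 2*n+(i+2) from by omega] at hp
    have hcomp := hcol' (2*n+(i+2)) (by omega) hyp bC (by omega)
    rw [cp_sec_mid n G x i hn hi] at hcomp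
    linarith [hcomp]
  -- denominators
  have hdenx : ∀ i, i < n → 0 < x (2*i) + x (2*i+1) := by
    intro i hi
    have hp := hXpos i (by omega)
    simpa only [aggProb, if_pos hi] using hp
  have hdeny : ∀ j, j < n → 0 < y (2*j) + y (2*j+1) := by
    intro j hj
    have hp := hYpos j (by omega)
    simpa only [aggProb, if_pos hj] using hp
  -- the c constants
  set cY := (VR - ε)/8 with hcYdef
  set cX := (VC - ε)/8 with hcXdef
  have hcY0 : 0 < cY := by rw [hcYdef]; apply div_pos (by linarith) (by norm_num)
  have hcX0 : 0 < cX := by rw [hcXdef]; apply div_pos (by linarith) (by norm_num)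
  have hVR' : 8 ≤ VR * (9*(n:ℝ)+16) := by
    rw [div_le_iff₀ (by positivity : (0:ℝ) < 9*(n:ℝ)+16)] at hVRlb
    linarith
  have hVC' : 8 ≤ VC * (9*(n:ℝ)+16) := by
    rw [div_le_iff₀ (by positivity : (0:ℝ) < 9*(n:ℝ)+16)] at hVClb
    linarith
  have hε' : ε * (96*((n:ℝ)+1)) ≤ 1 := le_of_lt ((lt_div_iff₀ (by positivity)).mp hεb)
  have hnVR : 0 ≤ (n:ℝ)*VR := mul_nonneg hnn hVR0.le
  have hnVC : 0 ≤ (n:ℝ)*VC := mul_nonneg hnn hVC0.le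
  have hnε : 0 ≤ (n:ℝ)*ε := mul_nonneg hnn hε0
  have hcYlb : 1/(32*((n:ℝ)+1)) ≤ cY := by
    rw [hcYdef, div_le_div_iff₀ (by positivity) (by norm_num : (0:ℝ) < 8)]
    linarith only [hVR', hε', hnVR, hnε]
  have hcXlb : 1/(32*((n:ℝ)+1)) ≤ cX := by
    rw [hcXdef, div_le_div_iff₀ (by positivity) (by norm_num : (0:ℝ) < 8)]
    linarith only [hVC', hε', hnVC, hnε]
  have hfinalY : 3/2*(ε/cY) ≤ 3*8*(2*(n:ℝ)+2)*ε := by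
    have h1 : ε/cY ≤ ε*(32*((n:ℝ)+1)) := by
      rw [div_le_iff₀ hcY0]
      have h2 : ε*(32*((n:ℝ)+1))*(1/(32*((n:ℝ)+1))) ≤ ε*(32*((n:ℝ)+1))*cY :=
        mul_le_mul_of_nonneg_left hcYlb (by positivity)
      have h3 : ε*(32*((n:ℝ)+1))*(1/(32*((n:ℝ)+1))) = ε := by field_simp
      linarith
    linarith
  have hfinalX : 3/2*(ε/cX) ≤ 3*8*(2*(n:ℝ)+2)*ε := by
    have h1 : ε/cX ≤ ε*(32*((n:ℝ)+1)) := by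
      rw [div_le_iff₀ hcX0]
      have h2 : ε*(32*((n:ℝ)+1))*(1/(32*((n:ℝ)+1))) ≤ ε*(32*((n:ℝ)+1))*cX :=
        mul_le_mul_of_nonneg_left hcXlb (by positivity)
      have h3 : ε*(32*((n:ℝ)+1))*(1/(32*((n:ℝ)+1))) = ε := by field_simp
      linarith
    linarith
  -- the key per-player comparison, left side
  have leftkey : ∀ i, i < n → ∀ s s', s < 2 → s' < 2 → 0 < x (2*i+s) →
      leftPayoff n G (fun j => y (2*j+1)/(y (2*j)+y (2*j+1))) i s
        ≥ leftPayoff n G (fun j => y (2*j+1)/(y (2*j)+y (2*j+1))) i s'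
          - 3*8*(2*(n:ℝ)+2)*ε := by
    intro i hi s s' hs hs' hpos
    have hcomp := hrow' (2*i+s) (by omega) hpos (2*i+s') (by omega)
    rw [rp_primary n G y i s hi hs, rp_primary n G y i s' hi hs'] at hcomp
    have hsumd : -ε ≤ gA n G y i s - gA n G y i s' := by linarith [hcomp]
    obtain ⟨a1, a2, hsup⟩ := two_support (G.indeg_left i hi)
    set d : ℕ → ℝ := fun j => (G.Ap i j s 0 - G.Ap i j s' 0) * y (2*j)
      + (G.Ap i j s 1 - G.Ap i j s' 1) * y (2*j+1) with hddef
    have hdsum : ∑ j ∈ range n, d j = gA n G y i s - gA n G y i s' := by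
      unfold gA
      rw [← Finset.sum_sub_distrib]
      exact Finset.sum_congr rfl fun j _ => by rw [hddef]; ring
    have hd2 : ∀ j, j < n → d j ≤ 2 * aggProb n y j := by
      intro j hj
      rw [hddef]
      simp only [aggProb, if_pos hj]
      have h10 := mem012 (G.vals_Ap i hi j hj s hs 0 (by omega))
      have h00 := mem012 (G.vals_Ap i hi j hj s' hs' 0 (by omega))
      have h11 := mem012 (G.vals_Ap i hi j hj s hs 1 (by omega))
      have h01 := mem012 (G.vals_Ap i hi j hj s' hs' 1 (by omega))
      have hy1 := hy0 (2*j)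
      have hy2 := hy0 (2*j+1)
      have m1 := mul_le_mul_of_nonneg_right
        (show G.Ap i j s 0 - G.Ap i j s' 0 ≤ 2 by linarith) hy1
      have m2 := mul_le_mul_of_nonneg_right
        (show G.Ap i j s 1 - G.Ap i j s' 1 ≤ 2 by linarith) hy2
      linarith
    have hd0 : ∀ j, j < n → ¬(j = a1 ∨ j = a2) → d j = 0 := by
      intro j hj hnj
      have hnot : ¬ ∃ s < 2, ∃ t < 2, G.Ap i j s t ≠ 0 := fun hcon => hnj (hsup j hj hcon)
      push_neg at hnot
      rw [hddef]
      simp only [hnot s hs 0 (by omega), hnot s' hs' 0 (by omega),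
        hnot s hs 1 (by omega), hnot s' hs' 1 (by omega)]
      ring
    have hY1' : ∀ j, j < n → cY ≤ aggProb n y j := by
      intro j hj
      have := hYlow j hj
      rw [hcYdef]
      linarith
    have hY2' : ∀ j, j < n → aggProb n y j ≤ cY + ε/8 := by
      intro j hj
      have := hYprimUB j hj
      rw [hcYdef]
      linarith
    have hsum' : -ε ≤ ∑ j ∈ range n, d j := by rw [hdsum]; linarith
    have hkey : -(3/2 * (ε/cY)) ≤ ∑ j ∈ range n, d j / aggProb n y j :=
      key_sum n d (fun j => aggProb n y j) a1 a2 cY ε hcY0 hε0 hY1' hY2' hd2 hd0 hsum'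
    have hconv : leftPayoff n G (fun j => y (2*j+1)/(y (2*j)+y (2*j+1))) i s
        - leftPayoff n G (fun j => y (2*j+1)/(y (2*j)+y (2*j+1))) i s'
        = ∑ j ∈ range n, d j / aggProb n y j := by
      unfold leftPayoff
      rw [← Finset.sum_sub_distrib]
      refine Finset.sum_congr rfl fun j hj => ?_
      simp only [mem_range] at hj
      have hdj := hdeny j hj
      simp only [aggProb, if_pos hj, hddef]
      field_simp
      ring
    linarith [hkey, hconv, hfinalY]
  -- the key per-player comparison, right side
  have rightkey : ∀ j, j < n → ∀ t t', t < 2 → t' < 2 → 0 < y (2*j+t) →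
      rightPayoff n G (fun i => x (2*i+1)/(x (2*i)+x (2*i+1))) j t
        ≥ rightPayoff n G (fun i => x (2*i+1)/(x (2*i)+x (2*i+1))) j t'
          - 3*8*(2*(n:ℝ)+2)*ε := by
    intro j hj t t' ht ht' hpos
    have hcomp := hcol' (2*j+t) (by omega) hpos (2*j+t') (by omega)
    rw [cp_primary n G x j t hn hj ht, cp_primary n G x j t' hn hj ht'] at hcomp
    have hsumd : -ε ≤ gB n G x j t - gB n G x j t' := by linarith [hcomp]
    obtain ⟨a1, a2, hsup⟩ := two_support (G.indeg_right j hj)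
    set d : ℕ → ℝ := fun i => x (2*i) * (G.Bp i j 0 t - G.Bp i j 0 t')
      + x (2*i+1) * (G.Bp i j 1 t - G.Bp i j 1 t') with hddef
    have hdsum : ∑ i ∈ range n, d i = gB n G x j t - gB n G x j t' := by
      unfold gB
      rw [← Finset.sum_sub_distrib]
      exact Finset.sum_congr rfl fun i _ => by rw [hddef]; ring
    have hd2 : ∀ i, i < n → d i ≤ 2 * aggProb n x i := by
      intro i hi
      rw [hddef]
      simp only [aggProb, if_pos hi]
      have h10 := mem012 (G.vals_Bp i hi j hj 0 (by omega) t ht)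
      have h00 := mem012 (G.vals_Bp i hi j hj 0 (by omega) t' ht')
      have h11 := mem012 (G.vals_Bp i hi j hj 1 (by omega) t ht)
      have h01 := mem012 (G.vals_Bp i hi j hj 1 (by omega) t' ht')
      have hx1 := hx0 (2*i)
      have hx2 := hx0 (2*i+1)
      have m1 := mul_le_mul_of_nonneg_left
        (show G.Bp i j 0 t - G.Bp i j 0 t' ≤ 2 by linarith) hx1
      have m2 := mul_le_mul_of_nonneg_left
        (show G.Bp i j 1 t - G.Bp i j 1 t' ≤ 2 by linarith) hx2
      linarith
    have hd0 : ∀ i, i < n → ¬(i = a1 ∨ i = a2) → d i = 0 := by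
      intro i hi hni
      have hnot : ¬ ∃ s < 2, ∃ u < 2, G.Bp i j s u ≠ 0 := fun hcon => hni (hsup i hi hcon)
      push_neg at hnot
      rw [hddef]
      simp only [hnot 0 (by omega) t ht, hnot 0 (by omega) t' ht',
        hnot 1 (by omega) t ht, hnot 1 (by omega) t' ht']
      ring
    have hX1' : ∀ i, i < n → cX ≤ aggProb n x i := by
      intro i hi
      have := hXlow i hi
      rw [hcXdef]
      linarith
    have hX2' : ∀ i, i < n → aggProb n x i ≤ cX + ε/8 := by
      intro i hi
      have := hXprimUB i hi
      rw [hcXdef]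
      linarith
    have hsum' : -ε ≤ ∑ i ∈ range n, d i := by rw [hdsum]; linarith
    have hkey : -(3/2 * (ε/cX)) ≤ ∑ i ∈ range n, d i / aggProb n x i :=
      key_sum n d (fun i => aggProb n x i) a1 a2 cX ε hcX0 hε0 hX1' hX2' hd2 hd0 hsum'
    have hconv : rightPayoff n G (fun i => x (2*i+1)/(x (2*i)+x (2*i+1))) j t
        - rightPayoff n G (fun i => x (2*i+1)/(x (2*i)+x (2*i+1))) j t'
        = ∑ i ∈ range n, d i / aggProb n x i := by
      unfold rightPayoff
      rw [← Finset.sum_sub_distrib]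
      refine Finset.sum_congr rfl fun i hi => ?_
      simp only [mem_range] at hi
      have hdi := hdenx i hi
      simp only [aggProb, if_pos hi, hddef]
      field_simp
      ring
    linarith [hkey, hconv, hfinalX]
  -- putting it together
  refine ⟨hdenx, hdeny, ?_, ?_, ?_, ?_⟩
  · intro i hi
    have hden := hdenx i hi
    constructor
    · exact div_nonneg (hx0 _) hden.le
    · rw [div_le_one hden]
      linarith [hx0 (2*i)]
  · intro j hj
    have hden := hdeny j hj
    constructor
    · exact div_nonneg (hy0 _) hden.le
    · rw [div_le_one hden]
      linarith [hy0 (2*j)]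
  · intro i hi
    have hden := hdenx i hi
    constructor
    · intro hp
      have hnum : 0 < x (2*i+1) := by
        have hh := mul_pos hp hden
        rwa [div_mul_cancel₀ _ (ne_of_gt hden)] at hh
      exact leftkey i hi 1 0 (by omega) (by omega) hnum
    · intro hp
      have hnum : 0 < x (2*i) := by
        have hlt : x (2*i+1) < x (2*i) + x (2*i+1) := by
          rw [← div_lt_one hden]
          exact hp
        linarith
      exact leftkey i hi 0 1 (by omega) (by omega) hnum
  · intro j hj
    have hden := hdeny j hj
    constructor
    · intro hq
      have hnum : 0 < y (2*j+1) := by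
        have hh := mul_pos hq hden
        rwa [div_mul_cancel₀ _ (ne_of_gt hden)] at hh
      exact rightkey j hj 1 0 (by omega) (by omega) hnum
    · intro hq
      have hnum : 0 < y (2*j) := by
        have hlt : y (2*j+1) < y (2*j) + y (2*j+1) := by
          rw [← div_lt_one hden]
          exact hq
        linarith
      exact rightkey j hj 0 1 (by omega) (by omega) hnum
end

section
/- For every 0 ≤ ε < 1/2, every q ∈ [0,1], and all p_v, p_w ∈ [0,1] satisfying their respective ε-well-supported conditions of the PURIFY gadget: if q = 0 then p_v = 0 and p_w = 0; if q = 1 then p_v = 1 and p_w = 1; if q ≤ 1/2 then p_w = 0; and if q ≥ 1/2 then p_v = 1. In particular, at least one of p_v, p_w lies in {0,1}. -/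
/-- PURIFY gadget: player `v`'s expected payoff is `1 - q` for action `0` and `2q`
for action `1`; player `w`'s expected payoff is `2(1-q)` for action `0` and `q` for
action `1`, where the opponent plays action `1` with probability `q`.  If
`p_v, p_w ∈ [0,1]` satisfy their respective `ε`-well-supported conditions for
`0 ≤ ε < 1/2`, then: `q = 0` forces `p_v = p_w = 0`; `q = 1` forces
`p_v = p_w = 1`; `q ≤ 1/2` forces `p_w = 0`; `q ≥ 1/2` forces `p_v = 1`; in
particular at least one of `p_v, p_w` lies in `{0,1}`. -/
theorem stmt6 (ε q pv pw : ℝ) (hε0 : 0 ≤ ε) (hε1 : ε < 1/2)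
    (hq : q ∈ Set.Icc (0:ℝ) 1) (hpv : pv ∈ Set.Icc (0:ℝ) 1) (hpw : pw ∈ Set.Icc (0:ℝ) 1)
    (hv1 : 0 < pv → 2*q ≥ (1 - q) - ε) (hv2 : pv < 1 → 1 - q ≥ 2*q - ε)
    (hw1 : 0 < pw → q ≥ 2*(1 - q) - ε) (hw2 : pw < 1 → 2*(1 - q) ≥ q - ε) :
    (q = 0 → pv = 0 ∧ pw = 0) ∧ (q = 1 → pv = 1 ∧ pw = 1) ∧
    (q ≤ 1/2 → pw = 0) ∧ (1/2 ≤ q → pv = 1) ∧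
    (pv = 0 ∨ pv = 1 ∨ pw = 0 ∨ pw = 1) := by
  obtain ⟨hpv0, hpv1⟩ := hpv
  obtain ⟨hpw0, hpw1⟩ := hpw
  have hwzero : q ≤ 1/2 → pw = 0 := by
    intro h
    by_contra hne
    have := hw1 (lt_of_le_of_ne hpw0 (Ne.symm hne))
    linarith
  have hvone : 1/2 ≤ q → pv = 1 := by
    intro h
    by_contra hne
    have := hv2 (lt_of_le_of_ne hpv1 hne)
    linarith
  refine ⟨?_, ?_, hwzero, hvone, ?_⟩
  · intro h
    subst h
    constructor
    · by_contra hne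
      have := hv1 (lt_of_le_of_ne hpv0 (Ne.symm hne))
      linarith
    · exact hwzero (by norm_num)
  · intro h
    subst h
    constructor
    · exact hvone (by norm_num)
    · by_contra hne
      have := hw2 (lt_of_le_of_ne hpw1 hne)
      linarith
  · rcases le_total q (1/2) with h | h
    · exact Or.inr (Or.inr (Or.inl (hwzero h)))
    · exact Or.inr (Or.inl (hvone h))
end

section
/- Let (A,B) and (A′,B′) be as in the type-one single column simulation with 4 ≤ K ≤ 8, let 0 ≤ ε < 1/(240·n²), and let (x*,y*) be an ε-WSNE of (A′,B′). Then the renormalizations defining the translated profile (x,y) are valid (the vectors x′ and y′ have positive sums), and (x,y) is a (3950·n²·ε)-WSNE of (A,B) (3950·n²·ε is an explicit form of the paper's O(n²·ε) bound). -/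
open Finset
open scoped Classical

/-- Input assumptions of the type-one single column simulation: `(A,B)` has at most
`n` rows and columns (`nr` rows, `nc` columns), all entries in `[0,K]`, every row
and column of `A` and `B` has an entry `≥ 1`, the columns of `A` containing `K` are
exactly the columns `j < k`, each such column contains exactly one `K`, its other
non-zero entries lie in `{1,2}` and are either at most two values from `{1,2}` or
at most three `1`s. -/
def Scs1Input (n nr nc k : ℕ) (K : ℝ) (A B : ℕ → ℕ → ℝ) : Prop :=
  nr ≤ n ∧ nc ≤ n ∧ k ≤ nc ∧
  (∀ i < nr, ∀ j < nc, 0 ≤ A i j ∧ A i j ≤ K) ∧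
  (∀ i < nr, ∀ j < nc, 0 ≤ B i j ∧ B i j ≤ K) ∧
  (∀ i < nr, ∃ j < nc, 1 ≤ A i j) ∧ (∀ j < nc, ∃ i < nr, 1 ≤ A i j) ∧
  (∀ i < nr, ∃ j < nc, 1 ≤ B i j) ∧ (∀ j < nc, ∃ i < nr, 1 ≤ B i j) ∧
  (∀ j < k,
    ((range nr).filter fun i => A i j = K).card = 1 ∧
    (∀ i < nr, A i j = 0 ∨ A i j = 1 ∨ A i j = 2 ∨ A i j = K) ∧
    (((range nr).filter fun i => A i j = 1 ∨ A i j = 2).card ≤ 2 ∨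
      (((range nr).filter fun i => A i j = 1).card ≤ 3 ∧ ∀ i < nr, A i j ≠ 2))) ∧
  (∀ j, k ≤ j → j < nc → ∀ i < nr, A i j ≠ K)

/-- The row player's payoff matrix `A'` of the type-one single column simulation.
It has `2k + nr` rows and `2k + nc` columns.  For each `j < k`: the block
`(rbʲ, cb₁ʲ) = ({2j,2j+1}, {3j,3j+1})` equals `S = [[2,0],[0,1]]`, the block
`(rbʲ, cb₂ʲ) = ({2j,2j+1}, {3j+2})` is all ones, and the block `(rb_e, cb₁ʲ)`
equals `encode(A_j)` (each `1` of column `A_j` kept as a `1` in the first column,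
each `2` replaced by a `1` in the second column, the `K` replaced by `K/2` in the
second column).  Columns `c ≥ 3k` restricted to `rb_e` equal the columns
`A_{k}, …, A_{nc-1}`; all other entries are `0`. -/
noncomputable def scs1A (k : ℕ) (K : ℝ) (A : ℕ → ℕ → ℝ) : ℕ → ℕ → ℝ := fun r c =>
  if r < 2*k then
    if c = 3*(r/2) then (if r % 2 = 0 then 2 else 0)
    else if c = 3*(r/2) + 1 then (if r % 2 = 0 then 0 else 1)
    else if c = 3*(r/2) + 2 then 1
    else 0
  else
    if c < 3*k then
      (if c % 3 = 0 then (if A (r - 2*k) (c/3) = 1 then 1 else 0)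
       else if c % 3 = 1 then
         (if A (r - 2*k) (c/3) = K then K/2
          else if A (r - 2*k) (c/3) = 2 then 1 else 0)
       else 0)
    else A (r - 2*k) (c - 2*k)

/-- The column player's payoff matrix `B'` of the type-one single column
simulation: for `j < k` the block `(rbʲ, cb₁ʲ)` equals `T = [[0,1],[1,0]]` and the
block `(rb_e, cb₂ʲ)` equals column `B_j`; columns `c ≥ 3k` restricted to `rb_e`
equal the columns `B_k, …, B_{nc-1}`; all other entries are `0`. -/
noncomputable def scs1B (k : ℕ) (B : ℕ → ℕ → ℝ) : ℕ → ℕ → ℝ := fun r c =>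
  if r < 2*k then
    if c = 3*(r/2) then (if r % 2 = 0 then 0 else 1)
    else if c = 3*(r/2) + 1 then (if r % 2 = 0 then 1 else 0)
    else 0
  else
    if c < 3*k then (if c % 3 = 2 then B (r - 2*k) (c/3) else 0)
    else B (r - 2*k) (c - 2*k)

/-- The (un-normalized) translated column strategy `y'`: for `j < k`,
`y'_j = y*_{3j}` if `P(cb₁ʲ) ≥ 11ε` and `0` otherwise; for `j ≥ k`,
`y'_j = y*_{3k + (j-k)}`. -/
noncomputable def scs1Y (k : ℕ) (ε : ℝ) (ystar : ℕ → ℝ) : ℕ → ℝ := fun j =>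
  if j < k then (if 11 * ε ≤ ystar (3*j) + ystar (3*j+1) then ystar (3*j) else 0)
  else ystar (2*k + j)

private lemma sum_range_two_mul (f : ℕ → ℝ) (k : ℕ) :
    ∑ r ∈ range (2*k), f r = ∑ j ∈ range k, (f (2*j) + f (2*j+1)) := by
  induction k with
  | zero => simp
  | succ m ih =>
      rw [show 2*(m+1) = 2*m+1+1 from by ring, sum_range_succ, sum_range_succ, ih,
        sum_range_succ]
      ring

private lemma sum_range_three_mul (f : ℕ → ℝ) (k : ℕ) :
    ∑ r ∈ range (3*k), f r = ∑ j ∈ range k, (f (3*j) + f (3*j+1) + f (3*j+2)) := by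
  induction k with
  | zero => simp
  | succ m ih =>
      rw [show 3*(m+1) = 3*m+1+1+1 from by ring, sum_range_succ, sum_range_succ,
        sum_range_succ, ih, sum_range_succ]
      ring

section entries
variable {k j j' i m : ℕ} (K : ℝ) (A B : ℕ → ℕ → ℝ)

private lemma aev0 (hj : j < k) : scs1A k K A (2*j) (3*j') = if j' = j then 2 else 0 := by
  have h1 : 2*j < 2*k := by omega
  have h2 : 2*j/2 = j := by omega
  have h3 : 2*j % 2 = 0 := by omega
  unfold scs1A
  rw [if_pos h1, h2, h3]
  rcases eq_or_ne j' j with rfl | hne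
  · simp
  · simp [show 3*j' ≠ 3*j by omega, show 3*j' ≠ 3*j+1 by omega, show 3*j' ≠ 3*j+2 by omega, hne]

private lemma aev1 (hj : j < k) : scs1A k K A (2*j) (3*j'+1) = 0 := by
  have h1 : 2*j < 2*k := by omega
  have h2 : 2*j/2 = j := by omega
  have h3 : 2*j % 2 = 0 := by omega
  unfold scs1A
  rw [if_pos h1, h2, h3]
  rcases eq_or_ne j' j with rfl | hne
  · simp
  · simp [show 3*j'+1 ≠ 3*j by omega, show 3*j'+1 ≠ 3*j+1 by omega, show 3*j'+1 ≠ 3*j+2 by omega, show 3*j' ≠ 3*j+1 by omega]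

private lemma aev2 (hj : j < k) : scs1A k K A (2*j) (3*j'+2) = if j' = j then 1 else 0 := by
  have h1 : 2*j < 2*k := by omega
  have h2 : 2*j/2 = j := by omega
  have h3 : 2*j % 2 = 0 := by omega
  unfold scs1A
  rw [if_pos h1, h2, h3]
  rcases eq_or_ne j' j with rfl | hne
  · simp
  · simp [show 3*j'+2 ≠ 3*j by omega, show 3*j'+2 ≠ 3*j+1 by omega, show 3*j'+2 ≠ 3*j+2 by omega, hne]

private lemma aevt (hj : j < k) : scs1A k K A (2*j) (3*k+m) = 0 := by
  have h1 : 2*j < 2*k := by omega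
  have h2 : 2*j/2 = j := by omega
  have h3 : 2*j % 2 = 0 := by omega
  unfold scs1A
  rw [if_pos h1, h2, h3]
  simp [show 3*k+m ≠ 3*j by omega, show 3*k+m ≠ 3*j+1 by omega, show 3*k+m ≠ 3*j+2 by omega]

private lemma aod0 (hj : j < k) : scs1A k K A (2*j+1) (3*j') = 0 := by
  have h1 : 2*j+1 < 2*k := by omega
  have h2 : (2*j+1)/2 = j := by omega
  have h3 : (2*j+1) % 2 = 1 := by omega
  unfold scs1A
  rw [if_pos h1, h2, h3]
  rcases eq_or_ne j' j with rfl | hne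
  · simp
  · simp [show 3*j' ≠ 3*j by omega, show 3*j' ≠ 3*j+1 by omega, show 3*j' ≠ 3*j+2 by omega]

private lemma aod1 (hj : j < k) : scs1A k K A (2*j+1) (3*j'+1) = if j' = j then 1 else 0 := by
  have h1 : 2*j+1 < 2*k := by omega
  have h2 : (2*j+1)/2 = j := by omega
  have h3 : (2*j+1) % 2 = 1 := by omega
  unfold scs1A
  rw [if_pos h1, h2, h3]
  rcases eq_or_ne j' j with rfl | hne
  · simp
  · simp [show 3*j'+1 ≠ 3*j by omega, show 3*j'+1 ≠ 3*j+1 by omega, show 3*j'+1 ≠ 3*j+2 by omega, show 3*j' ≠ 3*j+1 by omega, hne]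

private lemma aod2 (hj : j < k) : scs1A k K A (2*j+1) (3*j'+2) = if j' = j then 1 else 0 := by
  have h1 : 2*j+1 < 2*k := by omega
  have h2 : (2*j+1)/2 = j := by omega
  have h3 : (2*j+1) % 2 = 1 := by omega
  unfold scs1A
  rw [if_pos h1, h2, h3]
  rcases eq_or_ne j' j with rfl | hne
  · simp
  · simp [show 3*j'+2 ≠ 3*j by omega, show 3*j'+2 ≠ 3*j+1 by omega, show 3*j'+2 ≠ 3*j+2 by omega, hne]

private lemma aodt (hj : j < k) : scs1A k K A (2*j+1) (3*k+m) = 0 := by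
  have h1 : 2*j+1 < 2*k := by omega
  have h2 : (2*j+1)/2 = j := by omega
  have h3 : (2*j+1) % 2 = 1 := by omega
  unfold scs1A
  rw [if_pos h1, h2, h3]
  simp [show 3*k+m ≠ 3*j by omega, show 3*k+m ≠ 3*j+1 by omega, show 3*k+m ≠ 3*j+2 by omega]

private lemma aen0 (hj' : j' < k) : scs1A k K A (2*k+i) (3*j') = if A i j' = 1 then 1 else 0 := by
  have h1 : ¬(2*k+i < 2*k) := by omega
  have h2 : 3*j' < 3*k := by omega
  have h3 : (3*j') % 3 = 0 := by omega
  have h4 : (3*j')/3 = j' := by omega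
  have h5 : 2*k+i-2*k = i := by omega
  unfold scs1A
  rw [if_neg h1, if_pos h2, if_pos h3, h4, h5]

private lemma aen1 (hj' : j' < k) :
    scs1A k K A (2*k+i) (3*j'+1) = if A i j' = K then K/2 else if A i j' = 2 then 1 else 0 := by
  have h1 : ¬(2*k+i < 2*k) := by omega
  have h2 : 3*j'+1 < 3*k := by omega
  have h3 : ¬((3*j'+1) % 3 = 0) := by omega
  have h3' : (3*j'+1) % 3 = 1 := by omega
  have h4 : (3*j'+1)/3 = j' := by omega
  have h5 : 2*k+i-2*k = i := by omega
  unfold scs1A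
  rw [if_neg h1, if_pos h2, if_neg h3, if_pos h3', h4, h5]

private lemma aen2 (hj' : j' < k) : scs1A k K A (2*k+i) (3*j'+2) = 0 := by
  have h1 : ¬(2*k+i < 2*k) := by omega
  have h2 : 3*j'+2 < 3*k := by omega
  have h3 : ¬((3*j'+2) % 3 = 0) := by omega
  have h3' : ¬((3*j'+2) % 3 = 1) := by omega
  unfold scs1A
  rw [if_neg h1, if_pos h2, if_neg h3, if_neg h3']

private lemma aent : scs1A k K A (2*k+i) (3*k+m) = A i (k+m) := by
  have h1 : ¬(2*k+i < 2*k) := by omega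
  have h2 : ¬(3*k+m < 3*k) := by omega
  have h5 : 2*k+i-2*k = i := by omega
  have h6 : 3*k+m-2*k = k+m := by omega
  unfold scs1A
  rw [if_neg h1, if_neg h2, h5, h6]

private lemma bev0 (hj : j < k) : scs1B k B (2*j) (3*j') = 0 := by
  have h1 : 2*j < 2*k := by omega
  have h2 : 2*j/2 = j := by omega
  have h3 : 2*j % 2 = 0 := by omega
  unfold scs1B
  rw [if_pos h1, h2, h3]
  rcases eq_or_ne j' j with rfl | hne
  · simp
  · simp [show 3*j' ≠ 3*j by omega, show 3*j' ≠ 3*j+1 by omega]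

private lemma bev1 (hj : j < k) : scs1B k B (2*j) (3*j'+1) = if j' = j then 1 else 0 := by
  have h1 : 2*j < 2*k := by omega
  have h2 : 2*j/2 = j := by omega
  have h3 : 2*j % 2 = 0 := by omega
  unfold scs1B
  rw [if_pos h1, h2, h3]
  rcases eq_or_ne j' j with rfl | hne
  · simp
  · simp [show 3*j'+1 ≠ 3*j by omega, show 3*j'+1 ≠ 3*j+1 by omega, hne]

private lemma bev2 (hj : j < k) : scs1B k B (2*j) (3*j'+2) = 0 := by
  have h1 : 2*j < 2*k := by omega
  have h2 : 2*j/2 = j := by omega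
  have h3 : 2*j % 2 = 0 := by omega
  unfold scs1B
  rw [if_pos h1, h2, h3]
  simp [show 3*j'+2 ≠ 3*j by omega, show 3*j'+2 ≠ 3*j+1 by omega]

private lemma bevt (hj : j < k) : scs1B k B (2*j) (3*k+m) = 0 := by
  have h1 : 2*j < 2*k := by omega
  have h2 : 2*j/2 = j := by omega
  have h3 : 2*j % 2 = 0 := by omega
  unfold scs1B
  rw [if_pos h1, h2, h3]
  simp [show 3*k+m ≠ 3*j by omega, show 3*k+m ≠ 3*j+1 by omega]

private lemma bod0 (hj : j < k) : scs1B k B (2*j+1) (3*j') = if j' = j then 1 else 0 := by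
  have h1 : 2*j+1 < 2*k := by omega
  have h2 : (2*j+1)/2 = j := by omega
  have h3 : (2*j+1) % 2 = 1 := by omega
  unfold scs1B
  rw [if_pos h1, h2, h3]
  rcases eq_or_ne j' j with rfl | hne
  · simp
  · simp [show 3*j' ≠ 3*j by omega, show 3*j' ≠ 3*j+1 by omega, hne]

private lemma bod1 (hj : j < k) : scs1B k B (2*j+1) (3*j'+1) = 0 := by
  have h1 : 2*j+1 < 2*k := by omega
  have h2 : (2*j+1)/2 = j := by omega
  have h3 : (2*j+1) % 2 = 1 := by omega
  unfold scs1B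
  rw [if_pos h1, h2, h3]
  rcases eq_or_ne j' j with rfl | hne
  · simp
  · simp [show 3*j'+1 ≠ 3*j by omega, show 3*j'+1 ≠ 3*j+1 by omega]

private lemma bod2 (hj : j < k) : scs1B k B (2*j+1) (3*j'+2) = 0 := by
  have h1 : 2*j+1 < 2*k := by omega
  have h2 : (2*j+1)/2 = j := by omega
  have h3 : (2*j+1) % 2 = 1 := by omega
  unfold scs1B
  rw [if_pos h1, h2, h3]
  simp [show 3*j'+2 ≠ 3*j by omega, show 3*j'+2 ≠ 3*j+1 by omega]

private lemma bodt (hj : j < k) : scs1B k B (2*j+1) (3*k+m) = 0 := by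
  have h1 : 2*j+1 < 2*k := by omega
  have h2 : (2*j+1)/2 = j := by omega
  have h3 : (2*j+1) % 2 = 1 := by omega
  unfold scs1B
  rw [if_pos h1, h2, h3]
  simp [show 3*k+m ≠ 3*j by omega, show 3*k+m ≠ 3*j+1 by omega]

private lemma ben0 (hj' : j' < k) : scs1B k B (2*k+i) (3*j') = 0 := by
  have h1 : ¬(2*k+i < 2*k) := by omega
  have h2 : 3*j' < 3*k := by omega
  have h3 : ¬((3*j') % 3 = 2) := by omega
  unfold scs1B
  rw [if_neg h1, if_pos h2, if_neg h3]

private lemma ben1 (hj' : j' < k) : scs1B k B (2*k+i) (3*j'+1) = 0 := by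
  have h1 : ¬(2*k+i < 2*k) := by omega
  have h2 : 3*j'+1 < 3*k := by omega
  have h3 : ¬((3*j'+1) % 3 = 2) := by omega
  unfold scs1B
  rw [if_neg h1, if_pos h2, if_neg h3]

private lemma ben2 (hj' : j' < k) : scs1B k B (2*k+i) (3*j'+2) = B i j' := by
  have h1 : ¬(2*k+i < 2*k) := by omega
  have h2 : 3*j'+2 < 3*k := by omega
  have h3 : (3*j'+2) % 3 = 2 := by omega
  have h4 : (3*j'+2)/3 = j' := by omega
  have h5 : 2*k+i-2*k = i := by omega
  unfold scs1B
  rw [if_neg h1, if_pos h2, if_pos h3, h4, h5]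

private lemma bent : scs1B k B (2*k+i) (3*k+m) = B i (k+m) := by
  have h1 : ¬(2*k+i < 2*k) := by omega
  have h2 : ¬(3*k+m < 3*k) := by omega
  have h5 : 2*k+i-2*k = i := by omega
  have h6 : 3*k+m-2*k = k+m := by omega
  unfold scs1B
  rw [if_neg h1, if_neg h2, h5, h6]

end entries

private noncomputable def Ue (k nc : ℕ) (K : ℝ) (A : ℕ → ℕ → ℝ) (y : ℕ → ℝ) (i : ℕ) : ℝ :=
  (∑ j ∈ range k, ((if A i j = 1 then y (3*j) else 0) +
    (if A i j = K then K/2 * y (3*j+1) else if A i j = 2 then y (3*j+1) else 0))) +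
  ∑ m ∈ range (nc - k), A i (k+m) * y (3*k+m)

private noncomputable def Ve (k nr : ℕ) (B : ℕ → ℕ → ℝ) (x : ℕ → ℝ) (j : ℕ) : ℝ :=
  ∑ i ∈ range nr, x (2*k+i) * B i j

private lemma Rp_even (k nc : ℕ) (K : ℝ) (A : ℕ → ℕ → ℝ) (y : ℕ → ℝ) (hk : k ≤ nc)
    {j : ℕ} (hj : j < k) :
    ∑ c ∈ range (2*k+nc), scs1A k K A (2*j) c * y c = 2 * y (3*j) + y (3*j+2) := by
  rw [show 2*k+nc = 3*k+(nc-k) from by omega, Finset.sum_range_add, sum_range_three_mul]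
  have h1 : ∀ j' ∈ range k,
      (scs1A k K A (2*j) (3*j') * y (3*j') + scs1A k K A (2*j) (3*j'+1) * y (3*j'+1)
        + scs1A k K A (2*j) (3*j'+2) * y (3*j'+2))
      = if j' = j then 2 * y (3*j) + y (3*j+2) else 0 := by
    intro j' _
    rw [aev0 K A hj, aev1 K A hj, aev2 K A hj]
    rcases eq_or_ne j' j with rfl | hne
    · simp
    · simp [hne]
  have h2 : ∀ m ∈ range (nc-k), scs1A k K A (2*j) (3*k+m) * y (3*k+m) = 0 := by
    intro m _; rw [aevt K A hj]; ring
  rw [Finset.sum_congr rfl h1, Finset.sum_congr rfl h2,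
    Finset.sum_ite_eq' (range k) j (fun _ => 2 * y (3*j) + y (3*j+2)),
    if_pos (Finset.mem_range.mpr hj), Finset.sum_const_zero, add_zero]

private lemma Rp_odd (k nc : ℕ) (K : ℝ) (A : ℕ → ℕ → ℝ) (y : ℕ → ℝ) (hk : k ≤ nc)
    {j : ℕ} (hj : j < k) :
    ∑ c ∈ range (2*k+nc), scs1A k K A (2*j+1) c * y c = y (3*j+1) + y (3*j+2) := by
  rw [show 2*k+nc = 3*k+(nc-k) from by omega, Finset.sum_range_add, sum_range_three_mul]
  have h1 : ∀ j' ∈ range k,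
      (scs1A k K A (2*j+1) (3*j') * y (3*j') + scs1A k K A (2*j+1) (3*j'+1) * y (3*j'+1)
        + scs1A k K A (2*j+1) (3*j'+2) * y (3*j'+2))
      = if j' = j then y (3*j+1) + y (3*j+2) else 0 := by
    intro j' _
    rw [aod0 K A hj, aod1 K A hj, aod2 K A hj]
    rcases eq_or_ne j' j with rfl | hne
    · simp
    · simp [hne]
  have h2 : ∀ m ∈ range (nc-k), scs1A k K A (2*j+1) (3*k+m) * y (3*k+m) = 0 := by
    intro m _; rw [aodt K A hj]; ring
  rw [Finset.sum_congr rfl h1, Finset.sum_congr rfl h2,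
    Finset.sum_ite_eq' (range k) j (fun _ => y (3*j+1) + y (3*j+2)),
    if_pos (Finset.mem_range.mpr hj), Finset.sum_const_zero, add_zero]

private lemma Rp_enc (k nc : ℕ) (K : ℝ) (A : ℕ → ℕ → ℝ) (y : ℕ → ℝ) (hk : k ≤ nc) (i : ℕ) :
    ∑ c ∈ range (2*k+nc), scs1A k K A (2*k+i) c * y c = Ue k nc K A y i := by
  rw [show 2*k+nc = 3*k+(nc-k) from by omega, Finset.sum_range_add, sum_range_three_mul]
  unfold Ue
  congr 1
  · apply Finset.sum_congr rfl
    intro j' hj'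
    have hj'k : j' < k := Finset.mem_range.mp hj'
    rw [aen0 K A hj'k, aen1 K A hj'k, aen2 K A hj'k]
    split_ifs <;> ring
  · apply Finset.sum_congr rfl
    intro m _
    rw [aent]

private lemma Cp_q (k nr : ℕ) (B : ℕ → ℕ → ℝ) (x : ℕ → ℝ) {j : ℕ} (hj : j < k) :
    ∑ r ∈ range (2*k+nr), x r * scs1B k B r (3*j) = x (2*j+1) := by
  rw [Finset.sum_range_add, sum_range_two_mul]
  have h1 : ∀ j' ∈ range k,
      (x (2*j') * scs1B k B (2*j') (3*j) + x (2*j'+1) * scs1B k B (2*j'+1) (3*j))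
      = if j' = j then x (2*j+1) else 0 := by
    intro j' hj'
    have hj'k : j' < k := Finset.mem_range.mp hj'
    rw [bev0 B hj'k, bod0 B hj'k]
    rcases eq_or_ne j j' with rfl | hne
    · simp
    · simp [hne.symm, hne]
  have h2 : ∀ i ∈ range nr, x (2*k+i) * scs1B k B (2*k+i) (3*j) = 0 := by
    intro i _; rw [ben0 B hj]; ring
  rw [Finset.sum_congr rfl h1, Finset.sum_congr rfl h2,
    Finset.sum_ite_eq' (range k) j (fun _ => x (2*j+1)),
    if_pos (Finset.mem_range.mpr hj), Finset.sum_const_zero, add_zero]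

private lemma Cp_p (k nr : ℕ) (B : ℕ → ℕ → ℝ) (x : ℕ → ℝ) {j : ℕ} (hj : j < k) :
    ∑ r ∈ range (2*k+nr), x r * scs1B k B r (3*j+1) = x (2*j) := by
  rw [Finset.sum_range_add, sum_range_two_mul]
  have h1 : ∀ j' ∈ range k,
      (x (2*j') * scs1B k B (2*j') (3*j+1) + x (2*j'+1) * scs1B k B (2*j'+1) (3*j+1))
      = if j' = j then x (2*j) else 0 := by
    intro j' hj'
    have hj'k : j' < k := Finset.mem_range.mp hj'
    rw [bev1 B hj'k, bod1 B hj'k]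
    rcases eq_or_ne j j' with rfl | hne
    · simp
    · simp [hne.symm, hne]
  have h2 : ∀ i ∈ range nr, x (2*k+i) * scs1B k B (2*k+i) (3*j+1) = 0 := by
    intro i _; rw [ben1 B hj]; ring
  rw [Finset.sum_congr rfl h1, Finset.sum_congr rfl h2,
    Finset.sum_ite_eq' (range k) j (fun _ => x (2*j)),
    if_pos (Finset.mem_range.mpr hj), Finset.sum_const_zero, add_zero]

private lemma Cp_v (k nr : ℕ) (B : ℕ → ℕ → ℝ) (x : ℕ → ℝ) {j : ℕ} (hj : j < k) :
    ∑ r ∈ range (2*k+nr), x r * scs1B k B r (3*j+2) = Ve k nr B x j := by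
  rw [Finset.sum_range_add, sum_range_two_mul]
  have h1 : ∀ j' ∈ range k,
      (x (2*j') * scs1B k B (2*j') (3*j+2) + x (2*j'+1) * scs1B k B (2*j'+1) (3*j+2)) = 0 := by
    intro j' hj'
    have hj'k : j' < k := Finset.mem_range.mp hj'
    rw [bev2 B hj'k, bod2 B hj'k]; ring
  have h2 : ∀ i ∈ range nr, x (2*k+i) * scs1B k B (2*k+i) (3*j+2) = x (2*k+i) * B i j := by
    intro i _; rw [ben2 B hj]
  rw [Finset.sum_congr rfl h1, Finset.sum_congr rfl h2, Finset.sum_const_zero, zero_add]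
  rfl

private lemma Cp_t (k nr : ℕ) (B : ℕ → ℕ → ℝ) (x : ℕ → ℝ) (m : ℕ) :
    ∑ r ∈ range (2*k+nr), x r * scs1B k B r (3*k+m) = Ve k nr B x (k+m) := by
  rw [Finset.sum_range_add, sum_range_two_mul]
  have h1 : ∀ j' ∈ range k,
      (x (2*j') * scs1B k B (2*j') (3*k+m) + x (2*j'+1) * scs1B k B (2*j'+1) (3*k+m)) = 0 := by
    intro j' hj'
    have hj'k : j' < k := Finset.mem_range.mp hj'
    rw [bevt B hj'k, bodt B hj'k]; ring
  have h2 : ∀ i ∈ range nr, x (2*k+i) * scs1B k B (2*k+i) (3*k+m) = x (2*k+i) * B i (k+m) := by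
    intro i _; rw [bent]
  rw [Finset.sum_congr rfl h1, Finset.sum_congr rfl h2, Finset.sum_const_zero, zero_add]
  rfl

set_option maxHeartbeats 2000000 in
/-- Theorem: if `4 ≤ K ≤ 8`, `0 ≤ ε < 1/(240 n²)` and `(x*, y*)` is an `ε`-WSNE of
`(A', B')`, then the renormalizations defining the translated profile `(x, y)` are
valid and `(x, y)` is a `(3950·n²·ε)`-WSNE of `(A, B)`. -/
theorem stmt7 (n nr nc k : ℕ) (K ε : ℝ) (A B : ℕ → ℕ → ℝ) (xstar ystar : ℕ → ℝ)
    (hK4 : 4 ≤ K) (hK8 : K ≤ 8)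
    (hin : Scs1Input n nr nc k K A B)
    (hε0 : 0 ≤ ε) (hε : ε < 1 / (240 * (n:ℝ)^2))
    (hwsne : IsWSNE (2*k+nr) (2*k+nc) (scs1A k K A) (scs1B k B) xstar ystar ε) :
    (0 < ∑ i ∈ range nr, xstar (2*k+i)) ∧
    (0 < ∑ j ∈ range nc, scs1Y k ε ystar j) ∧
    IsWSNE nr nc A B
      (fun i => xstar (2*k+i) / ∑ i' ∈ range nr, xstar (2*k+i'))
      (fun j => scs1Y k ε ystar j / ∑ j' ∈ range nc, scs1Y k ε ystar j')
      (3950 * (n:ℝ)^2 * ε) := by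
  classical
  obtain ⟨hnrn, hncn, hknc, hA, hB, hArow, hAcol, hBrow, hBcol, hgad, hnoK⟩ := hin
  obtain ⟨hx0, hxz, hx1, hy0, hyz, hy1, hrow, hcol⟩ := hwsne
  have hN1 : (1:ℝ) ≤ (n:ℝ) := by
    rcases Nat.eq_zero_or_pos n with h | h
    · subst h; norm_num at hε; linarith
    · exact_mod_cast h
  have hN0 : (0:ℝ) < (n:ℝ) := by linarith
  have hε1 : ε * (240 * (n:ℝ)^2) < 1 := by
    rw [lt_div_iff₀ (by positivity)] at hε; exact hε
  have hεN : ε * (n:ℝ) < 1/240 := by nlinarith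
  have hε4N : ε * (4*(n:ℝ)) < 1 := by nlinarith
  have hεlt : ε < 1/(4*(n:ℝ)) := by
    rw [lt_div_iff₀ (by positivity)]; linarith
  have hnr1 : 1 ≤ nr := by
    by_contra h
    have hnr0 : nr = 0 := by omega
    rcases Nat.eq_zero_or_pos k with hk | hk
    · rw [hnr0, hk] at hx1; simp at hx1
    · have h1 := (hgad 0 hk).1
      rw [hnr0] at h1; simp at h1
  have hnc1 : 1 ≤ nc := by
    by_contra h
    have hnc0 : nc = 0 := by omega
    have hk0 : k = 0 := by omega
    rw [hnc0, hk0] at hy1; simp at hy1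
  have hkn : k ≤ n := by omega
  have hkRN : (k:ℝ) ≤ (n:ℝ) := by exact_mod_cast hkn
  have hncR1 : (1:ℝ) ≤ (nc:ℝ) := by exact_mod_cast hnc1
  have hncN : (nc:ℝ) ≤ (n:ℝ) := by exact_mod_cast hncn
  -- mass splits
  have hxsplit : (∑ r ∈ range (2*k), xstar r) + (∑ i ∈ range nr, xstar (2*k+i)) = 1 := by
    rw [← Finset.sum_range_add]; exact hx1
  have hysplit : (∑ j ∈ range k, (ystar (3*j) + ystar (3*j+1) + ystar (3*j+2)))
      + (∑ m ∈ range (nc-k), ystar (3*k+m)) = 1 := by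
    rw [← sum_range_three_mul, ← Finset.sum_range_add,
      show 3*k+(nc-k) = 2*k+nc from by omega]
    exact hy1
  have hXe0' : 0 ≤ ∑ i ∈ range nr, xstar (2*k+i) :=
    Finset.sum_nonneg fun i _ => hx0 _
  -- a column with payoff at least 1/(4n)
  have hwit : ∃ cs, cs < 2*k+nc ∧
      1/(4*(n:ℝ)) ≤ ∑ r ∈ range (2*k+nr), xstar r * scs1B k B r cs := by
    by_cases hxe2 : (1:ℝ)/2 ≤ ∑ i ∈ range nr, xstar (2*k+i)
    · have hsum : (∑ i ∈ range nr, xstar (2*k+i)) ≤ ∑ j ∈ range nc, Ve k nr B xstar j := by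
        unfold Ve
        rw [Finset.sum_comm]
        apply Finset.sum_le_sum
        intro i hi
        obtain ⟨j0, hj0, hB1⟩ := hBrow i (Finset.mem_range.mp hi)
        have h1 : (1:ℝ) ≤ ∑ j ∈ range nc, B i j := by
          have h2 := Finset.single_le_sum (f := fun j => B i j)
            (fun j hj => (hB i (Finset.mem_range.mp hi) j (Finset.mem_range.mp hj)).1)
            (Finset.mem_range.mpr hj0)
          linarith
        calc xstar (2*k+i) = xstar (2*k+i) * 1 := by ring
          _ ≤ xstar (2*k+i) * ∑ j ∈ range nc, B i j :=
              mul_le_mul_of_nonneg_left h1 (hx0 _)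
          _ = ∑ j ∈ range nc, xstar (2*k+i) * B i j := by rw [Finset.mul_sum]
      have hex : ∃ j ∈ range nc,
          (∑ i ∈ range nr, xstar (2*k+i))/(nc:ℝ) ≤ Ve k nr B xstar j := by
        apply Finset.exists_le_of_sum_le ⟨0, Finset.mem_range.mpr hnc1⟩
        rw [Finset.sum_const, Finset.card_range, nsmul_eq_mul,
          mul_div_cancel₀ _ (by positivity : (nc:ℝ) ≠ 0)]
        exact hsum
      obtain ⟨j0, hj0m, hj0⟩ := hex
      have hj0nc := Finset.mem_range.mp hj0m
      have hval : 1/(4*(n:ℝ)) ≤ Ve k nr B xstar j0 := by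
        have h1 : 1/(4*(n:ℝ)) ≤ (∑ i ∈ range nr, xstar (2*k+i))/(nc:ℝ) := by
          rw [div_le_div_iff₀ (by positivity) (by positivity)]
          nlinarith
        linarith
      by_cases hjk : j0 < k
      · exact ⟨3*j0+2, by omega, by rw [Cp_v k nr B xstar hjk]; exact hval⟩
      · refine ⟨2*k+j0, by omega, ?_⟩
        rw [show 2*k+j0 = 3*k+(j0-k) from by omega, Cp_t k nr B xstar (j0-k),
          show k+(j0-k) = j0 from by omega]
        exact hval
    · push_neg at hxe2
      have hG : (1:ℝ)/2 < ∑ r ∈ range (2*k), xstar r := by linarith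
      have hk0 : 0 < k := by
        by_contra hk
        have hk00 : k = 0 := by omega
        rw [hk00] at hG; simp at hG; linarith
      have hkRpos : (0:ℝ) < (k:ℝ) := by exact_mod_cast hk0
      have hex : ∃ r ∈ range (2*k), 1/(4*(k:ℝ)) ≤ xstar r := by
        by_contra hcon
        push_neg at hcon
        have hlt : ∑ r ∈ range (2*k), xstar r < ∑ r ∈ range (2*k), 1/(4*(k:ℝ)) :=
          Finset.sum_lt_sum_of_nonempty ⟨0, by simp; omega⟩ hcon
        rw [Finset.sum_const, Finset.card_range, nsmul_eq_mul] at hlt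
        push_cast at hlt
        have he : (2*(k:ℝ)) * (1/(4*(k:ℝ))) = 1/2 := by field_simp; ring
        linarith
      obtain ⟨r, hrm, hr⟩ := hex
      have hrk := Finset.mem_range.mp hrm
      have hj2 : r/2 < k := by omega
      have h4k : 1/(4*(n:ℝ)) ≤ 1/(4*(k:ℝ)) := by
        apply one_div_le_one_div_of_le (by positivity)
        linarith
      rcases Nat.even_or_odd r with he | ho
      · obtain ⟨s, hs⟩ := he
        have hre : r = 2*(r/2) := by omega
        refine ⟨3*(r/2)+1, by omega, ?_⟩
        rw [Cp_p k nr B xstar hj2, ← hre]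
        linarith
      · obtain ⟨s, hs⟩ := ho
        have hro : r = 2*(r/2)+1 := by omega
        refine ⟨3*(r/2), by omega, ?_⟩
        rw [Cp_q k nr B xstar hj2, ← hro]
        linarith
  obtain ⟨cs, hcs_lt, hcs⟩ := hwit
  -- gadget facts
  have gadA : ∀ j, j < k → 0 < ystar (3*j) → 0 < xstar (2*j+1) := by
    intro j hj ha
    have h := hcol (3*j) (by omega) ha cs hcs_lt
    rw [Cp_q k nr B xstar hj] at h
    linarith
  have gadB : ∀ j, j < k → 0 < ystar (3*j+1) → 0 < xstar (2*j) := by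
    intro j hj hb
    have h := hcol (3*j+1) (by omega) hb cs hcs_lt
    rw [Cp_p k nr B xstar hj] at h
    linarith
  have gadArow : ∀ j, j < k → 0 < ystar (3*j) → ∀ r', r' < 2*k+nr →
      (∑ c ∈ range (2*k+nc), scs1A k K A (2*j+1) c * ystar c) ≥
      (∑ c ∈ range (2*k+nc), scs1A k K A r' c * ystar c) - ε :=
    fun j hj ha => hrow (2*j+1) (by omega) (gadA j hj ha)
  have gadBrow : ∀ j, j < k → 0 < ystar (3*j+1) → ∀ r', r' < 2*k+nr →
      (∑ c ∈ range (2*k+nc), scs1A k K A (2*j) c * ystar c) ≥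
      (∑ c ∈ range (2*k+nc), scs1A k K A r' c * ystar c) - ε :=
    fun j hj hb => hrow (2*j) (by omega) (gadB j hj hb)
  have hbal : ∀ j, j < k → ystar (3*j+1) ≤ 2 * ystar (3*j) + ε := by
    intro j hj
    rcases eq_or_lt_of_le (hy0 (3*j+1)) with hb | hb
    · have := hy0 (3*j); linarith
    · have h := gadBrow j hj hb (2*j+1) (by omega)
      rw [Rp_even k nc K A ystar hknc hj, Rp_odd k nc K A ystar hknc hj] at h
      linarith
  have h2a : ∀ j, j < k → 0 < ystar (3*j) → 2 * ystar (3*j) - ε ≤ ystar (3*j+1) := by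
    intro j hj ha
    have h := gadArow j hj ha (2*j) (by omega)
    rw [Rp_even k nc K A ystar hknc hj, Rp_odd k nc K A ystar hknc hj] at h
    linarith
  have hb2a : ∀ j, j < k → |ystar (3*j+1) - 2 * ystar (3*j)| ≤ ε := by
    intro j hj
    rw [abs_le]
    constructor
    · rcases eq_or_lt_of_le (hy0 (3*j)) with ha | ha
      · have := hy0 (3*j+1); linarith
      · have := h2a j hj ha; linarith
    · have := hbal j hj; linarith
  have hKrow : ∀ j, j < k → ∃ i, i < nr ∧ A i j = K := by
    intro j hj
    have h1 := (hgad j hj).1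
    have h2 : ((range nr).filter fun i => A i j = K).Nonempty := by
      rw [← Finset.card_pos, h1]; norm_num
    obtain ⟨i, hi⟩ := h2
    rw [Finset.mem_filter, Finset.mem_range] at hi
    exact ⟨i, hi.1, hi.2⟩
  have hKne1 : K ≠ 1 := by intro h; rw [h] at hK4; linarith
  have hUeK : ∀ j, j < k → ∀ i, i < nr → A i j = K →
      K/2 * ystar (3*j+1) ≤ Ue k nc K A ystar i := by
    intro j hj i hi hAK
    unfold Ue
    have hterm : ∀ j' ∈ range k, (0:ℝ) ≤ (if A i j' = 1 then ystar (3*j') else 0) +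
        (if A i j' = K then K/2 * ystar (3*j'+1) else if A i j' = 2 then ystar (3*j'+1) else 0) := by
      intro j' _
      have h1 := hy0 (3*j')
      have h2 := hy0 (3*j'+1)
      have hK2 : (0:ℝ) ≤ K/2 := by linarith
      split_ifs <;> nlinarith [mul_nonneg hK2 h2]
    have h1 : K/2 * ystar (3*j+1) ≤ (if A i j = 1 then ystar (3*j) else 0) +
        (if A i j = K then K/2 * ystar (3*j+1) else if A i j = 2 then ystar (3*j+1) else 0) := by
      rw [hAK, if_neg hKne1, if_pos rfl]
      linarith [hy0 (3*j)]
    have h2 := Finset.single_le_sum hterm (Finset.mem_range.mpr hj)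
    have h3 : (0:ℝ) ≤ ∑ m ∈ range (nc-k), A i (k+m) * ystar (3*k+m) :=
      Finset.sum_nonneg fun m hm => mul_nonneg
        (hA i hi (k+m) (by have := Finset.mem_range.mp hm; omega)).1 (hy0 _)
    linarith
  have hkey : ∀ j, j < k → 11*ε ≤ ystar (3*j) + ystar (3*j+1) → 0 < ystar (3*j) →
      ∀ c', c' < 2*k+nc → Ve k nr B xstar j ≥
        (∑ r ∈ range (2*k+nr), xstar r * scs1B k B r c') - ε := by
    intro j hj hτ ha
    obtain ⟨i, hi, hAK⟩ := hKrow j hj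
    have h1 := gadArow j hj ha (2*k+i) (by omega)
    rw [Rp_odd k nc K A ystar hknc hj, Rp_enc k nc K A ystar hknc i] at h1
    have h2 := hUeK j hj i hi hAK
    have hb0 := hy0 (3*j+1)
    have hKb : 2 * ystar (3*j+1) ≤ K/2 * ystar (3*j+1) := by nlinarith
    have hcb : ystar (3*j+2) ≥ ystar (3*j+1) - ε := by linarith
    have hblb := h2a j hj ha
    have hb7 : 7*ε ≤ ystar (3*j+1) := by linarith
    have hcpos : 0 < ystar (3*j+2) := by
      rcases eq_or_lt_of_le hε0 with hε' | hε'
      · linarith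
      · linarith
    intro c' hc'
    have h := hcol (3*j+2) (by omega) hcpos c' hc'
    rw [Cp_v k nr B xstar hj] at h
    exact h
  -- lower bound on the mass of the encoding rows
  have hXe : 1/(33*(n:ℝ)) ≤ ∑ i ∈ range nr, xstar (2*k+i) := by
    have hVwit : ∃ j, j < nc ∧ 1/(4*(n:ℝ)) - ε ≤ Ve k nr B xstar j := by
      by_cases hyt : ∃ m, m < nc - k ∧ 0 < ystar (3*k+m)
      · obtain ⟨m, hm, hym⟩ := hyt
        have h := hcol (3*k+m) (by omega) hym cs hcs_lt
        rw [Cp_t k nr B xstar m] at h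
        exact ⟨k+m, by omega, by linarith⟩
      · by_cases hyc : ∃ j, j < k ∧ 0 < ystar (3*j+2)
        · obtain ⟨j, hj, hyj⟩ := hyc
          have h := hcol (3*j+2) (by omega) hyj cs hcs_lt
          rw [Cp_v k nr B xstar hj] at h
          exact ⟨j, by omega, by linarith⟩
        · push_neg at hyt hyc
          have hc0 : ∀ j, j < k → ystar (3*j+2) = 0 := fun j hj =>
            le_antisymm (by simpa using (hyc j hj)) (hy0 _)
          have ht0 : ∀ m, m < nc-k → ystar (3*k+m) = 0 := fun m hm =>
            le_antisymm (by simpa using (hyt m hm)) (hy0 _)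
          have hab1 : ∑ j ∈ range k, (ystar (3*j) + ystar (3*j+1)) = 1 := by
            have e1 : ∑ j ∈ range k, (ystar (3*j) + ystar (3*j+1) + ystar (3*j+2))
                = ∑ j ∈ range k, (ystar (3*j) + ystar (3*j+1)) := by
              apply Finset.sum_congr rfl
              intro j hj
              rw [hc0 j (Finset.mem_range.mp hj)]; ring
            have e2 : ∑ m ∈ range (nc-k), ystar (3*k+m) = 0 :=
              Finset.sum_eq_zero fun m hm => ht0 m (Finset.mem_range.mp hm)
            rw [e1, e2] at hysplit; linarith
          have hk0 : 0 < k := by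
            by_contra hk
            have hk00 : k = 0 := by omega
            rw [hk00] at hab1; simp at hab1
          have hkRpos : (0:ℝ) < (k:ℝ) := by exact_mod_cast hk0
          have hex : ∃ j ∈ range k, 1/(k:ℝ) ≤ ystar (3*j) + ystar (3*j+1) := by
            apply Finset.exists_le_of_sum_le ⟨0, Finset.mem_range.mpr hk0⟩
            rw [Finset.sum_const, Finset.card_range, nsmul_eq_mul, hab1,
              mul_one_div, div_self (ne_of_gt hkRpos)]
          obtain ⟨j, hjm, hjab⟩ := hex
          have hj := Finset.mem_range.mp hjm
          have h1k : 1/(n:ℝ) ≤ 1/(k:ℝ) := one_div_le_one_div_of_le hkRpos hkRN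
          have h11 : 11*ε ≤ ystar (3*j) + ystar (3*j+1) := by
            have h111 : 11*ε ≤ 1/(n:ℝ) := by
              rw [le_div_iff₀ hN0]; nlinarith
            linarith
          have hapos : 0 < ystar (3*j) := by
            have hbj := hbal j hj
            have hεn' : ε < 1/(n:ℝ) := by
              rw [lt_div_iff₀ hN0]; nlinarith
            nlinarith [hy0 (3*j), hy0 (3*j+1)]
          have h := hkey j hj h11 hapos cs hcs_lt
          exact ⟨j, by omega, by linarith⟩
    obtain ⟨j0, hj0, hV⟩ := hVwit
    have hVle : Ve k nr B xstar j0 ≤ 8 * ∑ i ∈ range nr, xstar (2*k+i) := by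
      have h1 : ∀ i ∈ range nr, xstar (2*k+i) * B i j0 ≤ xstar (2*k+i) * 8 := by
        intro i hi
        apply mul_le_mul_of_nonneg_left _ (hx0 _)
        have := (hB i (Finset.mem_range.mp hi) j0 hj0).2
        linarith
      have h2 : Ve k nr B xstar j0 ≤ ∑ i ∈ range nr, xstar (2*k+i) * 8 :=
        Finset.sum_le_sum h1
      have h3 : ∑ i ∈ range nr, xstar (2*k+i) * 8
          = 8 * ∑ i ∈ range nr, xstar (2*k+i) := by
        rw [← Finset.sum_mul]; ring
      linarith
    rw [div_le_iff₀ (by positivity)]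
    have hXN : (1/(4*(n:ℝ)) - ε) * (n:ℝ)
        ≤ 8 * (∑ i ∈ range nr, xstar (2*k+i)) * (n:ℝ) :=
      mul_le_mul_of_nonneg_right (by linarith) hN0.le
    have h14 : (1/(4*(n:ℝ))) * (n:ℝ) = 1/4 := by field_simp
    rw [sub_mul, h14] at hXN
    nlinarith [hεN]
  have hXepos : 0 < ∑ i ∈ range nr, xstar (2*k+i) :=
    lt_of_lt_of_le (by positivity) hXe
  -- lower bound on the mass of the translated column strategy
  have hy'0 : ∀ j, 0 ≤ scs1Y k ε ystar j := by
    intro j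
    unfold scs1Y
    split_ifs
    · exact hy0 _
    · exact le_rfl
    · exact hy0 _
  have hYsplit : ∑ j ∈ range nc, scs1Y k ε ystar j
      = (∑ j ∈ range k, scs1Y k ε ystar j) + ∑ m ∈ range (nc-k), ystar (3*k+m) := by
    have h := Finset.sum_range_add (fun j => scs1Y k ε ystar j) k (nc-k)
    rw [show k+(nc-k) = nc from by omega] at h
    rw [h]
    congr 1
    apply Finset.sum_congr rfl
    intro m _
    unfold scs1Y
    rw [if_neg (by omega), show 2*k+(k+m) = 3*k+m from by omega]
  have haby : ∀ j, j < k →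
      ystar (3*j) + ystar (3*j+1) ≤ 3 * scs1Y k ε ystar j + 12*ε := by
    intro j hj
    unfold scs1Y
    rw [if_pos hj]
    by_cases hτ : 11*ε ≤ ystar (3*j) + ystar (3*j+1)
    · rw [if_pos hτ]
      have := hbal j hj
      linarith
    · rw [if_neg hτ]
      push_neg at hτ
      linarith
  have hsumab : ∑ j ∈ range k, (ystar (3*j) + ystar (3*j+1))
      ≤ 3*(∑ j ∈ range k, scs1Y k ε ystar j) + 12*(k:ℝ)*ε := by
    have h1 : ∑ j ∈ range k, (ystar (3*j) + ystar (3*j+1))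
        ≤ ∑ j ∈ range k, (3 * scs1Y k ε ystar j + 12*ε) :=
      Finset.sum_le_sum fun j hj => haby j (Finset.mem_range.mp hj)
    have h2 : ∑ j ∈ range k, (3 * scs1Y k ε ystar j + 12*ε)
        = 3*(∑ j ∈ range k, scs1Y k ε ystar j) + (k:ℝ)*(12*ε) := by
      rw [Finset.sum_add_distrib, ← Finset.mul_sum, Finset.sum_const,
        Finset.card_range, nsmul_eq_mul]
    rw [h2] at h1
    linarith
  have hy3 : ∑ j ∈ range k, (ystar (3*j) + ystar (3*j+1) + ystar (3*j+2))
      = ∑ j ∈ range k, (ystar (3*j) + ystar (3*j+1)) + ∑ j ∈ range k, ystar (3*j+2) := by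
    rw [← Finset.sum_add_distrib]
  have hSy0 : 0 ≤ ∑ j ∈ range k, scs1Y k ε ystar j :=
    Finset.sum_nonneg fun j _ => hy'0 j
  have hSt0 : 0 ≤ ∑ m ∈ range (nc-k), ystar (3*k+m) :=
    Finset.sum_nonneg fun m _ => hy0 _
  have hSc0 : 0 ≤ ∑ j ∈ range k, ystar (3*j+2) :=
    Finset.sum_nonneg fun j _ => hy0 _
  have hYtot0 : 0 ≤ ∑ j ∈ range nc, scs1Y k ε ystar j :=
    Finset.sum_nonneg fun j _ => hy'0 j
  have hkε : 12*(k:ℝ)*ε ≤ 12*(n:ℝ)*ε :=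
    mul_le_mul_of_nonneg_right (by linarith : 12*(k:ℝ) ≤ 12*(n:ℝ)) hε0
  have hSc : 1 - 3*(∑ j ∈ range nc, scs1Y k ε ystar j) - 12*(n:ℝ)*ε
      ≤ ∑ j ∈ range k, ystar (3*j+2) := by
    rw [hy3] at hysplit
    rw [hYsplit]
    linarith
  have hY : 1/(44*(n:ℝ)) ≤ ∑ j ∈ range nc, scs1Y k ε ystar j := by
    by_contra hY'
    push_neg at hY'
    have hYN : (∑ j ∈ range nc, scs1Y k ε ystar j) * (n:ℝ) < 1/44 := by
      have h := mul_lt_mul_of_pos_right hY' hN0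
      have e : (1/(44*(n:ℝ))) * (n:ℝ) = 1/44 := by field_simp
      rw [e] at h
      exact h
    have hYY : (∑ j ∈ range nc, scs1Y k ε ystar j)
        ≤ (∑ j ∈ range nc, scs1Y k ε ystar j) * (n:ℝ) := by
      have h := mul_le_mul_of_nonneg_left hN1 hYtot0
      rw [mul_one] at h
      exact h
    have hk0 : 0 < k := by
      by_contra hk
      have hk00 : k = 0 := by omega
      have hScz : ∑ j ∈ range k, ystar (3*j+2) = 0 := by rw [hk00]; simp
      rw [hScz] at hSc
      linarith
    have hkRpos : (0:ℝ) < (k:ℝ) := by exact_mod_cast hk0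
    -- a gadget with large c-mass
    have hex : ∃ j ∈ range k,
        (∑ j' ∈ range k, ystar (3*j'+2))/(k:ℝ) ≤ ystar (3*j+2) := by
      apply Finset.exists_le_of_sum_le ⟨0, Finset.mem_range.mpr hk0⟩
      rw [Finset.sum_const, Finset.card_range, nsmul_eq_mul,
        mul_div_cancel₀ _ (ne_of_gt hkRpos)]
    obtain ⟨j1, hj1m, hc1⟩ := hex
    have hj1 := Finset.mem_range.mp hj1m
    -- a played encoding row
    have hxi : ∃ i, i < nr ∧ 0 < xstar (2*k+i) := by
      by_contra hcon
      push_neg at hcon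
      have hz : ∑ i ∈ range nr, xstar (2*k+i) = 0 :=
        Finset.sum_eq_zero fun i hi =>
          le_antisymm (hcon i (Finset.mem_range.mp hi)) (hx0 _)
      rw [hz] at hXepos
      exact lt_irrefl 0 hXepos
    obtain ⟨i1, hi1, hx1p⟩ := hxi
    have hh := hrow (2*k+i1) (by omega) hx1p (2*j1) (by omega)
    rw [Rp_enc k nc K A ystar hknc i1, Rp_even k nc K A ystar hknc hj1] at hh
    -- upper bound for Ue
    have hUb : Ue k nc K A ystar i1
        ≤ 4*(∑ j ∈ range k, (ystar (3*j) + ystar (3*j+1)))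
          + 8*(∑ m ∈ range (nc-k), ystar (3*k+m)) := by
      unfold Ue
      have h1 : ∑ j ∈ range k, ((if A i1 j = 1 then ystar (3*j) else 0) +
          (if A i1 j = K then K/2 * ystar (3*j+1) else if A i1 j = 2 then ystar (3*j+1) else 0))
          ≤ ∑ j ∈ range k, 4*(ystar (3*j) + ystar (3*j+1)) := by
        apply Finset.sum_le_sum
        intro j hj
        have hy1' := hy0 (3*j)
        have hy2' := hy0 (3*j+1)
        have hKb := mul_le_mul_of_nonneg_right (show K/2 ≤ 4 by linarith) hy2'
        split_ifs <;> linarith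
      have h2 : ∑ m ∈ range (nc-k), A i1 (k+m) * ystar (3*k+m)
          ≤ ∑ m ∈ range (nc-k), 8 * ystar (3*k+m) := by
        apply Finset.sum_le_sum
        intro m hm
        have hmk : k + m < nc := by have := Finset.mem_range.mp hm; omega
        have hAb := hA i1 hi1 (k+m) hmk
        exact mul_le_mul_of_nonneg_right (by linarith [hAb.2]) (hy0 _)
      rw [← Finset.mul_sum] at h1 h2
      linarith
    -- chain of inequalities
    have ha1 := hy0 (3*j1)
    have hq : (∑ j' ∈ range k, ystar (3*j'+2))/(k:ℝ) - ε
        ≤ 4*(∑ j ∈ range k, (ystar (3*j) + ystar (3*j+1)))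
          + 8*(∑ m ∈ range (nc-k), ystar (3*k+m)) := by linarith
    have hdivkN : (∑ j' ∈ range k, ystar (3*j'+2))/(n:ℝ)
        ≤ (∑ j' ∈ range k, ystar (3*j'+2))/(k:ℝ) :=
      div_le_div_of_nonneg_left hSc0 hkRpos hkRN
    have hq2 : (∑ j' ∈ range k, ystar (3*j'+2))/(n:ℝ) - ε
        ≤ 20*(∑ j ∈ range nc, scs1Y k ε ystar j) + 48*(n:ℝ)*ε := by
      rw [hYsplit]
      rw [hYsplit] at hYY hYN
      linarith
    have hq3 : (∑ j' ∈ range k, ystar (3*j'+2)) - ε*(n:ℝ)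
        ≤ (20*(∑ j ∈ range nc, scs1Y k ε ystar j) + 48*(n:ℝ)*ε) * (n:ℝ) := by
      have h := mul_le_mul_of_nonneg_right hq2 hN0.le
      rw [sub_mul, div_mul_cancel₀ _ (ne_of_gt hN0)] at h
      exact h
    have e2 : (20*(∑ j ∈ range nc, scs1Y k ε ystar j) + 48*(n:ℝ)*ε)*(n:ℝ)
        = 20*((∑ j ∈ range nc, scs1Y k ε ystar j)*(n:ℝ)) + 48*(ε*(n:ℝ)^2) := by
      ring
    rw [e2] at hq3
    have hε48 : 48*(ε*(n:ℝ)^2) < 1/5 := by nlinarith [hε1]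
    linarith
  have hYpos : 0 < ∑ j ∈ range nc, scs1Y k ε ystar j :=
    lt_of_lt_of_le (by positivity) hY
  -- the encoded payoffs approximate the true payoffs
  have hUW : ∀ i, i < nr →
      |Ue k nc K A ystar i - ∑ j ∈ range nc, A i j * scs1Y k ε ystar j| ≤ 44*(n:ℝ)*ε := by
    intro i hi
    have hW : ∑ j ∈ range nc, A i j * scs1Y k ε ystar j
        = (∑ j ∈ range k, A i j * scs1Y k ε ystar j)
          + ∑ m ∈ range (nc-k), A i (k+m) * ystar (3*k+m) := by
      have h := Finset.sum_range_add (fun j => A i j * scs1Y k ε ystar j) k (nc-k)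
      rw [show k+(nc-k) = nc from by omega] at h
      rw [h]
      congr 1
      apply Finset.sum_congr rfl
      intro m _
      unfold scs1Y
      rw [if_neg (by omega), show 2*k+(k+m) = 3*k+m from by omega]
    rw [hW]
    unfold Ue
    rw [add_sub_add_right_eq_sub, ← Finset.sum_sub_distrib]
    have hterm : ∀ j ∈ range k,
        |((if A i j = 1 then ystar (3*j) else 0) +
          (if A i j = K then K/2 * ystar (3*j+1) else if A i j = 2 then ystar (3*j+1) else 0))
          - A i j * scs1Y k ε ystar j| ≤ 44*ε := by
      intro j hjm
      have hj := Finset.mem_range.mp hjm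
      have hcases := (hgad j hj).2.1 i hi
      have habs := abs_le.mp (hb2a j hj)
      have ha0 := hy0 (3*j)
      have hb0 := hy0 (3*j+1)
      unfold scs1Y
      rw [if_pos hj]
      have hK0 : (0:ℝ) ≠ K := by intro hh; rw [← hh] at hK4; norm_num at hK4
      have hK1 : (1:ℝ) ≠ K := by intro hh; rw [← hh] at hK4; norm_num at hK4
      have hK2 : (2:ℝ) ≠ K := by intro hh; rw [← hh] at hK4; norm_num at hK4
      by_cases hτ : 11*ε ≤ ystar (3*j) + ystar (3*j+1)
      · rw [if_pos hτ]
        rcases hcases with h0 | h1 | h2 | hKK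
        · rw [h0, if_neg (by norm_num), if_neg hK0, if_neg (by norm_num)]
          rw [show ((0:ℝ) + 0 - 0 * ystar (3*j)) = 0 from by ring, abs_zero]
          linarith
        · rw [h1, if_pos rfl, if_neg hK1, if_neg (by norm_num)]
          rw [show (ystar (3*j) + 0 - 1 * ystar (3*j)) = 0 from by ring, abs_zero]
          linarith
        · rw [h2, if_neg (by norm_num), if_neg hK2, if_pos rfl]
          rw [show ((0:ℝ) + ystar (3*j+1) - 2 * ystar (3*j))
            = ystar (3*j+1) - 2*ystar (3*j) from by ring]
          rw [abs_le]
          constructor <;> linarith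
        · rw [hKK, if_neg hKne1, if_pos rfl]
          rw [show ((0:ℝ) + K/2 * ystar (3*j+1) - K * ystar (3*j))
            = (K/2) * (ystar (3*j+1) - 2*ystar (3*j)) from by ring]
          rw [abs_mul, abs_of_nonneg (by linarith : (0:ℝ) ≤ K/2)]
          have h4 : |ystar (3*j+1) - 2*ystar (3*j)| ≤ ε := hb2a j hj
          have h5 := abs_nonneg (ystar (3*j+1) - 2*ystar (3*j))
          have h6 : K/2 * |ystar (3*j+1) - 2*ystar (3*j)| ≤ 4 * ε := by
            apply mul_le_mul (by linarith) h4 h5 (by norm_num)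
          linarith
      · rw [if_neg hτ]
        push_neg at hτ
        rw [mul_zero, sub_zero]
        rcases hcases with h0 | h1 | h2 | hKK
        · rw [h0, if_neg (by norm_num), if_neg hK0, if_neg (by norm_num)]
          rw [show ((0:ℝ) + 0) = 0 from by ring, abs_zero]
          linarith
        · rw [h1, if_pos rfl, if_neg hK1, if_neg (by norm_num)]
          rw [abs_of_nonneg (by linarith)]
          linarith
        · rw [h2, if_neg (by norm_num), if_neg hK2, if_pos rfl]
          rw [abs_of_nonneg (by linarith)]
          linarith
        · rw [hKK, if_neg hKne1, if_pos rfl]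
          have hKb := mul_le_mul_of_nonneg_right (show K/2 ≤ 4 by linarith) hb0
          have hKb0 := mul_nonneg (show (0:ℝ) ≤ K/2 by linarith) hb0
          rw [abs_of_nonneg (by linarith)]
          linarith
    calc |∑ j ∈ range k, (((if A i j = 1 then ystar (3*j) else 0) +
          (if A i j = K then K/2 * ystar (3*j+1) else if A i j = 2 then ystar (3*j+1) else 0))
          - A i j * scs1Y k ε ystar j)|
        ≤ ∑ j ∈ range k, |((if A i j = 1 then ystar (3*j) else 0) +
          (if A i j = K then K/2 * ystar (3*j+1) else if A i j = 2 then ystar (3*j+1) else 0))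
          - A i j * scs1Y k ε ystar j| := Finset.abs_sum_le_sum_abs _ _
      _ ≤ ∑ _j ∈ range k, 44*ε := Finset.sum_le_sum hterm
      _ = (k:ℝ) * (44*ε) := by rw [Finset.sum_const, Finset.card_range, nsmul_eq_mul]
      _ ≤ 44*(n:ℝ)*ε := by
          have := mul_le_mul_of_nonneg_right (show (k:ℝ)*44 ≤ 44*(n:ℝ) by linarith) hε0
          calc (k:ℝ) * (44*ε) = (k:ℝ)*44*ε := by ring
            _ ≤ 44*(n:ℝ)*ε := this
  -- final assembly
  refine ⟨hXepos, hYpos, ?_, ?_, ?_, ?_, ?_, ?_, ?_, ?_⟩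
  · intro i
    exact div_nonneg (hx0 _) (le_of_lt hXepos)
  · intro i hi
    show xstar (2*k+i) / (∑ i' ∈ range nr, xstar (2*k+i')) = 0
    rw [hxz (2*k+i) (by omega), zero_div]
  · show ∑ i ∈ range nr, xstar (2*k+i) / (∑ i' ∈ range nr, xstar (2*k+i')) = 1
    rw [← Finset.sum_div]
    exact div_self (ne_of_gt hXepos)
  · intro j
    exact div_nonneg (hy'0 _) (le_of_lt hYpos)
  · intro j hj
    show scs1Y k ε ystar j / (∑ j' ∈ range nc, scs1Y k ε ystar j') = 0
    have h0 : scs1Y k ε ystar j = 0 := by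
      unfold scs1Y
      rw [if_neg (by omega), hyz (2*k+j) (by omega)]
    rw [h0, zero_div]
  · show ∑ j ∈ range nc, scs1Y k ε ystar j / (∑ j' ∈ range nc, scs1Y k ε ystar j') = 1
    rw [← Finset.sum_div]
    exact div_self (ne_of_gt hYpos)
  · -- row conditions
    intro i hi hxi i' hi'
    have hxip : 0 < xstar (2*k+i) := by
      have hxi' : 0 < xstar (2*k+i) / (∑ i' ∈ range nr, xstar (2*k+i')) := hxi
      by_contra hcon
      push_neg at hcon
      have h0 : xstar (2*k+i) = 0 := le_antisymm hcon (hx0 _)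
      rw [h0, zero_div] at hxi'
      exact lt_irrefl 0 hxi'
    have hU := hrow (2*k+i) (by omega) hxip (2*k+i') (by omega)
    rw [Rp_enc k nc K A ystar hknc i, Rp_enc k nc K A ystar hknc i'] at hU
    have hd1 := abs_le.mp (hUW i hi)
    have hd2 := abs_le.mp (hUW i' hi')
    have hWge : (∑ j ∈ range nc, A i j * scs1Y k ε ystar j)
        ≥ (∑ j ∈ range nc, A i' j * scs1Y k ε ystar j) - (1+88*(n:ℝ))*ε := by
      linarith
    show ∑ j ∈ range nc, A i j * (scs1Y k ε ystar j / (∑ j' ∈ range nc, scs1Y k ε ystar j'))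
        ≥ ∑ j ∈ range nc, A i' j * (scs1Y k ε ystar j / (∑ j' ∈ range nc, scs1Y k ε ystar j'))
          - 3950*(n:ℝ)^2*ε
    have he : ∀ ii, ∑ j ∈ range nc, A ii j * (scs1Y k ε ystar j / (∑ j' ∈ range nc, scs1Y k ε ystar j'))
        = (∑ j ∈ range nc, A ii j * scs1Y k ε ystar j) / (∑ j' ∈ range nc, scs1Y k ε ystar j') := by
      intro ii
      rw [Finset.sum_div]
      apply Finset.sum_congr rfl
      intro j _
      rw [mul_div_assoc]
    rw [he i, he i']
    have hslack : (1+88*(n:ℝ))*ε / (∑ j' ∈ range nc, scs1Y k ε ystar j') ≤ 3950*(n:ℝ)^2*ε := by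
      rw [div_le_iff₀ hYpos]
      have h1 := mul_le_mul_of_nonneg_left hY
        (show (0:ℝ) ≤ 3950*(n:ℝ)^2*ε by positivity)
      have hid : 3950*(n:ℝ)^2*ε * (1/(44*(n:ℝ))) = (3950/44)*((n:ℝ)*ε) := by
        field_simp
      rw [hid] at h1
      have h2 : ε ≤ (n:ℝ)*ε := by
        have := mul_le_mul_of_nonneg_right hN1 hε0
        rw [one_mul] at this
        exact this
      have h3 : (1+88*(n:ℝ))*ε = ε + 88*((n:ℝ)*ε) := by ring
      rw [h3]
      linarith
    have h1 : ((∑ j ∈ range nc, A i' j * scs1Y k ε ystar j) - (1+88*(n:ℝ))*ε)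
          / (∑ j' ∈ range nc, scs1Y k ε ystar j')
        ≤ (∑ j ∈ range nc, A i j * scs1Y k ε ystar j) / (∑ j' ∈ range nc, scs1Y k ε ystar j') :=
      (div_le_div_iff_of_pos_right hYpos).mpr (by linarith)
    rw [sub_div] at h1
    linarith
  · -- column conditions
    intro j hj hyj j' hj'
    have hyjp : 0 < scs1Y k ε ystar j := by
      have hyj' : 0 < scs1Y k ε ystar j / (∑ j' ∈ range nc, scs1Y k ε ystar j') := hyj
      by_contra hcon
      push_neg at hcon
      have h0 : scs1Y k ε ystar j = 0 := le_antisymm hcon (hy'0 j)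
      rw [h0, zero_div] at hyj'
      exact lt_irrefl 0 hyj'
    have hCj' : (∑ r ∈ range (2*k+nr), xstar r * scs1B k B r (if j' < k then 3*j'+2 else 2*k+j'))
        = Ve k nr B xstar j' := by
      by_cases hj'k : j' < k
      · rw [if_pos hj'k, Cp_v k nr B xstar hj'k]
      · rw [if_neg hj'k, show 2*k+j' = 3*k+(j'-k) from by omega, Cp_t k nr B xstar (j'-k),
          show k+(j'-k) = j' from by omega]
    have hc'lt : (if j' < k then 3*j'+2 else 2*k+j') < 2*k+nc := by
      split_ifs <;> omega
    have hVV : Ve k nr B xstar j ≥ Ve k nr B xstar j' - ε := by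
      by_cases hjk : j < k
      · have hsy : scs1Y k ε ystar j
            = if 11*ε ≤ ystar (3*j) + ystar (3*j+1) then ystar (3*j) else 0 := by
          unfold scs1Y
          rw [if_pos hjk]
        rw [hsy] at hyjp
        by_cases hτ : 11*ε ≤ ystar (3*j) + ystar (3*j+1)
        · rw [if_pos hτ] at hyjp
          have h := hkey j hjk hτ hyjp _ hc'lt
          rw [hCj'] at h
          exact h
        · rw [if_neg hτ] at hyjp
          exact absurd hyjp (lt_irrefl 0)
      · have hsy : scs1Y k ε ystar j = ystar (2*k+j) := by
          unfold scs1Y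
          rw [if_neg hjk]
        rw [hsy] at hyjp
        have h := hcol (2*k+j) (by omega) hyjp _ hc'lt
        rw [hCj', show 2*k+j = 3*k+(j-k) from by omega, Cp_t k nr B xstar (j-k),
          show k+(j-k) = j from by omega] at h
        exact h
    show ∑ i ∈ range nr, (xstar (2*k+i) / (∑ i' ∈ range nr, xstar (2*k+i'))) * B i j
        ≥ ∑ i ∈ range nr, (xstar (2*k+i) / (∑ i' ∈ range nr, xstar (2*k+i'))) * B i j'
          - 3950*(n:ℝ)^2*ε
    have he : ∀ jj, ∑ i ∈ range nr, (xstar (2*k+i) / (∑ i' ∈ range nr, xstar (2*k+i'))) * B i jj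
        = Ve k nr B xstar jj / (∑ i' ∈ range nr, xstar (2*k+i')) := by
      intro jj
      show ∑ i ∈ range nr, (xstar (2*k+i) / (∑ i' ∈ range nr, xstar (2*k+i'))) * B i jj
        = (∑ i ∈ range nr, xstar (2*k+i) * B i jj) / (∑ i' ∈ range nr, xstar (2*k+i'))
      rw [Finset.sum_div]
      apply Finset.sum_congr rfl
      intro i _
      rw [div_mul_eq_mul_div]
    rw [he j, he j']
    have hslack : ε / (∑ i' ∈ range nr, xstar (2*k+i')) ≤ 3950*(n:ℝ)^2*ε := by
      rw [div_le_iff₀ hXepos]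
      have h1 := mul_le_mul_of_nonneg_left hXe
        (show (0:ℝ) ≤ 3950*(n:ℝ)^2*ε by positivity)
      have hid : 3950*(n:ℝ)^2*ε * (1/(33*(n:ℝ))) = (3950/33)*((n:ℝ)*ε) := by
        field_simp
      rw [hid] at h1
      have h2 : ε ≤ (n:ℝ)*ε := by
        have := mul_le_mul_of_nonneg_right hN1 hε0
        rw [one_mul] at this
        exact this
      linarith
    have h1 : (Ve k nr B xstar j' - ε) / (∑ i' ∈ range nr, xstar (2*k+i'))
        ≤ Ve k nr B xstar j / (∑ i' ∈ range nr, xstar (2*k+i')) :=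
      (div_le_div_iff_of_pos_right hXepos).mpr (by linarith)
    rw [sub_div] at h1
    linarith
end

section
/- Let (A,B) and (A′,B′) be as in the type-one single column simulation with 4 ≤ K ≤ 8, let 0 ≤ ε < 1/(3n), and let (x*,y*) be an ε-WSNE of (A′,B′). Then for each column j < k of A, if P(cb₁ʲ) > 0 then P(rbʲ) > 0. -/
open Finset
open scoped Classical

/-- If `0 ≤ ε < 1/(3n)` and `(x*, y*)` is an `ε`-WSNE of `(A', B')`, then for every
column `j < k` of `A`: if the column player puts positive probability on the
column block `cb₁ʲ = {3j, 3j+1}`, then the row player puts positive probability on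
the row block `rbʲ = {2j, 2j+1}`. -/
theorem stmt8 (n nr nc k : ℕ) (K ε : ℝ) (A B : ℕ → ℕ → ℝ) (xstar ystar : ℕ → ℝ)
    (hK4 : 4 ≤ K) (hK8 : K ≤ 8)
    (hin : Scs1Input n nr nc k K A B)
    (hε0 : 0 ≤ ε) (hε : ε < 1 / (3 * (n:ℝ)))
    (hwsne : IsWSNE (2*k+nr) (2*k+nc) (scs1A k K A) (scs1B k B) xstar ystar ε) :
    ∀ j < k, 0 < ystar (3*j) + ystar (3*j+1) → 0 < xstar (2*j) + xstar (2*j+1) := by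
  obtain ⟨hnr, hnc, hknc, hA, hB, _, _, hBrow, _, _, _⟩ := hin
  obtain ⟨hx0, hxsupp, hxsum, hy0, hysupp, hysum, hrow, hcol⟩ := hwsne
  intro j hj hy
  by_contra hcon
  push_neg at hcon
  have hx2j : xstar (2*j) = 0 := le_antisymm (by linarith [hx0 (2*j+1)]) (hx0 (2*j))
  have hx2j1 : xstar (2*j+1) = 0 := le_antisymm (by linarith [hx0 (2*j)]) (hx0 (2*j+1))
  -- pick a column c0 ∈ {3j, 3j+1} with positive probability
  obtain ⟨c0, hc0eq, hc0pos⟩ : ∃ c0, (c0 = 3*j ∨ c0 = 3*j+1) ∧ 0 < ystar c0 := by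
    rcases lt_or_ge 0 (ystar (3*j)) with h | h
    · exact ⟨3*j, Or.inl rfl, h⟩
    · exact ⟨3*j+1, Or.inr rfl, by linarith [hy0 (3*j)]⟩
  have hc0lt : c0 < 2*k + nc := by rcases hc0eq with h | h <;> omega
  -- B' is nonnegative
  have hB'nonneg : ∀ i < 2*k + nr, ∀ c < 2*k + nc, 0 ≤ scs1B k B i c := by
    intro i hi c hc
    unfold scs1B
    split_ifs with h1 h2 h3 h4 h5 h6 <;> try norm_num
    · exact (hB (i - 2*k) (by omega) (c/3) (by omega)).1
    · exact (hB (i - 2*k) (by omega) (c - 2*k) (by omega)).1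
  -- payoff of column c0 is zero
  have hpay0 : ∑ i ∈ range (2*k+nr), xstar i * scs1B k B i c0 = 0 := by
    apply Finset.sum_eq_zero
    intro i hi
    rcases eq_or_ne i (2*j) with rfl | h2
    · rw [hx2j]; ring
    rcases eq_or_ne i (2*j+1) with rfl | h3
    · rw [hx2j1]; ring
    have hz : scs1B k B i c0 = 0 := by
      unfold scs1B
      by_cases hik : i < 2*k
      · have hd2 : i / 2 ≠ j := by omega
        have e1 : c0 ≠ 3*(i/2) := by rcases hc0eq with h | h <;> omega
        have e2 : c0 ≠ 3*(i/2)+1 := by rcases hc0eq with h | h <;> omega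
        simp [hik, e1, e2]
      · have e3 : c0 < 3*k := by rcases hc0eq with h | h <;> omega
        have e4 : c0 % 3 ≠ 2 := by rcases hc0eq with h | h <;> omega
        simp [hik, e3, e4]
    rw [hz]; ring
  -- every column payoff is at most ε
  have hle : ∀ c' < 2*k + nc, ∑ i ∈ range (2*k+nr), xstar i * scs1B k B i c' ≤ ε := by
    intro c' hc'
    have := hcol c0 hc0lt hc0pos c' hc'
    rw [hpay0] at this
    linarith
  -- there is a row with large probability
  have hcard : (0:ℝ) < (2*k + nr : ℕ) := by
    have : 0 < 2*k + nr := by omega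
    exact_mod_cast this
  obtain ⟨i0, hi0mem, hi0⟩ : ∃ i0 ∈ range (2*k+nr), 1 / ((2*k+nr : ℕ) : ℝ) ≤ xstar i0 := by
    by_contra hall
    push_neg at hall
    have : ∑ i ∈ range (2*k+nr), xstar i < ∑ i ∈ range (2*k+nr), 1 / ((2*k+nr : ℕ) : ℝ) := by
      apply Finset.sum_lt_sum_of_nonempty
      · exact ⟨0, Finset.mem_range.mpr (by omega)⟩
      · intro i hi; exact hall i hi
    rw [hxsum, Finset.sum_const, Finset.card_range, nsmul_eq_mul,
      mul_one_div, div_self (ne_of_gt hcard)] at this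
    exact lt_irrefl _ this
  have hi0lt : i0 < 2*k + nr := Finset.mem_range.mp hi0mem
  -- find a column c1 with B' i0 c1 ≥ 1
  obtain ⟨c1, hc1lt, hc1⟩ : ∃ c1 < 2*k + nc, 1 ≤ scs1B k B i0 c1 := by
    by_cases hik : i0 < 2*k
    · by_cases hpar : i0 % 2 = 0
      · refine ⟨3*(i0/2)+1, by omega, ?_⟩
        unfold scs1B
        have : (3*(i0/2)+1 : ℕ) ≠ 3*(i0/2) := by omega
        simp [hik, hpar, this]
      · refine ⟨3*(i0/2), by omega, ?_⟩
        unfold scs1B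
        simp [hik, hpar]
    · obtain ⟨jb, hjb, hjB⟩ := hBrow (i0 - 2*k) (by omega)
      by_cases hjk : jb < k
      · refine ⟨3*jb+2, by omega, ?_⟩
        unfold scs1B
        have e1 : 3*jb+2 < 3*k := by omega
        have e2 : (3*jb+2) % 3 = 2 := by omega
        have e3 : (3*jb+2) / 3 = jb := by omega
        simp [hik, e1, e2, e3, hjB]
      · refine ⟨2*k+jb, by omega, ?_⟩
        unfold scs1B
        have e1 : ¬ (2*k+jb < 3*k) := by omega
        have e3 : 2*k+jb - 2*k = jb := by omega
        simp [hik, e1, e3, hjB]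
  -- payoff of c1 is at least xstar i0
  have hpayc1 : xstar i0 ≤ ∑ i ∈ range (2*k+nr), xstar i * scs1B k B i c1 := by
    calc xstar i0 = xstar i0 * 1 := (mul_one _).symm
    _ ≤ xstar i0 * scs1B k B i0 c1 := by
        apply mul_le_mul_of_nonneg_left hc1 (hx0 i0)
    _ ≤ _ := by
        apply Finset.single_le_sum (f := fun i => xstar i * scs1B k B i c1) _ hi0mem
        intro i hi
        exact mul_nonneg (hx0 i) (hB'nonneg i (Finset.mem_range.mp hi) c1 hc1lt)
  -- conclude
  have h3n : ((2*k+nr : ℕ) : ℝ) ≤ 3 * (n:ℝ) := by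
    have : 2*k + nr ≤ 3*n := by omega
    push_cast
    exact_mod_cast by exact_mod_cast this
  have hn0 : (0:ℝ) < 3 * (n:ℝ) := by
    have : 0 < n := by omega
    positivity
  have : 1 / (3*(n:ℝ)) ≤ 1 / ((2*k+nr : ℕ) : ℝ) := by
    apply one_div_le_one_div_of_le hcard h3n
  have hfin := hle c1 hc1lt
  linarith
end
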